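/- arXiv:1905.06093 — 9 statements merged into one kernel-verified Lean document; each statement's English description precedes it below -/
import Mathlib

section
/- Let X be a compact metrizable space with metric d, let 0 ∈ X, and let f : X → X be continuous. If f^n(x) → 0 as n → ∞ for every x ∈ X, then for every ε > 0 there exists N ∈ ℕ such that for every x ∈ X there is some n ≤ N with d(f^n(x), 0) < ε. -/
open Filter

/-- If every orbit of a continuous map on a compact metrizable
space converges to `0`, then the time before entering any `ε`-ball around `0`
is bounded uniformly over the space. -/
theorem syndetically_close_of_asymptotically_nilpotent
    {X : Type*} [MetricSpace X] [CompactSpace X]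
    (f : X → X) (hf : Continuous f) (z : X)
    (hnil : ∀ x : X, Tendsto (fun n => f^[n] x) atTop (nhds z)) :
    ∀ ε > 0, ∃ N : ℕ, ∀ x : X, ∃ n ≤ N, dist (f^[n] x) z < ε := by
  intro ε hε
  set U : ℕ → Set X := fun n => {x | dist (f^[n] x) z < ε} with hU
  have hopen : ∀ n, IsOpen (U n) := fun n =>
    isOpen_lt ((hf.iterate n).dist continuous_const) continuous_const
  have hcover : (Set.univ : Set X) ⊆ ⋃ n, U n := by
    intro x _
    have := (hnil x).eventually (Metric.eventually_nhds_iff.2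
      ⟨ε, hε, fun {y} hy => hy⟩)
    rcases this.exists with ⟨n, hn⟩
    exact Set.mem_iUnion.2 ⟨n, by simpa [U] using hn⟩
  obtain ⟨t, ht⟩ := isCompact_univ.elim_finite_subcover U hopen hcover
  refine ⟨t.sup id, fun x => ?_⟩
  rcases Set.mem_iUnion₂.1 (ht (Set.mem_univ x)) with ⟨n, hn, hx⟩
  exact ⟨n, Finset.le_sup (f := id) hn, hx⟩
end

section
/- Let G be a group acting transitively on a set T such that for every t ∈ T, every orbit of the stabilizer subgroup Stab_G(t) on T is finite. Let A be a finite alphabet and let f : A^T → A^T be continuous and commute with the induced G-action on configurations. Then f has nice local rules: for every t' ∈ T the set {t ∈ T : ∃ x, y ∈ A^T with x_u = y_u for all u ≠ t and f(x)_{t'} ≠ f(y)_{t'}} is finite, and for every t ∈ T the set {t' ∈ T : ∃ x, y ∈ A^T with x_u = y_u for all u ≠ t and f(x)_{t'} ≠ f(y)_{t'}} is finite. -/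
open Filter

/-- If a group `G` acts transitively on `T` and all orbits of
all point stabilizers are finite, then every continuous `G`-commuting map on
`A^T` has nice local rules: the dependency graph (with an edge `(t, t')` when
changing a configuration only at `t` can change the image at `t'`) is locally
finite on both sides. -/
theorem nice_local_rules_of_transitive_finite_stabilizer_orbits
    {G T A : Type*} [Group G] [MulAction G T] [Finite A]
    [TopologicalSpace A] [DiscreteTopology A]
    (htrans : ∀ t t' : T, ∃ g : G, g • t = t')
    (horb : ∀ t t' : T, {s : T | ∃ g : G, g • t = t ∧ g • t' = s}.Finite)
    (f : (T → A) → (T → A)) (hf : Continuous f)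
    (hcomm : ∀ (g : G) (x : T → A),
      f (fun t => x (g⁻¹ • t)) = fun t => f x (g⁻¹ • t)) :
    (∀ t' : T,
      {t : T | ∃ x y : T → A, (∀ u, u ≠ t → x u = y u) ∧ f x t' ≠ f y t'}.Finite) ∧
    (∀ t : T,
      {t' : T | ∃ x y : T → A, (∀ u, u ≠ t → x u = y u) ∧ f x t' ≠ f y t'}.Finite) := by
  classical
  -- Step 1: for each output coordinate there is a finite set of input
  -- coordinates determining it (compactness + continuity).
  have key : ∀ t' : T, ∃ S : Finset T, ∀ x y : T → A,
      (∀ s ∈ S, x s = y s) → f x t' = f y t' := by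
    intro t'
    have hcov : ∀ x : T → A, ∃ S : Finset T,
        ∀ y : T → A, (∀ s ∈ S, y s = x s) → f y t' = f x t' := by
      intro x
      have hcont : Continuous fun y : T → A => f y t' :=
        (continuous_apply t').comp hf
      have hopen : IsOpen {y : T → A | f y t' = f x t'} := by
        have := hcont.isOpen_preimage {f x t'} (isOpen_discrete _)
        simpa [Set.preimage, Set.mem_singleton_iff] using this
      rw [isOpen_pi_iff] at hopen
      obtain ⟨I, u, hu, hsub⟩ := hopen x rfl
      refine ⟨I, fun y hy => hsub ?_⟩
      intro i hi
      rw [hy i hi]; exact (hu i hi).2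
    choose S hS using hcov
    have hcylopen : ∀ x : T → A, IsOpen {y : T → A | ∀ s ∈ S x, y s = x s} := by
      intro x
      have : {y : T → A | ∀ s ∈ S x, y s = x s}
          = Set.pi ↑(S x) (fun s => {x s}) := by
        ext y; simp [Set.mem_pi]
      rw [this]
      exact isOpen_set_pi (S x).finite_toSet (fun i _ => isOpen_discrete _)
    obtain ⟨F, hF⟩ := IsCompact.elim_finite_subcover isCompact_univ
      (fun x : T → A => {y : T → A | ∀ s ∈ S x, y s = x s}) hcylopen
      (fun x _ => Set.mem_iUnion.2 ⟨x, fun s _ => rfl⟩)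
    refine ⟨F.biUnion S, fun x y hxy => ?_⟩
    obtain ⟨x₀, hx₀F, hx₀⟩ := by
      have := hF (Set.mem_univ x)
      simpa using this
    have hy : ∀ s ∈ S x₀, y s = x₀ s := by
      intro s hs
      rw [← hxy s (Finset.mem_biUnion.2 ⟨x₀, hx₀F, hs⟩)]
      exact hx₀ s hs
    rw [hS x₀ x hx₀, hS x₀ y hy]
  -- Part 1.
  have h1 : ∀ t' : T,
      {t : T | ∃ x y : T → A, (∀ u, u ≠ t → x u = y u) ∧ f x t' ≠ f y t'}.Finite := by
    intro t'
    obtain ⟨S, hS⟩ := key t'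
    refine Set.Finite.subset S.finite_toSet ?_
    rintro t ⟨x, y, hxy, hne⟩
    by_contra ht
    exact hne (hS x y fun s hs => hxy s (fun h => ht (h ▸ hs)))
  -- Equivariance of the edge relation.
  have hequiv : ∀ (g : G) (t t' : T),
      (∃ x y : T → A, (∀ u, u ≠ t → x u = y u) ∧ f x t' ≠ f y t') →
      (∃ x y : T → A, (∀ u, u ≠ g • t → x u = y u) ∧
        f x (g • t') ≠ f y (g • t')) := by
    rintro g t t' ⟨x, y, hxy, hne⟩
    refine ⟨fun u => x (g⁻¹ • u), fun u => y (g⁻¹ • u), ?_, ?_⟩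
    · intro u hu
      apply hxy
      intro h
      exact hu (by rw [← h, smul_inv_smul])
    · have hx := congrFun (hcomm g x) (g • t')
      have hy := congrFun (hcomm g y) (g • t')
      simp only [inv_smul_smul] at hx hy
      rw [hx, hy]
      exact hne
  refine ⟨h1, fun t => ?_⟩
  -- Part 2: use transitivity and finite stabilizer orbits.
  have hgs : ∀ s : T, ∃ g : G, g • t = s := fun s => htrans t s
  choose gs hgs using hgs
  refine Set.Finite.subset
    (Set.Finite.biUnion (h1 t)
      (fun s _ => horb t ((gs s)⁻¹ • t)))
    ?_
  rintro t' ht'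
  obtain ⟨g, hg⟩ := htrans t' t
  have hedge := hequiv g t t' ht'
  rw [hg] at hedge
  refine Set.mem_biUnion (show g • t ∈ _ from hedge) ?_
  refine ⟨g⁻¹ * gs (g • t), ?_, ?_⟩
  · rw [mul_smul, hgs (g • t), inv_smul_smul]
  · rw [mul_smul, smul_inv_smul, ← hg, inv_smul_smul]
end

section
/- Let G be a group acting transitively on a countable set T, let A be a finite alphabet with distinguished symbol 0, and let f : A^T → A^T be a cellular automaton on G ↷ T with nice local rules. If f is asymptotically nilpotent toward 0^T and the set of finite mortal configurations is dense in A^T, then f is uniformly asymptotically nilpotent: for every finite set B ⊆ T there exists n ∈ ℕ such that f^m(x)_t = 0 for all m ≥ n, all x ∈ A^T, and all t ∈ B. -/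
open Filter

private def dep {T A : Type*} (f : (T → A) → (T → A)) (t' : T) : Set T :=
  {t : T | ∃ x y : T → A, (∀ u, u ≠ t → x u = y u) ∧ f x t' ≠ f y t'}

private def SB {T A : Type*} (f : (T → A) → (T → A)) : ℕ → T → Set T
  | 0, t => {t}
  | (n+1), t => ⋃ v ∈ SB f n t, dep f v

private def SU {T A : Type*} (f : (T → A) → (T → A)) : ℕ → T → Set T
  | 0, t => {t}
  | (n+1), t => ⋃ v ∈ {t' : T | t ∈ dep f t'}, SU f n v

private lemma local_rule {T A : Type*} [TopologicalSpace A] [DiscreteTopology A]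
    (f : (T → A) → (T → A)) (hf : Continuous f) (t' : T)
    (x y : T → A) (hxy : ∀ u ∈ dep f t', x u = y u) : f x t' = f y t' := by
  classical
  set Z : Finset T → (T → A) :=
    fun F => fun u => if u ∈ F ∧ u ∉ dep f t' then y u else x u with hZdef
  have hconst : ∀ F : Finset T, f (Z F) t' = f x t' := by
    intro F
    induction F using Finset.induction_on with
    | empty => simp [hZdef]
    | @insert a F ha ih =>
      by_cases haS : a ∈ dep f t'
      · have hz : Z (insert a F) = Z F := by
          funext u
          by_cases hu : u = a
          · subst hu; simp [hZdef, haS]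
          · simp [hZdef, Finset.mem_insert, hu]
        rw [hz, ih]
      · have hdiff : ∀ u, u ≠ a → Z (insert a F) u = Z F u := by
          intro u hu; simp [hZdef, Finset.mem_insert, hu]
        have heq : f (Z (insert a F)) t' = f (Z F) t' := by
          by_contra hne
          exact haS ⟨Z (insert a F), Z F, hdiff, hne⟩
        rw [heq, ih]
  haveI : Nonempty (Finset T) := ⟨∅⟩
  haveI := Filter.atTop_neBot (α := Finset T)
  have htend : Tendsto Z atTop (nhds y) := by
    rw [tendsto_pi_nhds]
    intro u
    by_cases huS : u ∈ dep f t'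
    · have hz : ∀ F, Z F u = y u := by intro F; simp [hZdef, huS, hxy u huS]
      simp only [hz]
      exact tendsto_const_nhds
    · have hev : ∀ᶠ F : Finset T in atTop, Z F u = y u := by
        filter_upwards [eventually_ge_atTop ({u} : Finset T)] with F hF
        have huF : u ∈ F := hF (Finset.mem_singleton_self u)
        simp [hZdef, huF, huS]
      exact Tendsto.congr' (hev.mono fun F h => h.symm) tendsto_const_nhds
  have h2 : Tendsto (fun F => f (Z F) t') atTop (nhds (f y t')) :=
    (((continuous_apply t').comp hf).tendsto y).comp htend
  have h3 : Tendsto (fun F => f (Z F) t') atTop (nhds (f x t')) := by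
    simp only [hconst]; exact tendsto_const_nhds
  exact tendsto_nhds_unique h3 h2

private lemma cone_eq {T A : Type*} [TopologicalSpace A] [DiscreteTopology A]
    (f : (T → A) → (T → A)) (hf : Continuous f) :
    ∀ (n : ℕ) (t' : T) (x y : T → A), (∀ u ∈ SB f n t', x u = y u) →
      f^[n] x t' = f^[n] y t'
  | 0, t', x, y, h => h t' (by simp [SB])
  | (n+1), t', x, y, h => by
    rw [Function.iterate_succ_apply, Function.iterate_succ_apply]
    apply cone_eq f hf n t' (f x) (f y)
    intro u hu
    apply local_rule f hf u
    intro v hv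
    apply h v
    show v ∈ ⋃ w ∈ SB f n t', dep f w
    exact Set.mem_biUnion hu hv

private lemma SB_finite {T A : Type*} (f : (T → A) → (T → A))
    (hfin : ∀ t', (dep f t').Finite) : ∀ n t, (SB f n t).Finite
  | 0, t => Set.finite_singleton t
  | (n+1), t => Set.Finite.biUnion (SB_finite f hfin n t) (fun v _ => hfin v)

private lemma SU_finite {T A : Type*} (f : (T → A) → (T → A))
    (hf2 : ∀ t, ({t' : T | t ∈ dep f t'}).Finite) : ∀ n t, (SU f n t).Finite
  | 0, t => Set.finite_singleton t
  | (n+1), t => Set.Finite.biUnion (hf2 t) (fun v _ => SU_finite f hf2 n v)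

private lemma mem_SU {T A : Type*} (f : (T → A) → (T → A)) :
    ∀ (n : ℕ) (u t : T), t ∈ SB f n u → u ∈ SU f n t
  | 0, u, t, h => by
    simp only [SB, Set.mem_singleton_iff] at h
    subst h
    simp [SU]
  | (n+1), u, t, h => by
    simp only [SB, Set.mem_iUnion, exists_prop] at h
    obtain ⟨v, hv, htv⟩ := h
    show u ∈ ⋃ w ∈ {t' : T | t ∈ dep f t'}, SU f n w
    exact Set.mem_biUnion htv (mem_SU f n u v hv)

/-- A cellular automaton with nice local rules on a transitive
group action on a countable set, which is asymptotically nilpotent and for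
which the finite mortal configurations are dense, is uniformly asymptotically
nilpotent. -/
theorem uniformly_asymptotically_nilpotent_of_dense_finite_mortal
    {G T A : Type*} [Group G] [MulAction G T] [Countable T] [Finite A]
    [TopologicalSpace A] [DiscreteTopology A]
    (htrans : ∀ t t' : T, ∃ g : G, g • t = t')
    (z : A) (f : (T → A) → (T → A)) (hf : Continuous f)
    (hcomm : ∀ (g : G) (x : T → A),
      f (fun t => x (g⁻¹ • t)) = fun t => f x (g⁻¹ • t))
    (hnice₁ : ∀ t' : T,
      {t : T | ∃ x y : T → A, (∀ u, u ≠ t → x u = y u) ∧ f x t' ≠ f y t'}.Finite)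
    (hnice₂ : ∀ t : T,
      {t' : T | ∃ x y : T → A, (∀ u, u ≠ t → x u = y u) ∧ f x t' ≠ f y t'}.Finite)
    (hnil : ∀ x : T → A,
      Tendsto (fun n => f^[n] x) atTop (nhds (fun _ => z)))
    (hdense : Dense {x : T → A |
      {t : T | x t ≠ z}.Finite ∧ ∃ n : ℕ, f^[n] x = fun _ => z}) :
    ∀ B : Finset T, ∃ n : ℕ, ∀ m ≥ n, ∀ x : T → A, ∀ t ∈ B, f^[m] x t = z := by
  classical
  intro B
  by_contra hneg
  push_neg at hneg
  -- pigeonhole: a single coordinate t₀ ∈ B with arbitrarily late witnesses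
  have hpig : ∃ t₀ ∈ B, ∀ n : ℕ, ∃ m, n ≤ m ∧ ∃ x : T → A, f^[m] x t₀ ≠ z := by
    by_contra hno
    push_neg at hno
    choose! nb hnb using hno
    obtain ⟨m, hm, x, t, htB, hxt⟩ := hneg (B.sup nb)
    exact hxt (hnb t htB m (le_trans (Finset.le_sup htB) hm) x)
  obtain ⟨t₀, ht₀B, hwit⟩ := hpig
  set O : T → A := fun _ => z with hO
  -- images of invariant configurations are constant
  have hinv : ∀ (x : T → A), (∀ (g : G) (t : T), x (g⁻¹ • t) = x t) →
      ∀ s t : T, f x s = f x t := by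
    intro x hx s t
    obtain ⟨g, hg⟩ := htrans t s
    have h1 := hcomm g x
    have h2 : (fun u => x (g⁻¹ • u)) = x := funext fun u => hx g u
    rw [h2] at h1
    have h3 : f x s = f x (g⁻¹ • s) := congrFun h1 s
    have h4 : g⁻¹ • s = t := by rw [← hg, inv_smul_smul]
    rw [h3, h4]
  -- f O = O
  have hconstn : ∀ n : ℕ, ∀ s : T, f^[n] O s = f^[n] O t₀ := by
    intro n
    induction n with
    | zero => intro s; rfl
    | succ n ih =>
      intro s
      have hOn : ∀ (g : G) (t : T), (f^[n] O) (g⁻¹ • t) = (f^[n] O) t := by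
        intro g t; rw [ih (g⁻¹ • t), ih t]
      rw [Function.iterate_succ_apply']
      exact hinv (f^[n] O) hOn s t₀
  have hUopen : IsOpen {u : T → A | u t₀ = z} := by
    have h0 : IsOpen ((fun u : T → A => u t₀) ⁻¹' ({z} : Set A)) :=
      IsOpen.preimage (continuous_apply t₀) (isOpen_discrete _)
    exact h0
  have hUmem : O ∈ {u : T → A | u t₀ = z} := rfl
  have hfO : f O = O := by
    have hev := (hnil O).eventually_mem (hUopen.mem_nhds hUmem)
    rw [eventually_atTop] at hev
    obtain ⟨n₀, hn₀⟩ := hev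
    have hfix : f^[n₀] O = O := by
      funext s
      rw [hconstn n₀ s]
      exact hn₀ n₀ le_rfl
    have hfix1 : f^[n₀+1] O = O := by
      funext s
      rw [hconstn (n₀+1) s]
      exact hn₀ (n₀+1) (Nat.le_succ n₀)
    calc f O = f (f^[n₀] O) := by rw [hfix]
    _ = f^[n₀+1] O := (Function.iterate_succ_apply' f n₀ O).symm
    _ = O := hfix1
  have hOiter : ∀ n, f^[n] O = O := by
    intro n; induction n with
    | zero => rfl
    | succ n ih => rw [Function.iterate_succ_apply', ih, hfO]
  -- the closed "dead after n at t₀" sets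
  set K : ℕ → Set (T → A) := fun n => {x | ∀ m, n ≤ m → f^[m] x t₀ = z} with hK
  have hKclosed : ∀ n, IsClosed (K n) := by
    intro n
    have hrw : K n = ⋂ m, ⋂ (_ : n ≤ m), (fun x : T → A => f^[m] x t₀) ⁻¹' {z} := by
      ext x; simp [hK]
    rw [hrw]
    exact isClosed_iInter fun m => isClosed_iInter fun _ =>
      IsClosed.preimage ((continuous_apply t₀).comp (hf.iterate m)) isClosed_singleton
  have hKcover : ⋃ n, K n = Set.univ := by
    ext x
    simp only [Set.mem_iUnion, Set.mem_univ, iff_true]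
    have hev := (hnil x).eventually_mem (hUopen.mem_nhds hUmem)
    rw [eventually_atTop] at hev
    obtain ⟨n₀, h⟩ := hev
    exact ⟨n₀, fun m hm => h m hm⟩
  -- Baire: a cylinder inside some K N
  haveI : Nonempty (T → A) := ⟨O⟩
  obtain ⟨N, hNne⟩ := nonempty_interior_of_iUnion_of_closed hKclosed hKcover
  obtain ⟨χ, hχint⟩ := hNne
  obtain ⟨I, u, hu1, hu2⟩ := (isOpen_pi_iff.mp isOpen_interior) χ hχint
  set V : Set (T → A) := {x | ∀ t ∈ I, x t = χ t} with hV
  have hVopen : IsOpen V := by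
    have hrw : V = ⋂ t ∈ I, (fun x : T → A => x t) ⁻¹' {χ t} := by
      ext x; simp [hV]
    rw [hrw]
    exact isOpen_biInter_finset fun t _ =>
      (isOpen_discrete ({χ t} : Set A)).preimage (continuous_apply t)
  have hVsub : V ⊆ K N := by
    intro x hx
    apply interior_subset
    apply hu2
    intro i hi
    rw [hx i hi]
    exact (hu1 i hi).2
  -- a finite mortal configuration in the cylinder
  obtain ⟨y, hyS, hyV⟩ := hdense.exists_mem_open hVopen ⟨χ, fun t _ => rfl⟩
  obtain ⟨hy_fin, δ, hyδ⟩ := hyS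
  -- the dead cylinder over C
  set C : Set T := ↑I ∪ {t | y t ≠ z} with hC
  have hCfin : C.Finite := Set.Finite.union I.finite_toSet hy_fin
  have hdead : ∀ x : T → A, (∀ t ∈ C, x t = y t) → ∀ m, N ≤ m → f^[m] x t₀ = z := by
    intro x hx m hm
    have hxV : x ∈ V := by
      intro t ht
      rw [hx t (Or.inl ht)]
      exact hyV t ht
    exact hVsub hxV m hm
  -- witnesses and their cluster point
  choose ms hms xs hxs using hwit
  haveI : Filter.NeBot (Filter.map xs Filter.atTop) := Filter.map_neBot
  obtain ⟨xhat, -, hclu⟩ := isCompact_univ.exists_clusterPt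
    (le_principal_iff.mpr Filter.univ_mem) (f := Filter.map xs Filter.atTop)
  have hfreq : ∀ U : Set (T → A), IsOpen U → xhat ∈ U → ∀ K₀ : ℕ,
      ∃ k, K₀ ≤ k ∧ xs k ∈ U := by
    intro U hUo hUx K₀
    have h1 : U ∈ nhds xhat := hUo.mem_nhds hUx
    have h2 : xs '' {k | K₀ ≤ k} ∈ Filter.map xs Filter.atTop :=
      Filter.image_mem_map (Filter.mem_atTop K₀)
    have h3 := hclu.neBot.nonempty_of_mem (Filter.inter_mem_inf h1 h2)
    obtain ⟨v, hv1, k, hk, hkv⟩ := h3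
    exact ⟨k, hk, by rwa [hkv]⟩
  -- the zero-window late-witness lemma
  have hZO : ∀ (Ef : Set T), Ef.Finite → ∀ n : ℕ,
      ∃ (y' : T → A) (m' : ℕ), (∀ t ∈ Ef, y' t = z) ∧ n ≤ m' ∧ f^[m'] y' t₀ ≠ z := by
    intro Ef hEf n
    set U₀ : Set (T → A) := {u₀ | ∀ t ∈ Ef, u₀ t = z} with hU₀
    have hU₀open : IsOpen U₀ := by
      have hrw : U₀ = ⋂ t ∈ Ef, (fun u₀ : T → A => u₀ t) ⁻¹' {z} := by
        ext u₀; simp [hU₀]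
      rw [hrw]
      exact hEf.isOpen_biInter fun t _ =>
        (isOpen_discrete ({z} : Set A)).preimage (continuous_apply t)
    have hU₀mem : O ∈ U₀ := fun t _ => rfl
    have hev := (hnil xhat).eventually_mem (hU₀open.mem_nhds hU₀mem)
    rw [eventually_atTop] at hev
    obtain ⟨j, hj⟩ := hev
    have hV'open : IsOpen ((f^[j]) ⁻¹' U₀) := hU₀open.preimage (hf.iterate j)
    obtain ⟨k, hk, hkV⟩ := hfreq _ hV'open (hj j le_rfl) (n + j)
    have hjms : j ≤ ms k := le_trans (le_trans (Nat.le_add_left j n) hk) (hms k)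
    refine ⟨f^[j] (xs k), ms k - j, hkV, ?_, ?_⟩
    · have : n + j ≤ ms k := le_trans hk (hms k)
      omega
    · have hiter : f^[ms k - j] (f^[j] (xs k)) = f^[ms k] (xs k) := by
        rw [← Function.iterate_add_apply, Nat.sub_add_cancel hjms]
      rw [hiter]
      exact hxs k
  -- the moat E
  set UpC : Set T := ⋃ c ∈ C, SU f δ c with hUpC
  have hUpCfin : UpC.Finite := Set.Finite.biUnion hCfin fun c _ => SU_finite f hnice₂ δ c
  set E : Set T := (⋃ v ∈ UpC, SB f δ v) ∪ C with hE
  have hEfin : E.Finite :=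
    Set.Finite.union (Set.Finite.biUnion hUpCfin fun v _ => SB_finite f hnice₁ δ v) hCfin
  obtain ⟨y', m', hy'z, hm'ge, hy'live⟩ := hZO E hEfin (N + δ)
  -- the merged configuration
  set w : T → A := fun t => if t ∈ C then y t else y' t with hw
  have hkey : f^[δ] w = f^[δ] y' := by
    funext t'
    by_cases hcase : ∃ c ∈ SB f δ t', c ∈ C
    · obtain ⟨c, hc1, hc2⟩ := hcase
      have ht'Up : t' ∈ UpC := Set.mem_biUnion hc2 (mem_SU f δ t' c hc1)
      have hsub : SB f δ t' ⊆ E := fun v hv => Or.inl (Set.mem_biUnion ht'Up hv)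
      have h1 : f^[δ] w t' = z := by
        have heq : f^[δ] w t' = f^[δ] y t' := by
          apply cone_eq f hf δ t' w y
          intro v hv
          by_cases hvC : v ∈ C
          · simp [hw, hvC]
          · have hvE : v ∈ E := hsub hv
            have h5 : y' v = z := hy'z v hvE
            have h6 : y v = z := by
              by_contra hne; exact hvC (Or.inr hne)
            simp [hw, hvC, h5, h6]
        rw [heq, hyδ]
      have h2 : f^[δ] y' t' = z := by
        have heq : f^[δ] y' t' = f^[δ] O t' := by
          apply cone_eq f hf δ t' y' O
          intro v hv
          exact hy'z v (hsub hv)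
        rw [heq, hOiter δ]
      rw [h1, h2]
    · push_neg at hcase
      apply cone_eq f hf δ t' w y'
      intro v hv
      have hvC : v ∉ C := hcase v hv
      simp [hw, hvC]
  have hδm' : δ ≤ m' := le_trans (Nat.le_add_left δ N) hm'ge
  have hwlive : f^[m'] w t₀ ≠ z := by
    have h1 : f^[m'] w = f^[m' - δ] (f^[δ] w) := by
      rw [← Function.iterate_add_apply, Nat.sub_add_cancel hδm']
    have h2 : f^[m'] y' = f^[m' - δ] (f^[δ] y') := by
      rw [← Function.iterate_add_apply, Nat.sub_add_cancel hδm']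
    rw [h1, hkey, ← h2]
    exact hy'live
  have hwdead : f^[m'] w t₀ = z := by
    apply hdead w _ m' (le_trans (Nat.le_add_right N δ) hm'ge)
    intro t ht
    simp [hw, ht]
  exact hwlive hwdead
end

section
/- Let G be a group acting transitively on a countable set T, let A be a finite alphabet with distinguished symbol 0, and let f : A^T → A^T be a cellular automaton on G ↷ T with nice local rules. Suppose f is asymptotically nilpotent toward 0^T and every finite configuration x has uniformly bounded support under iteration: there exists a finite set S ⊆ T with supp(f^n(x)) ⊆ S for all n ∈ ℕ. Then f is uniformly asymptotically nilpotent. -/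
open Filter Set Function

namespace CAStmt4

variable {T A : Type*}

/-! ### Basic definitions -/

/-- the zero configuration -/
def zeroC (z : A) : T → A := fun _ => z

/-- support of a configuration -/
def suppC (z : A) (x : T → A) : Set T := {t | x t ≠ z}

lemma mem_suppC {z : A} {x : T → A} {t : T} : t ∈ suppC z x ↔ x t ≠ z := Iff.rfl

/-- the set of cells on which the value of `f · t'` may depend -/
def Iset (f : (T → A) → (T → A)) (t' : T) : Set T :=
  {t | ∃ x y : T → A, (∀ u, u ≠ t → x u = y u) ∧ f x t' ≠ f y t'}

/-- memory neighbourhood (includes the cell itself) -/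
def Jset (f : (T → A) → (T → A)) (t' : T) : Set T := insert t' (Iset f t')

/-- forward influence neighbourhood (includes the cell itself) -/
def Fset (f : (T → A) → (T → A)) (t : T) : Set T := insert t {t' | t ∈ Iset f t'}

def stepJ (f : (T → A) → (T → A)) (S : Set T) : Set T := ⋃ u ∈ S, Jset f u
def stepF (f : (T → A) → (T → A)) (S : Set T) : Set T := ⋃ u ∈ S, Fset f u

/-- iterated memory window -/
def Jwin (f : (T → A) → (T → A)) (n : ℕ) (S : Set T) : Set T := (stepJ f)^[n] S
/-- iterated influence cone -/
def Cone (f : (T → A) → (T → A)) (n : ℕ) (D : Set T) : Set T := (stepF f)^[n] D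

variable {f : (T → A) → (T → A)} {z : A}

lemma mem_J_iff_F {t t' : T} : t ∈ Jset f t' ↔ t' ∈ Fset f t := by
  simp only [Jset, Fset, mem_insert_iff, mem_setOf_eq, eq_comm]

lemma self_mem_Jset (t : T) : t ∈ Jset f t := mem_insert _ _
lemma self_mem_Fset (t : T) : t ∈ Fset f t := mem_insert _ _

lemma not_mem_Iset {u t' : T} (h : u ∉ Iset f t') :
    ∀ x y : T → A, (∀ v, v ≠ u → x v = y v) → f x t' = f y t' := by
  intro x y hxy
  by_contra hne
  exact h ⟨x, y, hxy, hne⟩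

section Topology

variable [TopologicalSpace A] [DiscreteTopology A] [Countable T]

/-- the local rule only depends on the memory neighbourhood -/
lemma local_rule (hf : Continuous f) (x y : T → A) (t' : T)
    (h : ∀ u ∈ Jset f t', x u = y u) : f x t' = f y t' := by
  have : Nonempty T := ⟨t'⟩
  obtain ⟨e, he⟩ := exists_surjective_nat T
  classical
  set s : ℕ → T → A := fun i t => if ∃ j, j < i ∧ e j = t then y t else x t with hs
  have hdiff : ∀ i v, v ≠ e i → s (i + 1) v = s i v := by
    intro i v hv
    simp only [hs]
    have : (∃ j, j < i + 1 ∧ e j = v) ↔ (∃ j, j < i ∧ e j = v) := by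
      constructor
      · rintro ⟨j, hj, rfl⟩
        rcases Nat.lt_succ_iff_lt_or_eq.mp hj with h' | rfl
        · exact ⟨j, h', rfl⟩
        · exact absurd rfl hv
      · rintro ⟨j, hj, rfl⟩; exact ⟨j, hj.trans (Nat.lt_succ_self i), rfl⟩
    simp only [this]
  have key : ∀ i, f (s i) t' = f x t' := by
    intro i
    induction i with
    | zero =>
      have h0 : s 0 = x := by funext t; simp [hs]
      rw [h0]
    | succ i ih =>
      have hstep : f (s (i + 1)) t' = f (s i) t' := by
        by_cases hxy : x (e i) = y (e i)
        · have heq : s (i + 1) = s i := by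
            funext t
            by_cases ht : t = e i
            · subst ht
              simp only [hs]
              split_ifs <;> first | rfl | exact hxy.symm | exact hxy
            · exact hdiff i t ht
          rw [heq]
        · have hmem : e i ∉ Iset f t' := by
            intro hmem
            exact hxy (h _ (mem_insert_of_mem _ hmem))
          exact not_mem_Iset hmem _ _ (hdiff i)
      exact hstep.trans ih
  have hlim : Tendsto s atTop (nhds y) := by
    rw [tendsto_pi_nhds]
    intro t
    apply tendsto_nhds_of_eventually_eq
    obtain ⟨j, rfl⟩ := he t
    filter_upwards [eventually_ge_atTop (j + 1)] with i hi
    simp only [hs]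
    by_cases hxy : x (e j) = y (e j)
    · split_ifs <;> simp [hxy]
    · have : ∃ j', j' < i ∧ e j' = e j := ⟨j, by omega, rfl⟩
      simp [this]
  have h1 : Tendsto (fun i => f (s i) t') atTop (nhds (f y t')) :=
    ((continuous_apply t').tendsto (f y)).comp ((hf.tendsto y).comp hlim)
  have h2 : Tendsto (fun i => f (s i) t') atTop (nhds (f x t')) := by
    simp only [key]
    exact tendsto_const_nhds
  exact (tendsto_nhds_unique h2 h1)

end Topology

/-! ### window/cone calculus -/

lemma Jwin_zero (S : Set T) : Jwin f 0 S = S := rfl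
lemma Jwin_succ (n : ℕ) (S : Set T) : Jwin f (n + 1) S = Jwin f n (stepJ f S) :=
  Function.iterate_succ_apply _ _ _
lemma Jwin_succ' (n : ℕ) (S : Set T) : Jwin f (n + 1) S = stepJ f (Jwin f n S) :=
  Function.iterate_succ_apply' _ _ _

lemma Cone_zero (D : Set T) : Cone f 0 D = D := rfl
lemma Cone_succ (n : ℕ) (D : Set T) : Cone f (n + 1) D = Cone f n (stepF f D) :=
  Function.iterate_succ_apply _ _ _
lemma Cone_succ' (n : ℕ) (D : Set T) : Cone f (n + 1) D = stepF f (Cone f n D) :=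
  Function.iterate_succ_apply' _ _ _

lemma stepJ_mono {S S' : Set T} (h : S ⊆ S') : stepJ f S ⊆ stepJ f S' :=
  biUnion_subset_biUnion_left h
lemma stepF_mono {S S' : Set T} (h : S ⊆ S') : stepF f S ⊆ stepF f S' :=
  biUnion_subset_biUnion_left h

lemma subset_stepJ (S : Set T) : S ⊆ stepJ f S := fun t ht =>
  mem_biUnion ht (self_mem_Jset t)

lemma Jwin_mono {S S' : Set T} (n : ℕ) (h : S ⊆ S') : Jwin f n S ⊆ Jwin f n S' := by
  induction n with
  | zero => exact h
  | succ n ih => rw [Jwin_succ', Jwin_succ']; exact stepJ_mono ih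

lemma Cone_mono {S S' : Set T} (n : ℕ) (h : S ⊆ S') : Cone f n S ⊆ Cone f n S' := by
  induction n with
  | zero => exact h
  | succ n ih => rw [Cone_succ', Cone_succ']; exact stepF_mono ih

lemma Jwin_le_mono (S : Set T) {m n : ℕ} (h : m ≤ n) : Jwin f m S ⊆ Jwin f n S := by
  induction n with
  | zero => simpa [Nat.le_zero.mp h] using subset_rfl
  | succ n ih =>
    rcases Nat.lt_succ_iff_lt_or_eq.mp (Nat.lt_succ_of_le h) with h' | rfl
    · refine (ih (Nat.lt_succ_iff.mp h')).trans ?_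
      rw [Jwin_succ']
      exact subset_stepJ _
    · exact subset_rfl

lemma stepJ_finite (hnice₁ : ∀ t' : T, (Iset f t').Finite) {S : Set T} (hS : S.Finite) :
    (stepJ f S).Finite :=
  hS.biUnion fun u _ => (hnice₁ u).insert u

lemma stepF_finite (hnice₂ : ∀ t : T, {t' | t ∈ Iset f t'}.Finite) {S : Set T} (hS : S.Finite) :
    (stepF f S).Finite :=
  hS.biUnion fun u _ => (hnice₂ u).insert u

lemma Jwin_finite (hnice₁ : ∀ t' : T, (Iset f t').Finite) (n : ℕ) {S : Set T} (hS : S.Finite) :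
    (Jwin f n S).Finite := by
  induction n with
  | zero => exact hS
  | succ n ih => rw [Jwin_succ']; exact stepJ_finite hnice₁ ih

lemma Cone_finite (hnice₂ : ∀ t : T, {t' | t ∈ Iset f t'}.Finite) (n : ℕ) {D : Set T}
    (hD : D.Finite) : (Cone f n D).Finite := by
  induction n with
  | zero => exact hD
  | succ n ih => rw [Cone_succ']; exact stepF_finite hnice₂ ih

lemma mem_stepF {t' : T} {S : Set T} : t' ∈ stepF f S ↔ ∃ u ∈ S, t' ∈ Fset f u := by
  simp [stepF]

lemma mem_stepJ {t : T} {S : Set T} : t ∈ stepJ f S ↔ ∃ u ∈ S, t ∈ Jset f u := by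
  simp [stepJ]

lemma mem_Cone {n : ℕ} {D : Set T} {t' : T} :
    t' ∈ Cone f n D ↔ ∃ d ∈ D, t' ∈ Cone f n {d} := by
  induction n generalizing D t' with
  | zero => simp [Cone_zero]
  | succ n ih =>
    rw [Cone_succ']
    constructor
    · intro h
      rcases mem_stepF.mp h with ⟨u, hu, hfu⟩
      rcases ih.mp hu with ⟨d, hd, hud⟩
      exact ⟨d, hd, by rw [Cone_succ']; exact mem_stepF.mpr ⟨u, hud, hfu⟩⟩
    · rintro ⟨d, hd, hmem⟩
      rw [Cone_succ'] at hmem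
      rcases mem_stepF.mp hmem with ⟨u, hu, hfu⟩
      exact mem_stepF.mpr ⟨u, ih.mpr ⟨d, hd, hu⟩, hfu⟩

lemma mem_Jwin {n : ℕ} {S : Set T} {t : T} :
    t ∈ Jwin f n S ↔ ∃ s ∈ S, t ∈ Jwin f n {s} := by
  induction n generalizing S t with
  | zero => simp [Jwin_zero]
  | succ n ih =>
    rw [Jwin_succ']
    constructor
    · intro h
      rcases mem_stepJ.mp h with ⟨u, hu, hju⟩
      rcases ih.mp hu with ⟨s, hs, hus⟩
      exact ⟨s, hs, by rw [Jwin_succ']; exact mem_stepJ.mpr ⟨u, hus, hju⟩⟩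
    · rintro ⟨s, hs, hmem⟩
      rw [Jwin_succ'] at hmem
      rcases mem_stepJ.mp hmem with ⟨u, hu, hju⟩
      exact mem_stepJ.mpr ⟨u, ih.mpr ⟨s, hs, hu⟩, hju⟩

/-- duality between forward cones and backward windows -/
lemma cone_window_dual {n : ℕ} {d t' : T} :
    t' ∈ Cone f n {d} ↔ d ∈ Jwin f n {t'} := by
  induction n generalizing d t' with
  | zero => simp [Cone_zero, Jwin_zero, eq_comm]
  | succ n ih =>
    rw [Cone_succ']
    have hrhs : d ∈ Jwin f (n + 1) {t'} ↔ ∃ u ∈ Jset f t', d ∈ Jwin f n {u} := by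
      rw [Jwin_succ]
      have : stepJ f {t'} = Jset f t' := by simp [stepJ]
      rw [this, mem_Jwin]
    rw [hrhs]
    constructor
    · intro h
      rcases mem_stepF.mp h with ⟨u, hu, hfu⟩
      exact ⟨u, mem_J_iff_F.mpr hfu, ih.mp hu⟩
    · rintro ⟨u, hu, hd⟩
      exact mem_stepF.mpr ⟨u, ih.mpr hd, mem_J_iff_F.mp hu⟩

/-- if `D` avoids the `n`-window of `E`, then the `n`-cone of `D` avoids `E`. -/
lemma cone_avoids {n : ℕ} {D E : Set T} (h : ∀ d ∈ D, d ∉ Jwin f n E) :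
    ∀ t' ∈ Cone f n D, t' ∉ E := by
  intro t' ht' htE
  rcases mem_Cone.mp ht' with ⟨d, hd, hdc⟩
  exact h d hd (Jwin_mono n (singleton_subset_iff.mpr htE) (cone_window_dual.mp hdc))


section Dynamics

variable [TopologicalSpace A] [DiscreteTopology A] [Countable T]

/-- `f^[n] · t'` only depends on the `n`-step memory window of `t'`. -/
lemma local_rule_iter (hf : Continuous f) :
    ∀ (n : ℕ) (x y : T → A) (t' : T), (∀ u ∈ Jwin f n {t'}, x u = y u) →
      f^[n] x t' = f^[n] y t' := by
  intro n
  induction n with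
  | zero =>
    intro x y t' h
    exact h t' rfl
  | succ n ih =>
    intro x y t' h
    rw [Function.iterate_succ_apply, Function.iterate_succ_apply]
    refine ih (f x) (f y) t' ?_
    intro u hu
    refine local_rule hf x y u ?_
    intro v hv
    refine h v ?_
    rw [Jwin_succ']
    exact mem_stepJ.mpr ⟨u, hu, hv⟩

/-- differences propagate within the influence cone -/
lemma diff_cone (hf : Continuous f) :
    ∀ (n : ℕ) (x y : T → A) (D : Set T), (∀ u, u ∉ D → x u = y u) →
      ∀ t' : T, f^[n] x t' ≠ f^[n] y t' → t' ∈ Cone f n D := by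
  intro n
  induction n with
  | zero =>
    intro x y D hD t' hne
    by_contra ht'
    exact hne (hD t' ht')
  | succ n ih =>
    intro x y D hD t' hne
    rw [Function.iterate_succ_apply, Function.iterate_succ_apply] at hne
    rw [Cone_succ]
    refine ih (f x) (f y) (stepF f D) ?_ t' hne
    intro u hu
    refine local_rule hf x y u ?_
    intro v hv
    by_contra hxy
    have hvD : v ∈ D := by
      by_contra hvD
      exact hxy (hD v hvD)
    exact hu (mem_stepF.mpr ⟨v, hvD, mem_J_iff_F.mp hv⟩)

end Dynamics

section ZeroFixed

variable {G : Type*} [Group G] [MulAction G T]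

lemma f_const (htrans : ∀ t t' : T, ∃ g : G, g • t = t')
    (hcomm : ∀ (g : G) (x : T → A), f (fun t => x (g⁻¹ • t)) = fun t => f x (g⁻¹ • t))
    (c : A) (t s : T) : f (fun _ => c) t = f (fun _ => c) s := by
  obtain ⟨g, hg⟩ := htrans s t
  have h : f (fun _ => c) = fun u => f (fun _ => c) (g⁻¹ • u) := hcomm g (fun _ => c)
  have h2 := congrFun h t
  rw [h2, ← hg, inv_smul_smul]

variable [TopologicalSpace A] [DiscreteTopology A]

lemma iter_zero_const (htrans : ∀ t t' : T, ∃ g : G, g • t = t')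
    (hcomm : ∀ (g : G) (x : T → A), f (fun t => x (g⁻¹ • t)) = fun t => f x (g⁻¹ • t))
    (t₀ : T) : ∀ (n : ℕ) (t : T), f^[n] (zeroC z) t = f^[n] (zeroC z) t₀ := by
  intro n
  induction n with
  | zero => intro t; rfl
  | succ n ih =>
    intro t
    have hconst : f^[n] (zeroC z) = fun _ => f^[n] (zeroC z) t₀ := funext ih
    rw [Function.iterate_succ_apply', hconst]
    exact f_const htrans hcomm _ t t₀

lemma eventually_zero_at (hnil : ∀ x : T → A,
      Tendsto (fun n => f^[n] x) atTop (nhds (fun _ => z)))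
    (x : T → A) (t : T) : ∀ᶠ n in atTop, f^[n] x t = z := by
  have h := tendsto_pi_nhds.mp (hnil x) t
  rw [nhds_discrete, tendsto_pure] at h
  exact h

lemma f_zero (htrans : ∀ t t' : T, ∃ g : G, g • t = t')
    (hcomm : ∀ (g : G) (x : T → A), f (fun t => x (g⁻¹ • t)) = fun t => f x (g⁻¹ • t))
    (hnil : ∀ x : T → A, Tendsto (fun n => f^[n] x) atTop (nhds (fun _ => z)))
    (t₀ : T) : f (zeroC z) = zeroC (T := T) z := by
  obtain ⟨N, hN⟩ := eventually_atTop.mp (eventually_zero_at hnil (zeroC z) t₀)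
  have h1 : f^[N] (zeroC z) = zeroC (T := T) z := by
    funext t
    rw [iter_zero_const (z := z) htrans hcomm t₀ N t]
    exact hN N le_rfl
  have h2 : f^[N + 1] (zeroC z) = zeroC (T := T) z := by
    funext t
    rw [iter_zero_const (z := z) htrans hcomm t₀ (N + 1) t]
    exact hN (N + 1) (Nat.le_succ N)
  calc f (zeroC z) = f (f^[N] (zeroC z)) := by rw [h1]
    _ = f^[N + 1] (zeroC z) := (Function.iterate_succ_apply' f N _).symm
    _ = zeroC z := h2

end ZeroFixed

section Supports

variable [TopologicalSpace A] [DiscreteTopology A] [Countable T]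

lemma iter_zero_fixed (hfz : f (zeroC z) = zeroC (T := T) z) (n : ℕ) :
    f^[n] (zeroC z) = zeroC (T := T) z := by
  induction n with
  | zero => rfl
  | succ n ih => rw [Function.iterate_succ_apply', ih, hfz]

lemma supp_iter_subset (hf : Continuous f) (hfz : f (zeroC z) = zeroC (T := T) z)
    (x : T → A) (n : ℕ) : suppC z (f^[n] x) ⊆ Cone f n (suppC z x) := by
  intro t' ht'
  refine diff_cone hf n x (zeroC z) (suppC z x) ?_ t' ?_
  · intro u hu
    by_contra hne
    exact hu hne
  · rw [iter_zero_fixed hfz]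
    exact ht'

lemma supp_iter_finite (hf : Continuous f) (hfz : f (zeroC z) = zeroC (T := T) z)
    (hnice₂ : ∀ t : T, {t' | t ∈ Iset f t'}.Finite)
    {x : T → A} (hx : (suppC z x).Finite) (n : ℕ) : (suppC z (f^[n] x)).Finite :=
  (Cone_finite hnice₂ n hx).subset (supp_iter_subset hf hfz x n)

/-- every finite configuration eventually dies completely -/
lemma mortality
    (hnil : ∀ x : T → A, Tendsto (fun n => f^[n] x) atTop (nhds (fun _ => z)))
    (hbdd : ∀ x : T → A, {t : T | x t ≠ z}.Finite →
      ∃ S : Set T, S.Finite ∧ ∀ n : ℕ, {t : T | f^[n] x t ≠ z} ⊆ S)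
    (x : T → A) (hx : (suppC z x).Finite) :
    ∃ τ : ℕ, ∀ n, τ ≤ n → f^[n] x = zeroC (T := T) z := by
  obtain ⟨S, hSfin, hS⟩ := hbdd x hx
  have hev : ∀ᶠ n in atTop, ∀ t ∈ S, f^[n] x t = z :=
    (eventually_all_finite hSfin).mpr fun t _ => eventually_zero_at hnil x t
  obtain ⟨N, hN⟩ := eventually_atTop.mp hev
  refine ⟨N, fun n hn => funext fun t => ?_⟩
  by_cases ht : t ∈ S
  · exact hN n hn t ht
  · by_contra hne
    exact ht (hS n hne)

end Supports

/-! ### combining configurations -/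

noncomputable def combineC (z : A) (x y : T → A) : T → A := fun t =>
  open scoped Classical in if x t = z then y t else x t

lemma combineC_left {x y : T → A} {t : T} (h : x t ≠ z) : combineC z x y t = x t := by
  simp [combineC, h]

lemma combineC_right {x y : T → A} {t : T} (h : x t = z) : combineC z x y t = y t := by
  simp [combineC, h]

lemma combineC_zero (y : T → A) : combineC z (zeroC z) y = y := by
  funext t
  exact combineC_right rfl

lemma suppC_combine (x y : T → A) : suppC z (combineC z x y) ⊆ suppC z x ∪ suppC z y := by
  intro t ht
  rw [mem_suppC] at ht
  by_cases h : x t = z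
  · rw [combineC_right h] at ht; exact Or.inr ht
  · exact Or.inl h

section Union

variable [TopologicalSpace A] [DiscreteTopology A] [Countable T]

/-- As long as the influence cone of the far piece `w'` stays separated from the
(bounding box of the) evolution of `W`, the union evolves as the pointwise union. -/
lemma union_evolution (hf : Continuous f) (hfz : f (zeroC z) = zeroC (T := T) z)
    (W w' : T → A) (SW : Set T) (hSW : ∀ n : ℕ, suppC z (f^[n] W) ⊆ SW) (M : ℕ)
    (SEP : ∀ n, n < M → ∀ t' ∈ stepF f (Cone f n (suppC z w')), t' ∉ SW ∧ t' ∉ stepF f SW) :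
    ∀ n, n ≤ M → f^[n] (combineC z W w') = combineC z (f^[n] W) (f^[n] w') := by
  intro n
  induction n with
  | zero => intro _; simp
  | succ n ih =>
    intro hn
    have IH := ih (Nat.le_of_succ_le hn)
    funext t'
    rw [Function.iterate_succ_apply', IH]
    by_cases hcase : ∃ u ∈ Jset f t', u ∈ Cone f n (suppC z w')
    · -- near the far piece: everything is governed by `w'`
      obtain ⟨u₀, hu₀J, hu₀C⟩ := hcase
      have ht' : t' ∈ stepF f (Cone f n (suppC z w')) :=
        mem_stepF.mpr ⟨u₀, hu₀C, mem_J_iff_F.mp hu₀J⟩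
      have hsep := SEP n (Nat.lt_of_succ_le hn) t' ht'
      have harg : f (combineC z (f^[n] W) (f^[n] w')) t' = f (f^[n] w') t' := by
        refine local_rule hf _ _ t' ?_
        intro u hu
        have hWu : f^[n] W u = z := by
          by_contra hne
          have huS : u ∈ SW := hSW n hne
          have : t' ∈ stepF f SW := mem_stepF.mpr ⟨u, huS, mem_J_iff_F.mp hu⟩
          exact hsep.2 this
        exact combineC_right hWu
      rw [harg, ← Function.iterate_succ_apply' f n w']
      have hWt' : f^[n + 1] W t' = z := by
        by_contra hne
        exact hsep.1 (hSW (n + 1) hne)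
      rw [combineC_right hWt']
    · -- away from the far piece: everything is governed by `W`
      push_neg at hcase
      have harg : f (combineC z (f^[n] W) (f^[n] w')) t' = f (f^[n] W) t' := by
        refine local_rule hf _ _ t' ?_
        intro u hu
        by_cases hWu : f^[n] W u = z
        · rw [combineC_right hWu, hWu]
          by_contra hne
          exact hcase u hu (supp_iter_subset hf hfz w' n hne)
        · exact combineC_left hWu
      rw [harg, ← Function.iterate_succ_apply' f n W]
      by_cases hWt' : f^[n + 1] W t' = z
      · rw [combineC_right hWt', hWt']
        by_contra hne
        have hne' : f^[n + 1] w' t' ≠ z := fun h => hne h.symm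
        have : t' ∈ Cone f (n + 1) (suppC z w') := supp_iter_subset hf hfz w' (n + 1) hne'
        rw [Cone_succ'] at this
        obtain ⟨u, hu, hfu⟩ := mem_stepF.mp this
        exact hcase u (mem_J_iff_F.mpr hfu) hu
      · rw [combineC_left hWt']

/-- after `W` has died completely, the union follows `w'` exactly. -/
lemma tail_evolution (hf : Continuous f) (hfz : f (zeroC z) = zeroC (T := T) z)
    (W w' : T → A) (SW : Set T) (hSW : ∀ n : ℕ, suppC z (f^[n] W) ⊆ SW) (τ : ℕ)
    (hdead : f^[τ] W = zeroC z)
    (SEP : ∀ n, n < τ → ∀ t' ∈ stepF f (Cone f n (suppC z w')), t' ∉ SW ∧ t' ∉ stepF f SW) :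
    ∀ n, τ ≤ n → f^[n] (combineC z W w') = f^[n] w' := by
  have h0 : f^[τ] (combineC z W w') = f^[τ] w' := by
    rw [union_evolution hf hfz W w' SW hSW τ SEP τ le_rfl, hdead, combineC_zero]
  intro n hn
  have hsplit : n = (n - τ) + τ := by omega
  rw [hsplit, Function.iterate_add_apply, h0, ← Function.iterate_add_apply]

end Union
section Main

variable [TopologicalSpace A] [DiscreteTopology A] [Countable T] [Finite A]

/-- **Far witnesses**: if liveness at `t₀` occurs at unboundedly large times, then it
occurs with finite witnesses that vanish on any prescribed finite set. -/
lemma far_witness (hf : Continuous f)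
    (hnice₁ : ∀ t' : T, (Iset f t').Finite)
    (hnice₂ : ∀ t : T, {t' | t ∈ Iset f t'}.Finite)
    (hfz : f (zeroC z) = zeroC (T := T) z)
    (hnil : ∀ x : T → A, Tendsto (fun n => f^[n] x) atTop (nhds (fun _ => z)))
    (t₀ : T) (hK : ∀ m : ℕ, ∃ x : T → A, f^[m] x t₀ ≠ z)
    (F : Set T) (hF : F.Finite) (N : ℕ) :
    ∃ w : T → A, (suppC z w).Finite ∧ (∀ t ∈ F, w t = z) ∧ ∃ l, N ≤ l ∧ f^[l] w t₀ ≠ z := by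
  classical
  have hKf : ∀ m : ℕ, ∃ x : T → A, (suppC z x).Finite ∧ f^[m] x t₀ ≠ z := by
    intro m
    obtain ⟨x, hx⟩ := hK m
    refine ⟨fun t => if t ∈ Jwin f m {t₀} then x t else z, ?_, ?_⟩
    · refine (Jwin_finite hnice₁ m (finite_singleton t₀)).subset ?_
      intro t ht
      rw [mem_suppC] at ht
      by_contra htJ
      exact ht (if_neg htJ)
    · have heq : f^[m] (fun t => if t ∈ Jwin f m {t₀} then x t else z) t₀ = f^[m] x t₀ :=
        local_rule_iter hf m _ x t₀ (fun u hu => if_pos hu)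
      rw [heq]; exact hx
  choose v hvfin hvlive using hKf
  obtain ⟨xs, hxs⟩ := exists_clusterPt_of_compactSpace (map v atTop)
  have hxs' : MapClusterPt xs atTop v := hxs
  have hev : ∀ᶠ n in atTop, ∀ t ∈ F, f^[n] xs t = z :=
    (eventually_all_finite hF).mpr fun t _ => eventually_zero_at hnil xs t
  obtain ⟨n₀, hn₀⟩ := eventually_atTop.mp hev
  set Φ : Set T := ⋃ t ∈ F, Jwin f n₀ {t} with hΦ
  have hΦfin : Φ.Finite := hF.biUnion fun t _ => Jwin_finite hnice₁ n₀ (finite_singleton t)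
  have hUopen : IsOpen {y : T → A | ∀ u ∈ Φ, y u = xs u} := by
    have heq : {y : T → A | ∀ u ∈ Φ, y u = xs u}
        = ⋂ u ∈ Φ, (fun y : T → A => y u) ⁻¹' {xs u} := by
      ext y; simp
    rw [heq]
    exact hΦfin.isOpen_biInter fun u _ =>
      (continuous_apply u).isOpen_preimage _ (isOpen_discrete _)
  have hmem : {y : T → A | ∀ u ∈ Φ, y u = xs u} ∈ nhds xs :=
    hUopen.mem_nhds (fun u hu => rfl)
  have hfreq : ∃ᶠ m in atTop, v m ∈ {y : T → A | ∀ u ∈ Φ, y u = xs u} :=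
    (mapClusterPt_iff_frequently.mp hxs') _ hmem
  obtain ⟨m, hm, hmmem⟩ := (frequently_atTop.mp hfreq) (N + n₀)
  refine ⟨f^[n₀] (v m), ?_, ?_, m - n₀, ?_, ?_⟩

  · exact supp_iter_finite hf hfz hnice₂ (hvfin m) n₀
  · intro t ht
    have heq : f^[n₀] (v m) t = f^[n₀] xs t :=
      local_rule_iter hf n₀ _ _ t (fun u hu => hmmem u (mem_biUnion ht hu))
    rw [heq]
    exact hn₀ n₀ le_rfl t ht
  · exact Nat.le_sub_of_add_le hm
  · have hmn : m - n₀ + n₀ = m := by omega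
    have heq : f^[m - n₀] (f^[n₀] (v m)) t₀ = f^[m] (v m) t₀ := by
      rw [← Function.iterate_add_apply, hmn]
    rw [heq]
    exact hvlive m

/-- **Gluing step**: add to a mortal finite configuration a far-away witness that
comes alive at `t₀` only after the old configuration has completely died. -/
lemma glue_step (hf : Continuous f)
    (hnice₁ : ∀ t' : T, (Iset f t').Finite)
    (hnice₂ : ∀ t : T, {t' | t ∈ Iset f t'}.Finite)
    (hfz : f (zeroC z) = zeroC (T := T) z)
    (hnil : ∀ x : T → A, Tendsto (fun n => f^[n] x) atTop (nhds (fun _ => z)))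
    (hbdd : ∀ x : T → A, {t : T | x t ≠ z}.Finite →
      ∃ S : Set T, S.Finite ∧ ∀ n : ℕ, {t : T | f^[n] x t ≠ z} ⊆ S)
    (t₀ : T) (hK : ∀ m : ℕ, ∃ x : T → A, f^[m] x t₀ ≠ z)
    (W : T → A) (τ : ℕ) (hWfin : (suppC z W).Finite)
    (hWdead : ∀ n, τ ≤ n → f^[n] W = zeroC z) :
    ∃ (W' : T → A) (τ' l' : ℕ), (suppC z W').Finite ∧
      (∀ n, τ' ≤ n → f^[n] W' = zeroC z) ∧
      τ ≤ l' ∧ τ < τ' ∧ l' < τ' ∧ f^[l'] W' t₀ ≠ z ∧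
      (∀ t ∈ Jwin f τ {t₀}, W' t = W t) ∧ (∀ t, W t ≠ z → W' t = W t) := by
  classical
  obtain ⟨SW, hSWfin, hSW⟩ := hbdd W hWfin
  have hSW' : ∀ n : ℕ, suppC z (f^[n] W) ⊆ SW := hSW
  set X : Set T := SW ∪ stepF f SW with hX
  have hXfin : X.Finite := hSWfin.union (stepF_finite hnice₂ hSWfin)
  set Avoid : Set T := (⋃ k ∈ {k : ℕ | k ≤ τ}, Jwin f k X) ∪ Jwin f τ {t₀} with hAvoid
  have hAfin : Avoid.Finite := by
    refine Set.Finite.union ?_ (Jwin_finite hnice₁ τ (finite_singleton t₀))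
    exact (Set.finite_le_nat τ).biUnion fun k _ => Jwin_finite hnice₁ k hXfin
  obtain ⟨w', hw'fin, hw'z, l', hl'ge, hl'live⟩ :=
    far_witness hf hnice₁ hnice₂ hfz hnil t₀ hK Avoid hAfin τ
  have hsupp_avoid : ∀ u ∈ suppC z w', u ∉ Avoid := fun u hu ha => hu (hw'z u ha)
  have SEP : ∀ n, n < τ →
      ∀ t' ∈ stepF f (Cone f n (suppC z w')), t' ∉ SW ∧ t' ∉ stepF f SW := by
    intro n hn t' ht'
    have ht'c : t' ∈ Cone f (n + 1) (suppC z w') := by rw [Cone_succ']; exact ht'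
    have hgen : t' ∉ X := by
      refine cone_avoids (n := n + 1) (D := suppC z w') (E := X) ?_ t' ht'c
      intro d hd hdJ
      refine hsupp_avoid d hd (Or.inl ?_)
      exact mem_biUnion (show n + 1 ∈ {k : ℕ | k ≤ τ} from by
        simp only [Set.mem_setOf_eq]; omega) hdJ
    exact ⟨fun h => hgen (Or.inl h), fun h => hgen (Or.inr h)⟩
  set W' := combineC z W w' with hW'
  have hW'fin : (suppC z W').Finite := ((hWfin.union hw'fin).subset (suppC_combine W w'))
  obtain ⟨τ₀, hτ₀⟩ := mortality hnil hbdd W' hW'fin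
  have hlive' : f^[l'] W' t₀ ≠ z := by
    have htail := tail_evolution hf hfz W w' SW hSW' τ (hWdead τ le_rfl) SEP l' hl'ge
    rw [hW', htail]
    exact hl'live
  refine ⟨W', max τ₀ (max (τ + 1) (l' + 1)), l', hW'fin, ?_, hl'ge, ?_, ?_, hlive', ?_, ?_⟩
  · intro n hn
    exact hτ₀ n (le_trans (le_max_left _ _) hn)
  · exact lt_of_lt_of_le (Nat.lt_succ_self τ) (le_trans (le_max_left _ _) (le_max_right _ _))
  · exact lt_of_lt_of_le (Nat.lt_succ_self l') (le_trans (le_max_right _ _) (le_max_right _ _))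
  · intro t ht
    by_cases hWt : W t = z
    · rw [hW', combineC_right hWt, hWt]
      exact hw'z t (Or.inr ht)
    · exact combineC_left hWt
  · intro t hWt
    exact combineC_left hWt

/-- **Per-cell uniform nilpotency.** -/
lemma main_cell {G : Type*} [Group G] [MulAction G T]
    (htrans : ∀ t t' : T, ∃ g : G, g • t = t')
    (hf : Continuous f)
    (hcomm : ∀ (g : G) (x : T → A), f (fun t => x (g⁻¹ • t)) = fun t => f x (g⁻¹ • t))
    (hnice₁ : ∀ t' : T, (Iset f t').Finite)
    (hnice₂ : ∀ t : T, {t' | t ∈ Iset f t'}.Finite)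
    (hnil : ∀ x : T → A, Tendsto (fun n => f^[n] x) atTop (nhds (fun _ => z)))
    (hbdd : ∀ x : T → A, {t : T | x t ≠ z}.Finite →
      ∃ S : Set T, S.Finite ∧ ∀ n : ℕ, {t : T | f^[n] x t ≠ z} ⊆ S)
    (t₀ : T) :
    ∃ n : ℕ, ∀ m, n ≤ m → ∀ x : T → A, f^[m] x t₀ = z := by
  classical
  by_contra hcon
  push_neg at hcon
  have hK : ∀ m : ℕ, ∃ x : T → A, f^[m] x t₀ ≠ z := by
    intro m
    obtain ⟨m', hm', x, hx⟩ := hcon m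
    refine ⟨f^[m' - m] x, ?_⟩
    have hsplit : m + (m' - m) = m' := by omega
    rw [← Function.iterate_add_apply, hsplit]
    exact hx
  have hfz : f (zeroC z) = zeroC (T := T) z := f_zero htrans hcomm hnil t₀
  -- bundled mortal states
  have hstep : ∀ s : Σ' (Wτ : (T → A) × ℕ),
        (suppC z Wτ.1).Finite ∧ (∀ n, Wτ.2 ≤ n → f^[n] Wτ.1 = zeroC z),
      ∃ s' : Σ' (Wτ : (T → A) × ℕ),
        (suppC z Wτ.1).Finite ∧ (∀ n, Wτ.2 ≤ n → f^[n] Wτ.1 = zeroC z),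
      ∃ l' : ℕ,
        s.1.2 ≤ l' ∧ s.1.2 < s'.1.2 ∧ l' < s'.1.2 ∧ f^[l'] s'.1.1 t₀ ≠ z ∧
        (∀ t ∈ Jwin f s.1.2 {t₀}, s'.1.1 t = s.1.1 t) ∧
        (∀ t, s.1.1 t ≠ z → s'.1.1 t = s.1.1 t) := by
    rintro ⟨⟨W, τ⟩, hWfin, hWdead⟩
    obtain ⟨W', τ', l', h1, h2, h3, h4, h5, h6, h7, h8⟩ :=
      glue_step hf hnice₁ hnice₂ hfz hnil hbdd t₀ hK W τ hWfin hWdead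
    exact ⟨⟨⟨W', τ'⟩, h1, h2⟩, l', h3, h4, h5, h6, h7, h8⟩
  choose next lk hl1 hl2 hl3 hl4 hl5 hl6 using hstep
  have hinitsupp : (suppC z (zeroC (T := T) z)).Finite := by
    have : suppC z (zeroC (T := T) z) = ∅ := by
      ext t; simp [suppC, zeroC]
    rw [this]; exact finite_empty
  let init : Σ' (Wτ : (T → A) × ℕ),
      (suppC z Wτ.1).Finite ∧ (∀ n, Wτ.2 ≤ n → f^[n] Wτ.1 = zeroC z) :=
    ⟨⟨zeroC z, 0⟩, hinitsupp, fun n _ => iter_zero_fixed hfz n⟩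
  let seq := fun k => next^[k] init
  have hseq : ∀ k, seq (k + 1) = next (seq k) := fun k =>
    Function.iterate_succ_apply' next k init
  set Wk : ℕ → T → A := fun k => (seq k).1.1 with hWk
  set τk : ℕ → ℕ := fun k => (seq k).1.2 with hτk
  set Lk : ℕ → ℕ := fun k => lk (seq k) with hLk
  have hWsucc : ∀ k, Wk (k + 1) = (next (seq k)).1.1 := fun k => by
    rw [hWk]; simp only [hseq k]
  have hτsucc : ∀ k, τk (k + 1) = (next (seq k)).1.2 := fun k => by
    rw [hτk]; simp only [hseq k]
  -- basic inequalities
  have hτmono : ∀ k, τk k < τk (k + 1) := fun k => by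
    rw [hτsucc k]; exact hl2 (seq k)
  have hτle : ∀ j k, k ≤ j → τk k ≤ τk j := by
    intro j
    induction j with
    | zero => intro k hk; rw [Nat.le_zero.mp hk]
    | succ j ih =>
      intro k hk
      rcases Nat.lt_succ_iff_lt_or_eq.mp (Nat.lt_succ_of_le hk) with h' | rfl
      · exact le_trans (ih k (Nat.lt_succ_iff.mp h')) (le_of_lt (hτmono j))
      · exact le_rfl
  have hτge : ∀ k, k ≤ τk k := by
    intro k
    induction k with
    | zero => exact Nat.zero_le _
    | succ k ih => exact Nat.lt_of_le_of_lt ih (hτmono k)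
  have hLlive : ∀ k, f^[Lk k] (Wk (k + 1)) t₀ ≠ z := fun k => by
    rw [hWsucc k]; exact hl4 (seq k)
  have hLge : ∀ k, τk k ≤ Lk k := fun k => hl1 (seq k)
  have hLlt : ∀ k, Lk k < τk (k + 1) := fun k => by
    rw [hτsucc k]; exact hl3 (seq k)
  -- window stability
  have hwinstep : ∀ k, ∀ t ∈ Jwin f (τk k) {t₀}, Wk (k + 1) t = Wk k t := fun k t ht => by
    rw [hWsucc k]; exact hl5 (seq k) t ht
  have hvalstep : ∀ k, ∀ t, Wk k t ≠ z → Wk (k + 1) t = Wk k t := fun k t ht => by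
    rw [hWsucc k]; exact hl6 (seq k) t ht
  have hwin : ∀ k j, k ≤ j → ∀ t ∈ Jwin f (τk k) {t₀}, Wk j t = Wk k t := by
    intro k j hkj
    induction j, hkj using Nat.le_induction with
    | base => intro t _; rfl
    | succ j hkj ih =>
      intro t ht
      have h1 : Wk (j + 1) t = Wk j t :=
        hwinstep j t (Jwin_le_mono _ (hτle j k hkj) ht)
      rw [h1]; exact ih t ht
  have hval : ∀ k j, k ≤ j → ∀ t, Wk k t ≠ z → Wk j t = Wk k t := by
    intro k j hkj
    induction j, hkj using Nat.le_induction with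
    | base => intro t _; rfl
    | succ j hkj ih =>
      intro t ht
      have h0 := ih t ht
      have h1 : Wk j t ≠ z := by rw [h0]; exact ht
      rw [hvalstep j t h1]; exact h0
  -- the limit configuration
  set Winf : T → A := fun t => if h : ∃ k, Wk k t ≠ z then Wk (Nat.find h) t else z
    with hWinf
  have hag : ∀ k, ∀ t ∈ Jwin f (τk k) {t₀}, Winf t = Wk k t := by
    intro k t ht
    simp only [hWinf]
    by_cases h : ∃ j, Wk j t ≠ z
    · rw [dif_pos h]
      have hj₀ : Wk (Nat.find h) t ≠ z := Nat.find_spec h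
      rcases le_total (Nat.find h) k with hle | hle
      · exact (hval (Nat.find h) k hle t hj₀).symm
      · exact hwin k (Nat.find h) hle t ht
    · rw [dif_neg h]
      push_neg at h
      exact (h k).symm
  have halive : ∀ k, f^[Lk k] Winf t₀ ≠ z := by
    intro k
    have heq : f^[Lk k] Winf t₀ = f^[Lk k] (Wk (k + 1)) t₀ := by
      refine local_rule_iter hf (Lk k) _ _ t₀ ?_
      intro u hu
      exact hag (k + 1) u (Jwin_le_mono _ (le_of_lt (hLlt k)) hu)
    rw [heq]
    exact hLlive k
  obtain ⟨N, hN⟩ := eventually_atTop.mp (eventually_zero_at hnil Winf t₀)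
  exact halive N (hN (Lk N) (le_trans (hτge N) (hLge N)))

end Main

end CAStmt4

open Filter

/-- A cellular automaton with nice local rules on a transitive
group action on a countable set, which is asymptotically nilpotent and under
which the support of every finite configuration stays uniformly bounded, is
uniformly asymptotically nilpotent. -/
theorem uniformly_asymptotically_nilpotent_of_bounded_supports
    {G T A : Type*} [Group G] [MulAction G T] [Countable T] [Finite A]
    [TopologicalSpace A] [DiscreteTopology A]
    (htrans : ∀ t t' : T, ∃ g : G, g • t = t')
    (z : A) (f : (T → A) → (T → A)) (hf : Continuous f)
    (hcomm : ∀ (g : G) (x : T → A),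
      f (fun t => x (g⁻¹ • t)) = fun t => f x (g⁻¹ • t))
    (hnice₁ : ∀ t' : T,
      {t : T | ∃ x y : T → A, (∀ u, u ≠ t → x u = y u) ∧ f x t' ≠ f y t'}.Finite)
    (hnice₂ : ∀ t : T,
      {t' : T | ∃ x y : T → A, (∀ u, u ≠ t → x u = y u) ∧ f x t' ≠ f y t'}.Finite)
    (hnil : ∀ x : T → A,
      Tendsto (fun n => f^[n] x) atTop (nhds (fun _ => z)))
    (hbdd : ∀ x : T → A, {t : T | x t ≠ z}.Finite →
      ∃ S : Set T, S.Finite ∧ ∀ n : ℕ, {t : T | f^[n] x t ≠ z} ⊆ S) :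
    ∀ B : Finset T, ∃ n : ℕ, ∀ m ≥ n, ∀ x : T → A, ∀ t ∈ B, f^[m] x t = z := by
  intro B
  have hn1 : ∀ t' : T, (CAStmt4.Iset f t').Finite := hnice₁
  have hn2 : ∀ t : T, {t' | t ∈ CAStmt4.Iset f t'}.Finite := hnice₂
  have key : ∀ t₀ : T, ∃ n : ℕ, ∀ m, n ≤ m → ∀ x : T → A, f^[m] x t₀ = z := fun t₀ =>
    CAStmt4.main_cell htrans hf hcomm hn1 hn2 hnil hbdd t₀
  choose nn hnn using key
  refine ⟨B.sup nn, fun m hm x t ht => ?_⟩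
  exact hnn t m (le_trans (Finset.le_sup ht) hm) x
end

section
/- Let T be a connected acyclic simple graph (a tree) with graph distance d, and let p : ℤ → V be a bi-infinite injective path in T, i.e. p(n) and p(n+1) are adjacent and p(n) ≠ p(n+2) for all n ∈ ℤ. Then for every vertex t, the sequence n ↦ d(p(−n), t) − n is eventually constant; hence the Busemann function b(t) = lim_{n→∞} (d(p(−n), t) − n) is well defined, and b(p(i)) = i for all i ∈ ℤ. -/
open Filter

namespace BusemannAux

open SimpleGraph

variable {V : Type*} {T : SimpleGraph V} {p : ℤ → V}

/-- The walk `p m, p (m+1), …, p (m+k)`. -/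
def walkZ (T : SimpleGraph V) (p : ℤ → V) (hadj : ∀ n : ℤ, T.Adj (p n) (p (n + 1))) :
    (m : ℤ) → (k : ℕ) → T.Walk (p m) (p (m + k))
  | m, 0 => (Walk.nil : T.Walk (p m) (p m)).copy rfl (congrArg p (by norm_num))
  | m, (k + 1) => (Walk.cons (hadj m) (walkZ T p hadj (m + 1) k)).copy rfl
      (congrArg p (by push_cast; ring))

variable (hadj : ∀ n : ℤ, T.Adj (p n) (p (n + 1)))

lemma walkZ_support (m : ℤ) (k : ℕ) :
    (walkZ T p hadj m k).support = (List.range (k + 1)).map (fun i : ℕ => p (m + i)) := by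
  induction k generalizing m with
  | zero => rw [walkZ]; rw [List.range_succ]; simp
  | succ k ih =>
    rw [walkZ, Walk.support_copy, Walk.support_cons, ih,
      List.range_succ_eq_map (n := k + 1), List.map_cons, List.map_map]
    congr 1
    · norm_num
    · apply List.map_congr_left
      intro i _
      simp only [Function.comp_apply]
      congr 1
      push_cast
      ring

lemma walkZ_edges (m : ℤ) (k : ℕ) :
    (walkZ T p hadj m k).edges
      = (List.range k).map (fun i : ℕ => s(p (m + i), p (m + i + 1))) := by
  induction k generalizing m with
  | zero => simp [walkZ]
  | succ k ih =>
    rw [walkZ, Walk.edges_copy, Walk.edges_cons, ih,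
      List.range_succ_eq_map (n := k), List.map_cons, List.map_map]
    congr 1
    · norm_num
    · apply List.map_congr_left
      intro i _
      simp only [Function.comp_apply]
      have e : m + ((i.succ : ℕ) : ℤ) = m + 1 + i := by push_cast; ring
      rw [e]

lemma walkZ_length (m : ℤ) (k : ℕ) : (walkZ T p hadj m k).length = k := by
  have h := Walk.length_support (walkZ T p hadj m k)
  rw [walkZ_support hadj m k, List.length_map, List.length_range] at h
  omega

/-- Index injectivity from the path property. -/
lemma walkZ_inj {m : ℤ} {k : ℕ} (hP : (walkZ T p hadj m k).IsPath) {a b : ℕ}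
    (ha : a < k + 1) (hb : b < k + 1) (h : p (m + a) = p (m + b)) : a = b := by
  have hnd := hP.support_nodup
  rw [walkZ_support hadj m k] at hnd
  exact List.inj_on_of_nodup_map hnd (List.mem_range.2 ha) (List.mem_range.2 hb) h

lemma walkZ_isPath (hinj : ∀ n : ℤ, p n ≠ p (n + 2)) (hacyc : T.IsAcyclic) :
    ∀ (k : ℕ) (m : ℤ), (walkZ T p hadj m k).IsPath := by
  classical
  intro k
  induction k with
  | zero => intro m; simp [walkZ]
  | succ k ih =>
    intro m
    rw [walkZ, Walk.isPath_copy, Walk.cons_isPath_iff]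
    refine ⟨ih (m + 1), ?_⟩
    intro hmem
    set W := walkZ T p hadj (m + 1) k with hWdef
    have hW : W.IsPath := ih (m + 1)
    have hQ : (W.takeUntil (p m) hmem).IsPath := hW.takeUntil hmem
    have hcyc : (Walk.cons (hadj m) (W.takeUntil (p m) hmem)).IsCycle := by
      rw [Walk.cons_isCycle_iff]
      refine ⟨hQ, ?_⟩
      intro hedge
      have hedge' : s(p m, p (m + 1)) ∈ W.edges :=
        Walk.edges_takeUntil_subset _ hmem hedge
      rw [hWdef, walkZ_edges hadj (m + 1) k] at hedge'
      obtain ⟨i, hi, heq⟩ := List.mem_map.1 hedge'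
      rw [List.mem_range] at hi
      have hcases : (p (m + 1 + (i : ℤ)) = p m ∧ p (m + 1 + (i : ℤ) + 1) = p (m + 1)) ∨
          (p (m + 1 + (i : ℤ)) = p (m + 1) ∧ p (m + 1 + (i : ℤ) + 1) = p m) := by
        rw [Sym2.eq_iff] at heq
        tauto
      rcases hcases with ⟨h1, h2⟩ | ⟨h1, h2⟩
      · -- p (m+1+i+1) = p (m+1) : indices i+1 and 0 coincide
        have h2' : p ((m + 1) + ((i + 1 : ℕ) : ℤ)) = p ((m + 1) + ((0 : ℕ) : ℤ)) := by
          have e1 : (m + 1) + ((i + 1 : ℕ) : ℤ) = m + 1 + (i : ℤ) + 1 := by push_cast; ring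
          have e2 : (m + 1) + ((0 : ℕ) : ℤ) = m + 1 := by norm_num
          rw [e1, e2]; exact h2
        have := walkZ_inj hadj hW (by omega) (by omega) h2'
        omega
      · -- p (m+1+i) = p (m+1) : i = 0, then p m = p (m+2)
        have h1' : p ((m + 1) + (i : ℤ)) = p ((m + 1) + ((0 : ℕ) : ℤ)) := by
          have e2 : (m + 1) + ((0 : ℕ) : ℤ) = m + 1 := by norm_num
          rw [e2]; exact h1
        have hi0 : i = 0 := walkZ_inj hadj hW (by omega) (by omega) h1'
        subst hi0
        have e : m + 1 + ((0 : ℕ) : ℤ) + 1 = m + 2 := by push_cast; ring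
        rw [e] at h2
        exact hinj m h2.symm
    exact hacyc _ hcyc

lemma path_length_eq_dist (hconn : T.Connected) (hacyc : T.IsAcyclic) {u v : V}
    (P : T.Walk u v) (hP : P.IsPath) : P.length = T.dist u v := by
  classical
  obtain ⟨w, hw⟩ := hconn.exists_walk_length_eq_dist u v
  have hb : w.bypass.IsPath := Walk.bypass_isPath w
  have hlen : w.bypass.length = T.dist u v :=
    le_antisymm (hw ▸ Walk.length_bypass_le w) (SimpleGraph.dist_le _)
  have hPQ : (⟨P, hP⟩ : T.Path u v) = ⟨w.bypass, hb⟩ := hacyc.path_unique _ _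
  have : P = w.bypass := congrArg Subtype.val hPQ
  rw [this, hlen]

end BusemannAux

/-- For a bi-infinite injective path `p` in a tree, the
sequence `n ↦ d(p(-n), t) - n` is eventually constant for every vertex `t`, so
the Busemann function `b` is well defined; moreover `b (p i) = i`. -/
theorem busemann_function_well_defined
    {V : Type*} (T : SimpleGraph V) (hconn : T.Connected) (hacyc : T.IsAcyclic)
    (p : ℤ → V)
    (hadj : ∀ n : ℤ, T.Adj (p n) (p (n + 1)))
    (hinj : ∀ n : ℤ, p n ≠ p (n + 2)) :
    ∃ b : V → ℤ,
      (∀ t : V, ∀ᶠ n : ℕ in atTop, (T.dist (p (-(n : ℤ))) t : ℤ) - (n : ℤ) = b t) ∧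
      ∀ i : ℤ, b (p i) = i := by
  classical
  -- distance along the path
  have hd : ∀ (m : ℤ) (k : ℕ), T.dist (p m) (p (m + k)) = k := by
    intro m k
    rw [← BusemannAux.path_length_eq_dist hconn hacyc _
      (BusemannAux.walkZ_isPath hadj hinj hacyc k m), BusemannAux.walkZ_length]
  have hd' : ∀ a b : ℤ, a ≤ b → (T.dist (p a) (p b) : ℤ) = b - a := by
    intro a b hab
    have hb : b = a + ((b - a).toNat : ℤ) := by omega
    rw [hb, hd a (b - a).toNat]
    omega
  set f : V → ℕ → ℤ := fun t n => (T.dist (p (-(n : ℤ))) t : ℤ) - (n : ℤ) with hf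
  have hstep : ∀ t (n : ℕ), f t (n + 1) ≤ f t n := by
    intro t n
    have htri := hconn.dist_triangle (u := p (-((n : ℤ) + 1))) (v := p (-(n : ℤ))) (w := t)
    have h1 : (T.dist (p (-((n : ℤ) + 1))) (p (-(n : ℤ))) : ℤ) = 1 := by
      rw [hd' _ _ (by omega)]; ring
    simp only [hf]
    push_cast
    omega
  have hanti : ∀ t, Antitone (f t) := fun t => antitone_nat_of_succ_le (hstep t)
  have hlb : ∀ t (n : ℕ), -(T.dist (p 0) t : ℤ) ≤ f t n := by
    intro t n
    have htri := hconn.dist_triangle (u := p (-(n : ℤ))) (v := t) (w := p 0)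
    have h1 : (T.dist (p (-(n : ℤ))) (p 0) : ℤ) = n := by
      rw [hd' _ _ (by omega)]; ring
    have hcm : T.dist t (p 0) = T.dist (p 0) t := SimpleGraph.dist_comm
    simp only [hf]
    omega
  have key : ∀ t, ∃ c : ℤ, ∀ᶠ n : ℕ in atTop, f t n = c := by
    intro t
    obtain ⟨lb, ⟨n₀, hn₀⟩, hleast⟩ :=
      Int.exists_least_of_bdd (P := fun z => ∃ n : ℕ, f t n = z)
        ⟨-(T.dist (p 0) t : ℤ), by rintro z ⟨n, rfl⟩; exact hlb t n⟩ ⟨f t 0, 0, rfl⟩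
    refine ⟨lb, eventually_atTop.2 ⟨n₀, fun n hn => ?_⟩⟩
    have h1 : f t n ≤ lb := hn₀ ▸ hanti t hn
    have h2 : lb ≤ f t n := hleast _ ⟨n, rfl⟩
    omega
  choose b hb using key
  refine ⟨b, hb, ?_⟩
  intro i
  have h2 : ∀ᶠ n : ℕ in atTop, f (p i) n = i := by
    rw [eventually_atTop]
    refine ⟨(-i).toNat, fun n hn => ?_⟩
    have hle : -(n : ℤ) ≤ i := by
      have : (-i) ≤ ((-i).toNat : ℤ) := Int.self_le_toNat _
      have : ((-i).toNat : ℤ) ≤ n := by exact_mod_cast hn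
      omega
    simp only [hf]
    rw [hd' _ _ hle]
    ring
  obtain ⟨n, hn1, hn2⟩ := ((hb (p i)).and h2).exists
  rw [← hn1, hn2]
end

section
/- Let k ≥ 2, let T be the k-regular tree with vertex set V and graph distance d, let p : ℤ → V be a bi-infinite injective path, and let b : V → ℤ be its Busemann function, b(t) = lim_{n→∞} (d(p(−n), t) − n). Let A be a finite alphabet and let Y = {y ∈ A^V : ∀ t, t' ∈ V, b(t) = b(t') → y_t = y_{t'}} be the set of configurations constant on Busemann levels. Then every cellular automaton f : A^V → A^V on Aut(T) ↷ V satisfies f(Y) ⊆ Y. -/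
open Filter SimpleGraph

attribute [local instance] Classical.propDecidable

namespace BuseAux

variable {V : Type*} {T : SimpleGraph V}

/-- In a tree, every path realizes the distance. -/
lemma path_length (hconn : T.Connected) (hacyc : T.IsAcyclic) {a c : V}
    {P : T.Walk a c} (hP : P.IsPath) : P.length = T.dist a c := by
  obtain ⟨W, hW⟩ := hconn.exists_walk_length_eq_dist a c
  have h1 : (⟨P, hP⟩ : T.Path a c) = ⟨W.bypass, W.bypass_isPath⟩ := hacyc.path_unique _ _
  have h2 : P = W.bypass := congrArg Subtype.val h1
  have h3 : P.length ≤ T.dist a c := by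
    rw [h2, ← hW]; exact W.length_bypass_le
  exact le_antisymm h3 (SimpleGraph.dist_le P)

lemma exists_geodesic (hconn : T.Connected) (hacyc : T.IsAcyclic) (a c : V) :
    ∃ P : T.Walk a c, P.IsPath ∧ P.length = T.dist a c := by
  obtain ⟨W, _⟩ := hconn.exists_walk_length_eq_dist a c
  exact ⟨W.bypass, W.bypass_isPath, path_length hconn hacyc W.bypass_isPath⟩

lemma adj_dist_eq_one (hconn : T.Connected) {u v : V} (h : T.Adj u v) :
    T.dist u v = 1 := by
  have h1 : T.dist u v ≤ 1 := by
    simpa using SimpleGraph.dist_le (Walk.cons h Walk.nil)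
  have h2 : T.dist u v ≠ 0 := fun h0 => h.ne (hconn.dist_eq_zero_iff.mp h0)
  omega

/-- distance from `u` within a path containing it. -/
lemma dist_add_of_mem_support (hconn : T.Connected) (hacyc : T.IsAcyclic)
    {a c u : V} {P : T.Walk a c} (hP : P.IsPath) (hu : u ∈ P.support) :
    T.dist a u + T.dist u c = P.length := by
  have ht := hP.takeUntil hu
  have hd := hP.dropUntil hu
  have hspec := P.take_spec hu
  have hsum : (P.takeUntil u hu).length + (P.dropUntil u hu).length = P.length := by
    rw [← Walk.length_append, hspec]
  rw [← path_length hconn hacyc ht, ← path_length hconn hacyc hd]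
  exact hsum

/-- Adjacent vertices are at different distances from any root (trees are bipartite). -/
lemma adj_dist_ne (hconn : T.Connected) (hacyc : T.IsAcyclic)
    (x : V) {u v : V} (h : T.Adj u v) : T.dist x u ≠ T.dist x v := by
  intro heq
  obtain ⟨Pu, hPu, hlu⟩ := exists_geodesic hconn hacyc x u
  obtain ⟨Pv, hPv, hlv⟩ := exists_geodesic hconn hacyc x v
  set W : T.Walk u v := Pu.reverse.append Pv with hW
  have hQ : W.bypass.IsPath := W.bypass_isPath
  have hE : (Walk.cons h Walk.nil : T.Walk u v).IsPath := by
    simp [Walk.cons_isPath_iff, h.ne]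
  have h1 : (⟨W.bypass, hQ⟩ : T.Path u v) = ⟨Walk.cons h Walk.nil, hE⟩ :=
    hacyc.path_unique _ _
  have h2 : W.bypass = Walk.cons h Walk.nil := congrArg Subtype.val h1
  have hmem : s(u, v) ∈ W.edges := by
    apply W.edges_bypass_subset
    rw [h2]; simp
  rw [hW, Walk.edges_append, List.mem_append] at hmem
  rcases hmem with hm | hm
  · rw [Walk.edges_reverse, List.mem_reverse] at hm
    have hv : v ∈ Pu.support := Pu.snd_mem_support_of_mem_edges hm
    have := dist_add_of_mem_support hconn hacyc hPu hv
    rw [hlu, ← heq] at this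
    have : T.dist v u = 0 := by omega
    rw [hconn.dist_eq_zero_iff] at this
    exact h.ne this.symm
  · have hu' : u ∈ Pv.support := Pv.fst_mem_support_of_mem_edges hm
    have := dist_add_of_mem_support hconn hacyc hPv hu'
    rw [hlv, heq] at this
    have : T.dist u v = 0 := by omega
    rw [hconn.dist_eq_zero_iff] at this
    exact h.ne this

/-- Adjacent vertices: distance from root differs by exactly one. -/
lemma adj_dist_cases (hconn : T.Connected) (hacyc : T.IsAcyclic)
    (x : V) {u v : V} (h : T.Adj u v) :
    T.dist x v = T.dist x u + 1 ∨ T.dist x u = T.dist x v + 1 := by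
  have h1 : T.dist x v ≤ T.dist x u + 1 := by
    calc T.dist x v ≤ T.dist x u + T.dist u v := hconn.dist_triangle
    _ = T.dist x u + 1 := by rw [adj_dist_eq_one hconn h]
  have h2 : T.dist x u ≤ T.dist x v + 1 := by
    calc T.dist x u ≤ T.dist x v + T.dist v u := hconn.dist_triangle
    _ = T.dist x v + 1 := by rw [adj_dist_eq_one hconn h.symm]
  have h3 := adj_dist_ne hconn hacyc x h
  omega

/-- Existence and uniqueness of the parent. -/
lemma parent_exists_unique (hconn : T.Connected) (hacyc : T.IsAcyclic)
    (x : V) {v : V} (hv : v ≠ x) :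
    ∃! u, T.Adj u v ∧ T.dist x u + 1 = T.dist x v := by
  set n := T.dist x v with hn
  have hn0 : n ≠ 0 := by
    rw [hn, Ne, hconn.dist_eq_zero_iff]; exact fun h => hv h.symm
  obtain ⟨P, hP, hl⟩ := exists_geodesic hconn hacyc x v
  obtain ⟨m, hm⟩ : ∃ m, n = m + 1 := ⟨n - 1, by omega⟩
  -- existence
  have hlen : P.length = n := by rw [hl, hn]
  have hadj : T.Adj (P.getVert m) (P.getVert (m+1)) := P.adj_getVert_succ (by omega)
  have hVn : P.getVert (m+1) = v := by rw [← hm, ← hlen]; exact P.getVert_length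
  set u := P.getVert m with hu
  have huv : T.Adj u v := hVn ▸ hadj
  have humem : u ∈ P.support := by
    rw [Walk.mem_support_iff_exists_getVert]; exact ⟨m, rfl, by omega⟩
  have hsum := dist_add_of_mem_support hconn hacyc hP humem
  have hduv : T.dist u v = 1 := adj_dist_eq_one hconn huv
  rw [hlen] at hsum
  have hdxu : T.dist x u + 1 = n := by omega
  refine ⟨u, ⟨huv, hdxu⟩, ?_⟩
  -- uniqueness
  rintro u2 ⟨hadj2, hd2⟩

  -- build two paths from v to x and compare
  have keypath : ∀ w : V, T.Adj w v → T.dist x w + 1 = n →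
      ∃ (Q : T.Walk v x), Q.IsPath ∧ Q.support.tail.head? = some w := by
    intro w hwv hdw
    obtain ⟨Pw, hPw, hlw⟩ := exists_geodesic hconn hacyc x w
    have hvns : v ∉ Pw.support := by
      intro hmem
      have := dist_add_of_mem_support hconn hacyc hPw hmem
      rw [hlw] at this
      have hle := Walk.length_takeUntil_le Pw hmem
      omega
    have hvns' : v ∉ Pw.reverse.support := by rwa [Walk.support_reverse, List.mem_reverse]
    refine ⟨Walk.cons hwv.symm Pw.reverse, (hPw.reverse).cons hvns', ?_⟩
    rw [Walk.support_cons]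
    rw [Pw.reverse.support_eq_cons]
    rfl
  obtain ⟨Q1, hQ1, hh1⟩ := keypath u huv hdxu
  obtain ⟨Q2, hQ2, hh2⟩ := keypath u2 hadj2 hd2
  have : (⟨Q1, hQ1⟩ : T.Path v x) = ⟨Q2, hQ2⟩ := hacyc.path_unique _ _
  have hQeq : Q1 = Q2 := congrArg Subtype.val this
  rw [hQeq, hh2] at hh1
  exact Option.some_injective _ hh1


/-! ### Rooted structure -/

variable (T) in
/-- Parent of `v` in the tree rooted at `x`. -/
noncomputable def par (x v : V) : V :=
  if h : ∃ u, T.Adj u v ∧ T.dist x u + 1 = T.dist x v then h.choose else x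

lemma par_spec (hconn : T.Connected) (hacyc : T.IsAcyclic) {x v : V} (hv : v ≠ x) :
    T.Adj (par T x v) v ∧ T.dist x (par T x v) + 1 = T.dist x v := by
  have h := parent_exists_unique hconn hacyc x hv
  rw [par, dif_pos h.exists]
  exact h.exists.choose_spec

lemma par_eq_of (hconn : T.Connected) (hacyc : T.IsAcyclic) {x u v : V}
    (hadj : T.Adj u v) (hd : T.dist x u + 1 = T.dist x v) : par T x v = u := by
  have hv : v ≠ x := by
    intro h; rw [h, (hconn.dist_eq_zero_iff).mpr rfl] at hd; omega
  obtain ⟨w, _, huniq⟩ := parent_exists_unique hconn hacyc x hv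
  rw [huniq _ (par_spec hconn hacyc hv), huniq _ ⟨hadj, hd⟩]

lemma par_x (hconn : T.Connected) (x : V) : par T x x = x := by
  rw [par, dif_neg]
  rintro ⟨u, _, hd⟩
  rw [(hconn.dist_eq_zero_iff).mpr rfl] at hd; omega

lemma dist_ne_zero_iff (hconn : T.Connected) {x v : V} : T.dist x v ≠ 0 ↔ v ≠ x := by
  rw [Ne, hconn.dist_eq_zero_iff]
  exact not_congr ⟨fun h => h.symm, fun h => h.symm⟩

/-- Distance of iterated parent. -/
lemma parIter_dist (hconn : T.Connected) (hacyc : T.IsAcyclic) (x : V) :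
    ∀ (m : ℕ) (v : V), m ≤ T.dist x v → T.dist x ((par T x)^[m] v) = T.dist x v - m := by
  intro m
  induction m with
  | zero => intro v _; simp
  | succ m ih =>
    intro v hm
    have hv : v ≠ x := by
      rw [← dist_ne_zero_iff hconn]; omega
    have hps := par_spec hconn hacyc (x := x) hv
    rw [Function.iterate_succ_apply]
    rw [ih (par T x v) (by omega)]
    omega

lemma parIter_dist_self (hconn : T.Connected) (hacyc : T.IsAcyclic) (x : V) :
    ∀ (m : ℕ) (v : V), m ≤ T.dist x v → T.dist ((par T x)^[m] v) v = m := by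
  intro m v hm
  -- upper bound: walk along parents; lower: triangle
  have hub : ∀ (j : ℕ) (w : V), j ≤ T.dist x w → T.dist ((par T x)^[j] w) w ≤ j := by
    intro j
    induction j with
    | zero => simp
    | succ j ih =>
      intro w hj
      have hw : w ≠ x := by rw [← dist_ne_zero_iff hconn]; omega
      have hps := par_spec hconn hacyc (x := x) hw
      calc T.dist ((par T x)^[j+1] w) w
          ≤ T.dist ((par T x)^[j] (par T x w)) (par T x w) + T.dist (par T x w) w := by
            rw [Function.iterate_succ_apply]; exact hconn.dist_triangle
        _ ≤ j + 1 := by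
            have h1 := ih (par T x w) (by omega)
            have h2 : T.dist (par T x w) w = 1 := adj_dist_eq_one hconn hps.1
            omega
  have h1 := hub m v hm
  have h2 := parIter_dist hconn hacyc x m v hm
  have h3 : T.dist x v ≤ T.dist x ((par T x)^[m] v) + T.dist ((par T x)^[m] v) v :=
    hconn.dist_triangle
  omega

lemma parIter_eq_root (hconn : T.Connected) (hacyc : T.IsAcyclic) (x v : V) :
    (par T x)^[T.dist x v] v = x := by
  have := parIter_dist hconn hacyc x (T.dist x v) v le_rfl
  simp only [Nat.sub_self] at this
  by_contra h
  exact (dist_ne_zero_iff hconn).mpr h this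

variable (T) in
/-- Children of `w` in the tree rooted at `x`. -/
def childSet (x w : V) : Set V := {v | T.Adj w v ∧ T.dist x v = T.dist x w + 1}

lemma mem_childSet_iff (hconn : T.Connected) (hacyc : T.IsAcyclic) {x w v : V} :
    v ∈ childSet T x w ↔ par T x v = w ∧ v ≠ x := by
  constructor
  · rintro ⟨hadj, hd⟩
    have hv : v ≠ x := by
      rw [← dist_ne_zero_iff hconn]; omega
    exact ⟨par_eq_of hconn hacyc hadj (by omega), hv⟩
  · rintro ⟨hp, hv⟩
    have hps := par_spec hconn hacyc (x := x) hv
    rw [hp] at hps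
    exact ⟨hps.1, by omega⟩

lemma childSet_root (hconn : T.Connected) (hacyc : T.IsAcyclic) (x : V) :
    childSet T x x = T.neighborSet x := by
  ext v
  simp only [childSet, Set.mem_setOf_eq, mem_neighborSet]
  constructor
  · rintro ⟨h, _⟩; exact h
  · intro h
    refine ⟨h, ?_⟩
    rw [(hconn.dist_eq_zero_iff).mpr rfl, adj_dist_eq_one hconn h]

lemma childSet_eq_diff (hconn : T.Connected) (hacyc : T.IsAcyclic) {x w : V} (hw : w ≠ x) :
    childSet T x w = T.neighborSet w \ {par T x w} := by
  have hps := par_spec hconn hacyc (x := x) hw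
  ext v
  simp only [childSet, Set.mem_setOf_eq, Set.mem_diff, mem_neighborSet, Set.mem_singleton_iff]
  constructor
  · rintro ⟨hadj, hd⟩
    refine ⟨hadj, ?_⟩
    intro hvp
    rw [hvp] at hd
    omega
  · rintro ⟨hadj, hv⟩
    refine ⟨hadj, ?_⟩
    rcases adj_dist_cases hconn hacyc x hadj with h | h
    · exact h
    · exfalso
      exact hv (by
        have := par_eq_of (x := x) hconn hacyc hadj.symm (by omega)
        -- this : par T x w = v
        exact this.symm)

section Reg
variable {k : ℕ}

lemma neighborSet_finite (hreg : ∀ v : V, Nat.card (T.neighborSet v) = k)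
    (hk : 2 ≤ k) (v : V) : (T.neighborSet v).Finite := by
  have : Finite (T.neighborSet v) := Nat.finite_of_card_ne_zero (by rw [hreg]; omega)
  exact Set.toFinite _

lemma childSet_finite (hconn : T.Connected) (hacyc : T.IsAcyclic)
    (hreg : ∀ v : V, Nat.card (T.neighborSet v) = k) (hk : 2 ≤ k) (x w : V) :
    (childSet T x w).Finite := by
  by_cases hw : w = x
  · rw [hw, childSet_root hconn hacyc]; exact neighborSet_finite hreg hk x
  · rw [childSet_eq_diff hconn hacyc hw]
    exact (neighborSet_finite hreg hk w).diff

lemma card_childSet (hconn : T.Connected) (hacyc : T.IsAcyclic)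
    (hreg : ∀ v : V, Nat.card (T.neighborSet v) = k) (hk : 2 ≤ k)
    {x w : V} (hw : w ≠ x) : Nat.card (childSet T x w) = k - 1 := by
  have hps := par_spec hconn hacyc (x := x) hw
  rw [Nat.card_coe_set_eq, childSet_eq_diff hconn hacyc hw]
  rw [Set.ncard_diff_singleton_of_mem (show par T x w ∈ T.neighborSet w from hps.1.symm)]
  rw [← Nat.card_coe_set_eq, hreg]

end Reg

/-! ### The automorphism construction -/

variable (T) in
/-- a chosen bijection between children sets. -/
noncomputable def baseMap (x w w' : V) : V → V :=
  if h : ∃ φ : V → V, Set.BijOn φ (childSet T x w) (childSet T x w') ∧ (w = w' → φ = id)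
  then h.choose else id

section Main

variable {k : ℕ} (hconn : T.Connected) (hacyc : T.IsAcyclic)
  (hreg : ∀ v : V, Nat.card (T.neighborSet v) = k) (hk : 2 ≤ k)

include hconn hacyc hreg hk in
lemma baseMap_spec {x w w' : V} (hw : w ≠ x) (hw' : w' ≠ x) :
    Set.BijOn (baseMap T x w w') (childSet T x w) (childSet T x w') ∧
      (w = w' → baseMap T x w w' = id) := by
  have hex : ∃ φ : V → V, Set.BijOn φ (childSet T x w) (childSet T x w') ∧
      (w = w' → φ = id) := by
    by_cases hww : w = w'
    · subst hww
      exact ⟨id, Set.bijOn_id _, fun _ => rfl⟩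
    · have f1 : Finite (childSet T x w) := (childSet_finite hconn hacyc hreg hk x w).to_subtype
      have f2 : Finite (childSet T x w') := (childSet_finite hconn hacyc hreg hk x w').to_subtype
      have e1 : childSet T x w ≃ Fin (k-1) :=
        Finite.equivFinOfCardEq (card_childSet hconn hacyc hreg hk hw)
      have e2 : childSet T x w' ≃ Fin (k-1) :=
        Finite.equivFinOfCardEq (card_childSet hconn hacyc hreg hk hw')
      set e : childSet T x w ≃ childSet T x w' := e1.trans e2.symm with he
      refine ⟨fun v => if hv : v ∈ childSet T x w then (e ⟨v, hv⟩ : V) else v, ⟨?_, ?_, ?_⟩,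
        fun h => absurd h hww⟩
      · intro v hv
        simp only [dif_pos hv]
        exact (e ⟨v, hv⟩).2
      · intro v1 h1 v2 h2 heq
        simp only [dif_pos h1, dif_pos h2] at heq
        have : e ⟨v1, h1⟩ = e ⟨v2, h2⟩ := Subtype.ext heq
        simpa using congrArg Subtype.val (e.injective this)
      · intro u hu
        refine ⟨(e.symm ⟨u, hu⟩ : V), (e.symm ⟨u, hu⟩).2, ?_⟩
        simp only [dif_pos (e.symm ⟨u, hu⟩).2]
        rw [Subtype.coe_eta, Equiv.apply_symm_apply]
  rw [baseMap, dif_pos hex]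
  exact hex.choose_spec

end Main

variable (T) in
/-- the spine: ancestors of `u`, indexed by depth. -/
noncomputable def spineA (x u : V) (i : ℕ) : V := (par T x)^[T.dist x u - i] u

section Spine

variable (hconn : T.Connected) (hacyc : T.IsAcyclic) {x u : V}

include hconn hacyc in
lemma spineA_dist {i : ℕ} (hi : i ≤ T.dist x u) :
    T.dist x (spineA T x u i) = i := by
  rw [spineA, parIter_dist hconn hacyc x _ _ (by omega)]; omega

include hconn hacyc in
lemma spineA_zero : spineA T x u 0 = x := by
  rw [spineA, Nat.sub_zero, parIter_eq_root hconn hacyc]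

lemma spineA_last : spineA T x u (T.dist x u) = u := by
  rw [spineA, Nat.sub_self, Function.iterate_zero_apply]

lemma spineA_par {i : ℕ} (h1 : 1 ≤ i) (h2 : i ≤ T.dist x u) :
    par T x (spineA T x u i) = spineA T x u (i - 1) := by
  rw [spineA, spineA, ← Function.iterate_succ_apply' (par T x)]
  congr 1
  omega

include hconn hacyc in
lemma spineA_ne_root {i : ℕ} (h1 : 1 ≤ i) (h2 : i ≤ T.dist x u) :
    spineA T x u i ≠ x := by
  rw [← dist_ne_zero_iff hconn, spineA_dist hconn hacyc h2]
  omega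

include hconn hacyc in
lemma spineA_mem_childSet {i : ℕ} (h2 : i + 1 ≤ T.dist x u) :
    spineA T x u (i + 1) ∈ childSet T x (spineA T x u i) := by
  rw [mem_childSet_iff hconn hacyc]
  refine ⟨?_, spineA_ne_root hconn hacyc (by omega) h2⟩
  rw [spineA_par (by omega) h2]
  simp

lemma spineA_branch {i : ℕ} (h1 : 1 ≤ i) (h2 : i ≤ T.dist x u) :
    (par T x)^[i - 1] (spineA T x u i) = spineA T x u 1 := by
  rw [spineA, spineA, ← Function.iterate_add_apply]
  congr 1
  omega

end Spine

variable (T) in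
/-- the child-level map from children of `w` to children of `w'`. -/
noncomputable def sig (x t t' w w' : V) : V → V := fun v =>
  if T.dist x w < T.dist x t ∧ w = spineA T x t' (T.dist x w) then
    Equiv.swap (baseMap T x w w' (spineA T x t' (T.dist x w + 1)))
      (spineA T x t (T.dist x w + 1)) (baseMap T x w w' v)
  else baseMap T x w w' v

variable (T) in
noncomputable def Hfun (x t t' : V) (n : ℕ) : V → V :=
  Nat.rec (motive := fun _ => V → V) (fun v => v)
    (fun _ Hn v =>
      if v = x then x
      else if par T x v = x then
        Equiv.swap (spineA T x t' 1) (spineA T x t 1) v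
      else sig T x t t' (par T x v) (Hn (par T x v)) v) n

variable (T) in
/-- the automorphism (as a function). -/
noncomputable def hAut (x t t' : V) : V → V := fun v => Hfun T x t t' (T.dist x v) v

lemma Hfun_zero (x t t' v : V) : Hfun T x t t' 0 v = v := rfl

lemma Hfun_succ (x t t' v : V) (n : ℕ) :
    Hfun T x t t' (n + 1) v =
      if v = x then x
      else if par T x v = x then
        Equiv.swap (spineA T x t' 1) (spineA T x t 1) v
      else sig T x t t' (par T x v) (Hfun T x t t' n (par T x v)) v := rfl

lemma Hfun_x (x t t' : V) (n : ℕ) : Hfun T x t t' n x = x := by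
  cases n with
  | zero => rfl
  | succ n => rw [Hfun_succ, if_pos rfl]

section Main2

variable {k : ℕ} (hconn : T.Connected) (hacyc : T.IsAcyclic)

include hconn hacyc in
lemma Hfun_stable (x t t' : V) :
    ∀ n v, T.dist x v ≤ n → Hfun T x t t' (n + 1) v = Hfun T x t t' n v := by
  intro n
  induction n with
  | zero =>
    intro v hv
    have : v = x := by
      have := (dist_ne_zero_iff hconn (x := x) (v := v))
      by_contra h
      exact (this.mpr h) (by omega)
    rw [this, Hfun_x, Hfun_zero]
  | succ n ih =>
    intro v hv
    by_cases hvx : v = x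
    · rw [hvx, Hfun_x, Hfun_x]
    · rw [Hfun_succ x t t' v (n+1), Hfun_succ x t t' v n, if_neg hvx, if_neg hvx]
      by_cases hp : par T x v = x
      · rw [if_pos hp, if_pos hp]
      · rw [if_neg hp, if_neg hp]
        have hps := par_spec hconn hacyc (x := x) hvx
        rw [ih (par T x v) (by omega)]

include hconn hacyc in
lemma hAut_eq_Hfun (x t t' : V) : ∀ n v, T.dist x v ≤ n →
    hAut T x t t' v = Hfun T x t t' n v := by
  intro n
  induction n with
  | zero =>
    intro v hv
    rw [hAut]
    congr 1
    omega
  | succ n ih =>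
    intro v hv
    rcases Nat.lt_or_ge (T.dist x v) (n+1) with h | h
    · rw [ih v (by omega), Hfun_stable hconn hacyc x t t' n v (by omega)]
    · rw [hAut]
      congr 1
      omega

lemma hAut_x (x t t' : V) : hAut T x t t' x = x := by
  rw [hAut, Hfun_x]

include hconn in
lemma hAut_step1 (x t t' : V) {v : V} (hv : v ≠ x) (hp : par T x v = x) :
    hAut T x t t' v = Equiv.swap (spineA T x t' 1) (spineA T x t 1) v := by
  have hd : T.dist x v ≠ 0 := (dist_ne_zero_iff hconn).mpr hv
  obtain ⟨m, hm⟩ : ∃ m, T.dist x v = m + 1 := ⟨T.dist x v - 1, by omega⟩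
  rw [hAut, hm, Hfun_succ, if_neg hv, if_pos hp]

include hconn hacyc in
lemma hAut_step2 (x t t' : V) {v : V} (hv : v ≠ x) (hp : par T x v ≠ x) :
    hAut T x t t' v = sig T x t t' (par T x v) (hAut T x t t' (par T x v)) v := by
  have hd : T.dist x v ≠ 0 := (dist_ne_zero_iff hconn).mpr hv
  obtain ⟨m, hm⟩ : ∃ m, T.dist x v = m + 1 := ⟨T.dist x v - 1, by omega⟩
  have hps := par_spec hconn hacyc (x := x) hv
  rw [hAut, hm, Hfun_succ, if_neg hv, if_neg hp]
  rw [hAut_eq_Hfun hconn hacyc x t t' m (par T x v) (by omega)]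

end Main2

lemma swap_mem_of {s : Set V} {z c u : V} (hz : z ∈ s) (hc : c ∈ s) (hu : u ∈ s) :
    Equiv.swap z c u ∈ s := by
  rw [Equiv.swap_apply_def]
  split_ifs <;> assumption

section Invariants

variable {k : ℕ} (hconn : T.Connected) (hacyc : T.IsAcyclic)
  (hreg : ∀ v : V, Nat.card (T.neighborSet v) = k) (hk : 2 ≤ k)
  {x t t' : V} (hrr : T.dist x t' = T.dist x t) (hr1 : 1 ≤ T.dist x t)

include hconn hacyc hreg hk in
lemma sig_bijOn {w w' : V} (hw : w ≠ x) (hw' : w' ≠ x)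
    (hcond : T.dist x w < T.dist x t → w = spineA T x t' (T.dist x w) →
      spineA T x t' (T.dist x w + 1) ∈ childSet T x w ∧
        spineA T x t (T.dist x w + 1) ∈ childSet T x w') :
    Set.BijOn (sig T x t t' w w') (childSet T x w) (childSet T x w') := by
  have hbm := (baseMap_spec hconn hacyc hreg hk hw hw').1
  by_cases h : T.dist x w < T.dist x t ∧ w = spineA T x t' (T.dist x w)
  · obtain ⟨hz', hc⟩ := hcond h.1 h.2
    have hz : baseMap T x w w' (spineA T x t' (T.dist x w + 1)) ∈ childSet T x w' :=
      hbm.mapsTo hz'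
    have hswap : Set.BijOn
        (Equiv.swap (baseMap T x w w' (spineA T x t' (T.dist x w + 1)))
          (spineA T x t (T.dist x w + 1)) : V → V)
        (childSet T x w') (childSet T x w') := by
      refine ⟨fun u hu => swap_mem_of hz hc hu, (Equiv.injective _).injOn, fun u hu =>
        ⟨Equiv.swap _ _ u, swap_mem_of hz hc hu, Equiv.swap_apply_self _ _ u⟩⟩
    have hfun : sig T x t t' w w' =
        (Equiv.swap (baseMap T x w w' (spineA T x t' (T.dist x w + 1)))
          (spineA T x t (T.dist x w + 1)) : V → V) ∘ baseMap T x w w' := by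
      funext v
      rw [sig, if_pos h]
      rfl
    rw [hfun]
    exact hswap.comp hbm
  · have hfun : sig T x t t' w w' = baseMap T x w w' := by
      funext v
      rw [sig, if_neg h]
    rw [hfun]
    exact hbm

include hconn hacyc hrr hr1 in
lemma main6 : ∀ i, i ≤ T.dist x t → hAut T x t t' (spineA T x t' i) = spineA T x t i := by
  intro i
  induction i with
  | zero =>
    intro _
    rw [spineA_zero hconn hacyc, spineA_zero hconn hacyc, hAut_x]
  | succ i ih =>
    intro hi
    have hi' : i + 1 ≤ T.dist x t' := by omega
    have hvx : spineA T x t' (i+1) ≠ x := spineA_ne_root hconn hacyc (by omega) hi'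
    have hpar : par T x (spineA T x t' (i+1)) = spineA T x t' i := by
      rw [spineA_par (by omega) hi']
      congr 1
    cases Nat.eq_zero_or_pos i with
    | inl h0 =>
      subst h0
      have hpx : par T x (spineA T x t' 1) = x := by
        rw [hpar, spineA_zero hconn hacyc]
      rw [hAut_step1 hconn x t t' hvx hpx]
      exact Equiv.swap_apply_left _ _
    | inr h1 =>
      have hpx : par T x (spineA T x t' (i+1)) ≠ x := by
        rw [hpar]
        exact spineA_ne_root hconn hacyc h1 (by omega)
      rw [hAut_step2 hconn hacyc x t t' hvx hpx, hpar]
      have hdw : T.dist x (spineA T x t' i) = i := spineA_dist hconn hacyc (by omega)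
      rw [ih (by omega)]
      have hcond : T.dist x (spineA T x t' i) < T.dist x t ∧
          spineA T x t' i = spineA T x t' (T.dist x (spineA T x t' i)) := by
        rw [hdw]
        exact ⟨by omega, rfl⟩
      rw [sig, if_pos hcond, hdw]
      exact Equiv.swap_apply_left _ _

include hconn hacyc hreg hk hrr hr1 in
lemma main12 : ∀ n v, T.dist x v = n →
    T.dist x (hAut T x t t' v) = n ∧
      (v ≠ x → hAut T x t t' v ∈ childSet T x (hAut T x t t' (par T x v))) := by
  intro n
  induction n using Nat.strong_induction_on with
  | _ n ih =>
  match n with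
  | 0 =>
    intro v hv
    have hvx : v = x := (hconn.dist_eq_zero_iff.mp hv).symm
    subst hvx
    rw [hAut_x]
    exact ⟨hv, fun h => absurd rfl h⟩
  | (n+1) =>
    intro v hv
    have hvx : v ≠ x := by rw [← dist_ne_zero_iff hconn]; omega
    have hps := par_spec hconn hacyc (x := x) hvx
    have hdw : T.dist x (par T x v) = n := by omega
    have hvmem : v ∈ childSet T x (par T x v) :=
      (mem_childSet_iff hconn hacyc).mpr ⟨rfl, hvx⟩
    by_cases hwx : par T x v = x
    · have ha : spineA T x t' 1 ∈ childSet T x x := by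
        have := spineA_mem_childSet hconn hacyc (x := x) (u := t') (i := 0) (by omega)
        rwa [spineA_zero hconn hacyc] at this
      have hb : spineA T x t 1 ∈ childSet T x x := by
        have := spineA_mem_childSet hconn hacyc (x := x) (u := t) (i := 0) (by omega)
        rwa [spineA_zero hconn hacyc] at this
      have hvmem' : v ∈ childSet T x x := by rwa [hwx] at hvmem
      have hres : hAut T x t t' v ∈ childSet T x x := by
        rw [hAut_step1 hconn x t t' hvx hwx]
        exact swap_mem_of ha hb hvmem'
      have hn0 : n = 0 := by
        rw [hwx, hconn.dist_eq_zero_iff.mpr rfl] at hdw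
        omega
      constructor
      · have := hres.2
        rw [hconn.dist_eq_zero_iff.mpr rfl] at this
        omega
      · intro _
        rw [hwx, hAut_x]
        exact hres
    · have hw2d := (ih n (by omega) (par T x v) hdw).1
      have hw2x : hAut T x t t' (par T x v) ≠ x := by
        rw [← dist_ne_zero_iff hconn, hw2d]
        have := (dist_ne_zero_iff hconn).mpr hwx
        omega
      have hbij : Set.BijOn (sig T x t t' (par T x v) (hAut T x t t' (par T x v)))
          (childSet T x (par T x v)) (childSet T x (hAut T x t t' (par T x v))) := by
        apply sig_bijOn hconn hacyc hreg hk hwx hw2x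
        intro hlt heq
        rw [hdw] at hlt heq ⊢
        constructor
        · have := spineA_mem_childSet hconn hacyc (x := x) (u := t') (i := n) (by omega)
          rwa [← heq] at this
        · have h6 := main6 hconn hacyc hrr hr1 n (by omega)
          rw [← heq] at h6
          rw [h6]
          exact spineA_mem_childSet hconn hacyc (x := x) (u := t) (i := n) (by omega)
      have hstep := hAut_step2 hconn hacyc x t t' hvx hwx
      have hres : hAut T x t t' v ∈ childSet T x (hAut T x t t' (par T x v)) := by
        rw [hstep]
        exact hbij.mapsTo hvmem
      refine ⟨?_, fun _ => hres⟩
      have := hres.2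
      omega

include hconn hacyc hreg hk hrr hr1 in
lemma hAut_sig_bijOn {w : V} (hwx : w ≠ x) :
    Set.BijOn (sig T x t t' w (hAut T x t t' w))
      (childSet T x w) (childSet T x (hAut T x t t' w)) := by
  have hwd := (main12 hconn hacyc hreg hk hrr hr1 (T.dist x w) w rfl).1
  have hw2x : hAut T x t t' w ≠ x := by
    rw [← dist_ne_zero_iff hconn, hwd]
    rw [← dist_ne_zero_iff hconn] at hwx
    omega
  apply sig_bijOn hconn hacyc hreg hk hwx hw2x
  intro hlt heq
  constructor
  · have := spineA_mem_childSet hconn hacyc (x := x) (u := t') (i := T.dist x w) (by omega)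
    rwa [← heq] at this
  · have h6 := main6 hconn hacyc hrr hr1 (T.dist x w) (by omega)
    rw [← heq] at h6
    rw [h6]
    exact spineA_mem_childSet hconn hacyc (x := x) (u := t) (i := T.dist x w) (by omega)

include hconn hacyc hreg hk hrr hr1 in
lemma hAut_level_inj : ∀ n v1 v2, T.dist x v1 = n → T.dist x v2 = n →
    hAut T x t t' v1 = hAut T x t t' v2 → v1 = v2 := by
  intro n
  induction n using Nat.strong_induction_on with
  | _ n ih =>
  match n with
  | 0 =>
    intro v1 v2 h1 h2 _
    rw [← hconn.dist_eq_zero_iff.mp h1, ← hconn.dist_eq_zero_iff.mp h2]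
  | (n+1) =>
    intro v1 v2 h1 h2 heq
    have hvx1 : v1 ≠ x := by rw [← dist_ne_zero_iff hconn]; omega
    have hvx2 : v2 ≠ x := by rw [← dist_ne_zero_iff hconn]; omega
    have hm1 := (main12 hconn hacyc hreg hk hrr hr1 (n+1) v1 h1).2 hvx1
    have hm2 := (main12 hconn hacyc hreg hk hrr hr1 (n+1) v2 h2).2 hvx2
    have hp1 := (mem_childSet_iff hconn hacyc).mp hm1
    have hp2 := (mem_childSet_iff hconn hacyc).mp hm2
    have hps1 := par_spec hconn hacyc (x := x) hvx1
    have hps2 := par_spec hconn hacyc (x := x) hvx2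
    have hpw : hAut T x t t' (par T x v1) = hAut T x t t' (par T x v2) := by
      rw [← hp1.1, ← hp2.1, heq]
    have hweq : par T x v1 = par T x v2 :=
      ih n (by omega) _ _ (by omega) (by omega) hpw
    have hmem1 : v1 ∈ childSet T x (par T x v1) :=
      (mem_childSet_iff hconn hacyc).mpr ⟨rfl, hvx1⟩
    have hmem2 : v2 ∈ childSet T x (par T x v1) := by
      rw [hweq]
      exact (mem_childSet_iff hconn hacyc).mpr ⟨rfl, hvx2⟩
    by_cases hwx : par T x v1 = x
    · rw [hAut_step1 hconn x t t' hvx1 hwx,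
        hAut_step1 hconn x t t' hvx2 (hweq ▸ hwx)] at heq
      exact Equiv.injective _ heq
    · rw [hAut_step2 hconn hacyc x t t' hvx1 hwx,
        hAut_step2 hconn hacyc x t t' hvx2 (hweq ▸ hwx), ← hweq] at heq
      exact (hAut_sig_bijOn hconn hacyc hreg hk hrr hr1 hwx).injOn hmem1 hmem2 heq

include hconn hacyc hreg hk hrr hr1 in
lemma hAut_level_surj : ∀ n u, T.dist x u = n → ∃ v, hAut T x t t' v = u := by
  intro n
  induction n using Nat.strong_induction_on with
  | _ n ih =>
  match n with
  | 0 =>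
    intro u hu
    refine ⟨x, ?_⟩
    rw [hAut_x, hconn.dist_eq_zero_iff.mp hu]
  | (n+1) =>
    intro u hu
    have hux : u ≠ x := by rw [← dist_ne_zero_iff hconn]; omega
    have hps := par_spec hconn hacyc (x := x) hux
    have hdw : T.dist x (par T x u) = n := by omega
    obtain ⟨w, hw⟩ := ih n (by omega) (par T x u) hdw
    have hwd : T.dist x w = n := by
      have := (main12 hconn hacyc hreg hk hrr hr1 (T.dist x w) w rfl).1
      rw [hw] at this
      omega
    by_cases hn0 : n = 0
    · subst hn0
      have hwx : par T x u = x := (hconn.dist_eq_zero_iff.mp hdw).symm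
      have ha : spineA T x t' 1 ∈ childSet T x x := by
        have := spineA_mem_childSet hconn hacyc (x := x) (u := t') (i := 0) (by omega)
        rwa [spineA_zero hconn hacyc] at this
      have hb : spineA T x t 1 ∈ childSet T x x := by
        have := spineA_mem_childSet hconn hacyc (x := x) (u := t) (i := 0) (by omega)
        rwa [spineA_zero hconn hacyc] at this
      have humem : u ∈ childSet T x x := (mem_childSet_iff hconn hacyc).mpr ⟨hwx, hux⟩
      set v := Equiv.swap (spineA T x t' 1) (spineA T x t 1) u with hvdef
      have hvmem : v ∈ childSet T x x := swap_mem_of ha hb humem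
      have hvp := (mem_childSet_iff hconn hacyc).mp hvmem
      refine ⟨v, ?_⟩
      rw [hAut_step1 hconn x t t' hvp.2 hvp.1, hvdef, Equiv.swap_apply_self]
    · have hwx : w ≠ x := by rw [← dist_ne_zero_iff hconn]; omega
      have humem : u ∈ childSet T x (hAut T x t t' w) := by
        rw [hw]
        exact (mem_childSet_iff hconn hacyc).mpr ⟨rfl, hux⟩
      obtain ⟨v, hvmem, hv⟩ :=
        (hAut_sig_bijOn hconn hacyc hreg hk hrr hr1 hwx).surjOn humem
      have hvp := (mem_childSet_iff hconn hacyc).mp hvmem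
      refine ⟨v, ?_⟩
      rw [hAut_step2 hconn hacyc x t t' hvp.2 (hvp.1 ▸ hwx), hvp.1]
      exact hv

include hconn hacyc hreg hk hrr hr1 in
lemma hAut_adj_forward {u v : V} (h : T.Adj u v)
    (hc : T.dist x v = T.dist x u + 1) :
    T.Adj (hAut T x t t' u) (hAut T x t t' v) := by
  have hvx : v ≠ x := by rw [← dist_ne_zero_iff hconn]; omega
  have hpv : par T x v = u := par_eq_of hconn hacyc h (by omega)
  have hm := (main12 hconn hacyc hreg hk hrr hr1 (T.dist x v) v rfl).2 hvx
  rw [hpv] at hm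
  exact hm.1

include hconn hacyc hreg hk hrr hr1 in
lemma exists_iso : ∃ φ : T ≃g T, ∀ v, φ v = hAut T x t t' v := by
  have hd : ∀ v, T.dist x (hAut T x t t' v) = T.dist x v := fun v =>
    (main12 hconn hacyc hreg hk hrr hr1 (T.dist x v) v rfl).1
  have hinj : Function.Injective (hAut T x t t') := by
    intro v1 v2 heq
    have h2 : T.dist x v2 = T.dist x v1 := by
      have e1 := hd v1; have e2 := hd v2
      rw [heq] at e1
      omega
    exact hAut_level_inj hconn hacyc hreg hk hrr hr1 (T.dist x v1) v1 v2 rfl h2 heq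
  have hsurj : Function.Surjective (hAut T x t t') := fun u =>
    hAut_level_surj hconn hacyc hreg hk hrr hr1 (T.dist x u) u rfl
  set e := Equiv.ofBijective _ ⟨hinj, hsurj⟩ with hedef
  have hee : ∀ v, e v = hAut T x t t' v := fun v => rfl
  have hadj : ∀ {u v : V}, T.Adj u v → T.Adj (hAut T x t t' u) (hAut T x t t' v) := by
    intro u v h
    rcases adj_dist_cases hconn hacyc x h with hc | hc
    · exact hAut_adj_forward hconn hacyc hreg hk hrr hr1 h hc
    · exact (hAut_adj_forward hconn hacyc hreg hk hrr hr1 h.symm hc).symm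
  refine ⟨⟨e, ?_⟩, hee⟩
  intro u v
  simp only [hee]
  constructor
  · intro h
    -- reverse direction
    have key : ∀ {a c : V}, T.Adj (hAut T x t t' a) (hAut T x t t' c) →
        T.dist x (hAut T x t t' c) = T.dist x (hAut T x t t' a) + 1 → T.Adj a c := by
      intro a c hh hcc
      have hcx : c ≠ x := by
        rw [← dist_ne_zero_iff hconn]
        have := hd c; have := hd a
        omega
      have hm := (main12 hconn hacyc hreg hk hrr hr1 (T.dist x c) c rfl).2 hcx
      have hp1 := (mem_childSet_iff hconn hacyc).mp hm
      have hpv : par T x (hAut T x t t' c) = hAut T x t t' a :=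
        par_eq_of hconn hacyc hh (by omega)
      rw [hp1.1] at hpv
      have := hinj hpv
      rw [← this]
      exact (par_spec hconn hacyc (x := x) hcx).1
    rcases adj_dist_cases hconn hacyc x h with hc | hc
    · exact key h hc
    · exact (key h.symm hc).symm
  · exact hadj

include hconn hacyc hrr hr1 in
lemma hAut_t'_eq : hAut T x t t' t' = t := by
  have h6 := main6 hconn hacyc hrr hr1 (T.dist x t) le_rfl
  rw [spineA_last] at h6
  have : spineA T x t' (T.dist x t) = t' := by
    rw [← hrr]
    exact spineA_last
  rwa [this] at h6

include hconn hacyc hreg hk hrr hr1 in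
lemma main5 : ∀ n v, T.dist x v = n → v ≠ x →
    (par T x)^[T.dist x v - 1] v ≠ spineA T x t' 1 →
    (par T x)^[T.dist x v - 1] v ≠ spineA T x t 1 →
    hAut T x t t' v = v := by
  intro n
  induction n using Nat.strong_induction_on with
  | _ n ih =>
  match n with
  | 0 =>
    intro v hv hvx _ _
    exact absurd ((hconn.dist_eq_zero_iff.mp hv).symm) hvx
  | (n+1) =>
    intro v hv hvx hna hnb
    have hps := par_spec hconn hacyc (x := x) hvx
    have hdw : T.dist x (par T x v) = n := by omega
    by_cases hwx : par T x v = x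
    · have hn0 : n = 0 := by
        rw [hwx, hconn.dist_eq_zero_iff.mpr rfl] at hdw
        omega
      rw [hv, hn0] at hna hnb
      simp only [Nat.sub_self, Function.iterate_zero_apply] at hna hnb
      rw [hAut_step1 hconn x t t' hvx hwx]
      exact Equiv.swap_apply_of_ne_of_ne hna hnb
    · have hn1 : 1 ≤ n := by
        have := (dist_ne_zero_iff hconn).mpr hwx
        omega
      have hiter : (par T x)^[n - 1] (par T x v) = (par T x)^[T.dist x v - 1] v := by
        rw [← Function.iterate_succ_apply]
        congr 1
        omega
      have hw : hAut T x t t' (par T x v) = par T x v := by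
        apply ih n (by omega) (par T x v) hdw hwx
        · rw [hdw, hiter]
          exact hna
        · rw [hdw, hiter]
          exact hnb
      rw [hAut_step2 hconn hacyc x t t' hvx hwx, hw]
      have hcondF : ¬(T.dist x (par T x v) < T.dist x t ∧
          par T x v = spineA T x t' (T.dist x (par T x v))) := by
        rintro ⟨hlt, heq⟩
        apply hna
        rw [← hiter]
        conv_lhs => rw [heq, hdw]
        exact spineA_branch hn1 (by omega)
      rw [sig, if_neg hcondF]
      rw [(baseMap_spec hconn hacyc hreg hk hwx hwx).2 rfl]
      rfl

include hconn hacyc hreg hk hrr hr1 in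
lemma hAut_fix {v : V} (h1 : T.dist x v + T.dist x t ≤ T.dist v t)
    (h2 : T.dist x v + T.dist x t' ≤ T.dist v t') :
    hAut T x t t' v = v := by
  by_cases hvx : v = x
  · rw [hvx, hAut_x]
  · have hm1 : 1 ≤ T.dist x v := by
      have := (dist_ne_zero_iff hconn).mpr hvx
      omega
    have key : ∀ u : V, 1 ≤ T.dist x u → T.dist x v + T.dist x u ≤ T.dist v u →
        (par T x)^[T.dist x v - 1] v ≠ (par T x)^[T.dist x u - 1] u := by
      intro u hu1 hu2 heq
      have e1 : T.dist ((par T x)^[T.dist x v - 1] v) v = T.dist x v - 1 :=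
        parIter_dist_self hconn hacyc x _ v (by omega)
      have e2 : T.dist ((par T x)^[T.dist x u - 1] u) u = T.dist x u - 1 :=
        parIter_dist_self hconn hacyc x _ u (by omega)
      rw [heq] at e1
      have htri : T.dist v u ≤ T.dist v ((par T x)^[T.dist x u - 1] u) +
          T.dist ((par T x)^[T.dist x u - 1] u) u := hconn.dist_triangle
      have hcm : T.dist v ((par T x)^[T.dist x u - 1] u) =
          T.dist ((par T x)^[T.dist x u - 1] u) v := SimpleGraph.dist_comm
      rw [hcm, e1, e2] at htri
      omega
    apply main5 hconn hacyc hreg hk hrr hr1 (T.dist x v) v rfl hvx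
    · rw [spineA]
      exact key t' (by omega) h2
    · rw [spineA]
      exact key t (by omega) h1

end Invariants

/-! ### the bi-infinite path is a geodesic -/

lemma p_dist (hconn : T.Connected) (hacyc : T.IsAcyclic) {p : ℤ → V}
    (hadj : ∀ n : ℤ, T.Adj (p n) (p (n + 1)))
    (hpinj : ∀ n : ℤ, p n ≠ p (n + 2)) :
    ∀ (n : ℕ) (i : ℤ), T.dist (p i) (p (i + n)) = n := by
  have key : ∀ (n : ℕ) (i : ℤ), T.dist (p i) (p (i + n)) = n ∧
      T.dist (p i) (p (i + n + 1)) = n + 1 := by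
    intro n
    induction n with
    | zero =>
      intro i
      constructor
      · have : i + (0:ℕ) = i := by push_cast; ring
        rw [this, hconn.dist_eq_zero_iff.mpr rfl]
      · have : i + (0:ℕ) + 1 = i + 1 := by push_cast; ring
        rw [this]
        exact adj_dist_eq_one hconn (hadj i)
    | succ n ih =>
      intro i
      have h1 := (ih i).1
      have h2 := (ih i).2
      have e1 : i + (n+1:ℕ) = i + n + 1 := by push_cast; ring
      refine ⟨by rw [e1]; exact h2, ?_⟩
      rw [e1]
      -- goal : T.dist (p i) (p (i + n + 1 + 1)) = n + 1 + 1
      have hadj2 : T.Adj (p (i + n + 1)) (p (i + n + 1 + 1)) := hadj _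
      rcases adj_dist_cases hconn hacyc (p i) hadj2 with hc | hc
      · rw [hc, h2]
      · exfalso
        have hvx : p (i + n + 1) ≠ p i := by
          intro hh
          rw [← hh, hconn.dist_eq_zero_iff.mpr rfl] at h2
          omega
        obtain ⟨u0, hu0, huniq⟩ := parent_exists_unique hconn hacyc (p i) hvx
        have hq1 : p (i + n) = u0 := huniq _ ⟨by
            have : (i + n) + 1 = i + n + 1 := rfl
            exact hadj (i + n), by omega⟩
        have hq2 : p (i + n + 1 + 1) = u0 := huniq _ ⟨hadj2.symm, by omega⟩
        apply hpinj (i + n)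
        rw [hq1, ← hq2]
        congr 1
        ring
  intro n i
  exact (key n i).1

/-- graph isomorphisms preserve distances. -/
lemma iso_dist (hconn : T.Connected) (φ : T ≃g T) (u v : V) :
    T.dist (φ u) (φ v) = T.dist u v := by
  have key : ∀ (ψ : T ≃g T) (a c : V), T.dist (ψ a) (ψ c) ≤ T.dist a c := by
    intro ψ a c
    obtain ⟨W, hW⟩ := hconn.exists_walk_length_eq_dist a c
    calc T.dist (ψ a) (ψ c) ≤ (W.map ψ.toHom).length := SimpleGraph.dist_le _
    _ = W.length := Walk.length_map _ W
    _ = _ := hW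
  refine le_antisymm (key φ u v) ?_
  have h2 := key φ.symm (φ u) (φ v)
  simpa using h2

end BuseAux


/-- On the `k`-regular tree, the set `Y` of configurations
that are constant on the level sets of the Busemann function `b` of a
bi-infinite injective path is invariant under every cellular automaton for the
full automorphism group action. -/
theorem busemann_levels_invariant
    {V A : Type*} [Finite A] [TopologicalSpace A] [DiscreteTopology A]
    (k : ℕ) (hk : 2 ≤ k)
    (T : SimpleGraph V) (hconn : T.Connected) (hacyc : T.IsAcyclic)
    (hreg : ∀ v : V, Nat.card (T.neighborSet v) = k)
    (p : ℤ → V)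
    (hadj : ∀ n : ℤ, T.Adj (p n) (p (n + 1)))
    (hpinj : ∀ n : ℤ, p n ≠ p (n + 2))
    (b : V → ℤ)
    (hb : ∀ t : V, ∀ᶠ n : ℕ in atTop, (T.dist (p (-(n : ℤ))) t : ℤ) - (n : ℤ) = b t)
    (f : (V → A) → (V → A)) (hf : Continuous f)
    (hcomm : ∀ (g : T ≃g T) (x : V → A),
      f (fun t => x (g.symm t)) = fun t => f x (g.symm t)) :
    ∀ y : V → A, (∀ t t' : V, b t = b t' → y t = y t') →
      ∀ t t' : V, b t = b t' → f y t = f y t' := by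
  classical
  intro y hy t₀ t₀' hbt
  obtain ⟨N, hN⟩ := Filter.eventually_atTop.mp ((hb t₀).and (hb t₀'))
  set x := p (-(N:ℤ)) with hxdef
  have hNt : (T.dist x t₀ : ℤ) - N = b t₀ := (hN N le_rfl).1
  have hNt' : (T.dist x t₀' : ℤ) - N = b t₀' := (hN N le_rfl).2
  have hrr : T.dist x t₀' = T.dist x t₀ := by
    have h0 : (T.dist x t₀' : ℤ) = (T.dist x t₀ : ℤ) := by
      rw [hbt] at hNt
      omega
    exact_mod_cast h0
  by_cases hr0 : T.dist x t₀ = 0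
  · have h1 : x = t₀ := hconn.dist_eq_zero_iff.mp hr0
    have h2 : x = t₀' := hconn.dist_eq_zero_iff.mp (by rw [hrr]; exact hr0)
    rw [← h1, ← h2]
  · have hr1 : 1 ≤ T.dist x t₀ := by omega
    obtain ⟨φ, hφ⟩ := BuseAux.exists_iso hconn hacyc hreg hk hrr hr1
    have hfixroot : ∀ n : ℕ, N ≤ n → φ (p (-(n:ℤ))) = p (-(n:ℤ)) := by
      intro n hn
      rcases eq_or_lt_of_le hn with he | hlt
      · have : p (-(n:ℤ)) = x := by rw [hxdef, ← he]
        rw [this, hφ, BuseAux.hAut_x]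
      · have hdxv : T.dist x (p (-(n:ℤ))) = n - N := by
          have hpd := BuseAux.p_dist hconn hacyc hadj hpinj (n - N) (-(n:ℤ))
          have harg : (-(n:ℤ) + ((n - N : ℕ) : ℤ)) = -(N:ℤ) := by omega
          rw [harg] at hpd
          rw [hxdef, SimpleGraph.dist_comm]
          exact hpd
        have hdxvz : (T.dist x (p (-(n:ℤ))) : ℤ) = (n:ℤ) - N := by
          rw [hdxv]; omega
        have hd1 := (hN n (le_of_lt hlt)).1
        have hd2 := (hN n (le_of_lt hlt)).2
        have hcond1 : T.dist x (p (-(n:ℤ))) + T.dist x t₀ ≤ T.dist (p (-(n:ℤ))) t₀ := by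
          omega
        have hcond2 : T.dist x (p (-(n:ℤ))) + T.dist x t₀' ≤ T.dist (p (-(n:ℤ))) t₀' := by
          omega
        rw [hφ]
        exact BuseAux.hAut_fix hconn hacyc hreg hk hrr hr1 hcond1 hcond2
    have hbpres : ∀ s, b (φ s) = b s := by
      intro s
      obtain ⟨M1, hM1⟩ := Filter.eventually_atTop.mp (hb s)
      obtain ⟨M2, hM2⟩ := Filter.eventually_atTop.mp (hb (φ s))
      set n := max N (max M1 M2) with hndef
      have h1 := hM1 n (by omega)
      have h2 := hM2 n (by omega)
      have h3 : T.dist (p (-(n:ℤ))) (φ s) = T.dist (p (-(n:ℤ))) s := by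
        conv_lhs => rw [← hfixroot n (by omega)]
        exact BuseAux.iso_dist hconn φ _ _
      omega
    have hyφ : (fun s => y (φ s)) = y := funext fun s => hy (φ s) s (hbpres s)
    have hcm := hcomm φ.symm y
    have hss : ∀ s, φ.symm.symm s = φ s := fun s => rfl
    simp only [hss] at hcm
    rw [hyφ] at hcm
    have hev := congrFun hcm t₀'
    have hmap : φ t₀' = t₀ := by
      rw [hφ]
      exact BuseAux.hAut_t'_eq hconn hacyc hrr hr1
    rw [hmap] at hev
    exact hev.symm
end

section
/- Let k ≥ 2, let T be the k-regular tree with vertex set V, let p : ℤ → V be a bi-infinite injective path with Busemann function b, and let A be a finite alphabet. Define φ : A^ℤ → A^V by φ(x)_t = x_{b(t)}; then φ is a homeomorphism onto the set Y of configurations constant on Busemann levels, with φ⁻¹(y)_i = y_{p(i)}. For any cellular automaton f : A^V → A^V on Aut(T) ↷ V, the map f̄ = φ⁻¹ ∘ f ∘ φ : A^ℤ → A^ℤ is well defined, continuous, and commutes with the shift σ (σ(x)_i = x_{i+1}); moreover, if f is asymptotically nilpotent toward 0^V then f̄ is asymptotically nilpotent toward 0^ℤ. -/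
open Filter

section BusemannAux
open Filter SimpleGraph

variable {V : Type*} {T : SimpleGraph V} {p : ℤ → V} {b : V → ℤ}

/-- The walk along `p` from `p m` to `p (m + N)`. -/
def pwalk (hadj : ∀ n : ℤ, T.Adj (p n) (p (n + 1))) (m : ℤ) : (N : ℕ) → T.Walk (p m) (p (m + N))
  | 0 => Walk.nil.copy rfl (congrArg p (by push_cast; ring))
  | (N+1) => ((pwalk hadj m N).concat (hadj (m + N))).copy rfl (congrArg p (by push_cast; ring))

lemma pwalk_length (hadj : ∀ n : ℤ, T.Adj (p n) (p (n + 1))) (m : ℤ) (N : ℕ) :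
    (pwalk hadj m N).length = N := by
  induction N with
  | zero => simp [pwalk]
  | succ N ih => simp [pwalk, Walk.length_concat, ih]

lemma pwalk_support (hadj : ∀ n : ℤ, T.Adj (p n) (p (n + 1))) (m : ℤ) (N : ℕ) :
    (pwalk hadj m N).support = (List.range (N+1)).map (fun j : ℕ => p (m + (j:ℤ))) := by
  induction N with
  | zero => rw [List.range_succ]; simp [pwalk]
  | succ N ih =>
      rw [pwalk, Walk.support_copy, Walk.support_concat, ih, List.range_succ (n := N + 1)]
      simp only [List.map_append, List.map_cons, List.map_nil, List.concat_eq_append]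
      congr 2
      push_cast; ring_nf

lemma pwalk_edges (hadj : ∀ n : ℤ, T.Adj (p n) (p (n + 1))) (m : ℤ) (N : ℕ) :
    (pwalk hadj m N).edges
       = (List.range N).map (fun j : ℕ => s(p (m + (j:ℤ)), p (m + (j:ℤ) + 1))) := by
  induction N with
  | zero => simp [pwalk]
  | succ N ih =>
      rw [pwalk, Walk.edges_copy, Walk.edges_concat, ih, List.range_succ (n := N)]
      simp only [List.map_append, List.map_cons, List.map_nil, List.concat_eq_append]

theorem p_inj (hacyc : T.IsAcyclic)
    (hadj : ∀ n : ℤ, T.Adj (p n) (p (n + 1)))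
    (hpinj : ∀ n : ℤ, p n ≠ p (n + 2)) : Function.Injective p := by
  classical
  by_contra hni
  have hS : ∃ d : ℕ, 0 < d ∧ ∃ a : ℤ, p a = p (a + d) := by
    simp only [Function.Injective, not_forall] at hni
    obtain ⟨a, b, hab, hne⟩ := hni
    rcases lt_or_gt_of_ne hne with h | h
    · exact ⟨(b - a).toNat, by omega, a, by rw [show a + ((b - a).toNat : ℤ) = b by omega]; exact hab⟩
    · exact ⟨(a - b).toNat, by omega, b, by rw [show b + ((a - b).toNat : ℤ) = a by omega]; exact hab.symm⟩
  obtain ⟨hd₀pos, a, ha⟩ := Nat.find_spec hS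
  set d₀ := Nat.find hS with hd₀
  clear_value d₀
  have hmin : ∀ (x y : ℤ), x < y → y - x < (d₀ : ℤ) → p x ≠ p y := by
    intro x y hxy hlt heq
    have : ((y - x).toNat) < d₀ := by omega
    exact Nat.find_min hS (hd₀ ▸ this) ⟨by omega, x, by rw [show x + ((y - x).toNat : ℤ) = y by omega]; exact heq⟩
  -- d₀ = 1 impossible
  have h1 : d₀ ≠ 1 := by
    intro h
    rw [h] at ha
    exact (hadj a).ne (by simpa using ha)
  have h2 : d₀ ≠ 2 := by
    intro h
    rw [h] at ha
    exact hpinj a (by simpa using ha)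
  have h3 : 3 ≤ d₀ := by omega
  -- build the cycle
  have hend : (a + 1) + ((d₀ - 1 : ℕ) : ℤ) = a + (d₀ : ℤ) := by
    have : ((d₀ - 1 : ℕ) : ℤ) = (d₀ : ℤ) - 1 := by omega
    omega
  have hcopy : p ((a + 1) + ((d₀ - 1 : ℕ) : ℤ)) = p a := by rw [hend]; exact ha.symm
  set w' : T.Walk (p (a + 1)) (p a) := (pwalk hadj (a+1) (d₀ - 1)).copy rfl hcopy with hw'
  have hw'path : w'.IsPath := by
    rw [Walk.isPath_def, hw', Walk.support_copy, pwalk_support]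
    rw [List.nodup_map_iff_inj_on List.nodup_range]
    intro i hi j hj hij
    simp only [List.mem_range] at hi hj
    by_contra hne
    rcases Nat.lt_or_ge i j with h | h
    · exact hmin (a + 1 + i) (a + 1 + j) (by omega) (by omega) hij
    · have : j < i := by omega
      exact hmin (a + 1 + j) (a + 1 + i) (by omega) (by omega) hij.symm
  have hedge : s(p a, p (a + 1)) ∉ w'.edges := by
    rw [hw', Walk.edges_copy, pwalk_edges]
    intro hmem
    simp only [List.mem_map, List.mem_range] at hmem
    obtain ⟨j, hj, hs⟩ := hmem
    rw [Sym2.eq_iff] at hs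
    rcases hs with ⟨hx, hy⟩ | ⟨hx, hy⟩
    · exact hmin a (a + 1 + j) (by omega) (by omega) hx.symm
    · rcases Nat.lt_or_ge (j + 2) d₀ with h | h
      · exact hmin a (a + 1 + j + 1) (by omega) (by omega) hy.symm
      · have hj' : j = d₀ - 2 := by omega
        exact hmin (a + 1) (a + 1 + j) (by omega) (by omega) hx.symm
  have hcyc : (Walk.cons (hadj a) w').IsCycle :=
    (Walk.cons_isCycle_iff w' (hadj a)).mpr ⟨hw'path, hedge⟩
  exact hacyc _ hcyc

theorem path_length_eq_dist (hconn : T.Connected) (hacyc : T.IsAcyclic)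
    {u v : V} (w : T.Walk u v) (hw : w.IsPath) : w.length = T.dist u v := by
  obtain ⟨w₀, h₀, hlen⟩ := hconn.exists_path_of_dist u v
  have h := congrArg (fun q : T.Path u v => q.1.length) (hacyc.path_unique ⟨w, hw⟩ ⟨w₀, h₀⟩)
  simpa [hlen] using h

theorem dist_p (hconn : T.Connected) (hacyc : T.IsAcyclic)
    (hadj : ∀ n : ℤ, T.Adj (p n) (p (n + 1)))
    (hpinj : ∀ n : ℤ, p n ≠ p (n + 2)) (m : ℤ) (N : ℕ) :
    T.dist (p m) (p (m + N)) = N := by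
  have hpath : (pwalk hadj m N).IsPath := by
    rw [Walk.isPath_def, pwalk_support]
    exact (List.nodup_range).map ((p_inj hacyc hadj hpinj).comp (fun i j h => by omega))
  rw [← path_length_eq_dist hconn hacyc _ hpath, pwalk_length]

/-- distance between two points of the path, ℤ version -/
theorem dist_p' (hconn : T.Connected) (hacyc : T.IsAcyclic)
    (hadj : ∀ n : ℤ, T.Adj (p n) (p (n + 1)))
    (hpinj : ∀ n : ℤ, p n ≠ p (n + 2)) {m n : ℤ} (h : m ≤ n) :
    (T.dist (p m) (p n) : ℤ) = n - m := by
  have := dist_p hconn hacyc hadj hpinj m (n - m).toNat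
  rw [show m + ((n - m).toNat : ℤ) = n by omega] at this
  rw [this]; omega

lemma stab (hb : ∀ t : V, ∀ᶠ n : ℕ in atTop, (T.dist (p (-(n : ℤ))) t : ℤ) - (n : ℤ) = b t)
    (t : V) : ∃ N : ℤ, 0 ≤ N ∧ ∀ n : ℤ, N ≤ n → (T.dist (p (-n)) t : ℤ) = n + b t := by
  obtain ⟨N, hN⟩ := (eventually_atTop).mp (hb t)
  refine ⟨N, Int.ofNat_nonneg N, fun n hn => ?_⟩
  have h0 : (0:ℤ) ≤ n := le_trans (Int.ofNat_nonneg N) hn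
  have := hN n.toNat (by omega)
  rw [show (-(n.toNat : ℤ)) = -n by omega] at this
  omega

lemma dist_mid (hconn : T.Connected) {x y z u : V}
    (hxyz : T.dist x z = T.dist x y + T.dist y z)
    (hu : T.dist y u + T.dist u z = T.dist y z) :
    T.dist x u = T.dist x y + T.dist y u := by
  have t1 := hconn.dist_triangle (u := x) (v := y) (w := u)
  have t2 := hconn.dist_triangle (u := x) (v := u) (w := z)
  omega

lemma adj_dist_pm (hconn : T.Connected) (hacyc : T.IsAcyclic) {x x' : V} (h : T.Adj x x')
    (y : V) : T.dist y x' = T.dist y x + 1 ∨ T.dist y x = T.dist y x' + 1 := by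
  classical
  obtain ⟨P, hP, hPlen⟩ := hconn.exists_path_of_dist y x
  by_cases hx' : x' ∈ P.support
  · right
    have hlen : (P.takeUntil x' hx').length + (P.dropUntil x' hx').length = T.dist y x := by
      rw [← hPlen, ← Walk.length_append, P.take_spec hx']
    have h1 : T.dist y x' ≤ (P.takeUntil x' hx').length := dist_le _
    have h2 : T.dist x' x ≤ (P.dropUntil x' hx').length := dist_le _
    have h3 : T.dist y x ≤ T.dist y x' + T.dist x' x := hconn.dist_triangle
    have h4 : T.dist x' x = 1 := by rw [dist_eq_one_iff_adj]; exact h.symm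
    omega
  · left
    have hrev : (P.concat h).reverse.IsPath := by
      rw [Walk.reverse_concat]
      exact (Walk.cons_isPath_iff _ _).mpr ⟨hP.reverse, by
        simpa [Walk.support_reverse] using hx'⟩
    have hQ : (P.concat h).IsPath := by
      have := hrev.reverse; rwa [Walk.reverse_reverse] at this
    rw [← path_length_eq_dist hconn hacyc _ hQ, Walk.length_concat, hPlen]

lemma b_p (hconn : T.Connected) (hacyc : T.IsAcyclic)
    (hadj : ∀ n : ℤ, T.Adj (p n) (p (n + 1)))
    (hpinj : ∀ n : ℤ, p n ≠ p (n + 2))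
    (hb : ∀ t : V, ∀ᶠ n : ℕ in atTop, (T.dist (p (-(n : ℤ))) t : ℤ) - (n : ℤ) = b t)
    (i : ℤ) : b (p i) = i := by
  obtain ⟨N, hN0, hN⟩ := stab hb (p i)
  set n : ℤ := max N (-i) with hn
  have h1 := hN n (le_max_left _ _)
  have h2 : (T.dist (p (-n)) (p i) : ℤ) = i - (-n) := dist_p' hconn hacyc hadj hpinj (by omega)
  omega

lemma parent_spec (hconn : T.Connected) (hacyc : T.IsAcyclic)
    (hadj : ∀ n : ℤ, T.Adj (p n) (p (n + 1)))
    (hpinj : ∀ n : ℤ, p n ≠ p (n + 2))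
    (hb : ∀ t : V, ∀ᶠ n : ℕ in atTop, (T.dist (p (-(n : ℤ))) t : ℤ) - (n : ℤ) = b t)
    (s : V) (N : ℤ) (hN0 : 0 ≤ N)
    (hreg : ∀ n : ℤ, N ≤ n → (T.dist (p (-n)) s : ℤ) = n + b s) (hN1 : 1 ≤ N + b s) :
    ∃ u, T.Adj u s ∧ b u = b s - 1 ∧
      ∀ n : ℤ, N ≤ n → (T.dist (p (-n)) u : ℤ) = n + b s - 1 := by
  have hds : (T.dist (p (-N)) s : ℤ) = N + b s := hreg N le_rfl
  obtain ⟨w, hwlen⟩ := (hconn (p (-N)) s).exists_walk_length_eq_dist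
  have hrevnil : ¬ w.reverse.Nil := by
    rw [Walk.nil_iff_length_eq, Walk.length_reverse, hwlen]
    omega
  set u := w.reverse.getVert 1 with hu
  have hadjsu : T.Adj s u := w.reverse.adj_snd hrevnil
  have htail : (w.reverse.tail).length + 1 = w.reverse.length := Walk.length_tail_add_one hrevnil
  have hle : T.dist u (p (-N)) ≤ w.reverse.tail.length := dist_le _
  have hdist1 : T.dist u s = 1 := by rw [dist_eq_one_iff_adj]; exact hadjsu.symm
  have htri : T.dist (p (-N)) s ≤ T.dist (p (-N)) u + T.dist u s := hconn.dist_triangle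
  have hNu : (T.dist (p (-N)) u : ℤ) = N + b s - 1 := by
    rw [SimpleGraph.dist_comm] at hle
    rw [Walk.length_reverse, hwlen] at htail
    omega
  have hmain : ∀ n : ℤ, N ≤ n → (T.dist (p (-n)) u : ℤ) = n + b s - 1 := by
    intro n hn
    have hxy : (T.dist (p (-n)) (p (-N)) : ℤ) = N - n + n - N + (n - N) := by
      rw [dist_p' hconn hacyc hadj hpinj (by omega)]; ring
    have hxyz : T.dist (p (-n)) s = T.dist (p (-n)) (p (-N)) + T.dist (p (-N)) s := by
      have := hreg n hn
      omega
    have hmid := dist_mid (u := u) hconn hxyz (by omega)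
    omega
  exact ⟨u, hadjsu.symm, by
    obtain ⟨M, hM0, hM⟩ := stab hb u
    have h1 := hM (max N M) (le_max_right _ _)
    have h2 := hmain (max N M) (le_max_left _ _)
    omega, hmain⟩

lemma parent_unique (hconn : T.Connected) (hacyc : T.IsAcyclic)
    (hadj : ∀ n : ℤ, T.Adj (p n) (p (n + 1)))
    (hpinj : ∀ n : ℤ, p n ≠ p (n + 2))
    (hb : ∀ t : V, ∀ᶠ n : ℕ in atTop, (T.dist (p (-(n : ℤ))) t : ℤ) - (n : ℤ) = b t)
    (s : V) {u u' : V} (h1 : T.Adj u s) (hb1 : b u = b s - 1)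
    (h2 : T.Adj u' s) (hb2 : b u' = b s - 1) : u = u' := by
  classical
  obtain ⟨N1, hN10, hr1⟩ := stab hb s
  obtain ⟨N2, hN20, hr2⟩ := stab hb u
  obtain ⟨N3, hN30, hr3⟩ := stab hb u'
  set n : ℤ := max (max N1 N2) (max N3 (1 - b s)) with hn
  have hds := hr1 n (by omega)
  have hdu := hr2 n (by omega)
  have hdu' := hr3 n (by omega)
  have hbs : 1 ≤ n + b s := by omega
  -- distances of u, u' to p(-n) are both n + b s - 1
  have hduv : (T.dist (p (-n)) u : ℤ) = n + b s - 1 := by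
    have htri1 : T.dist (p (-n)) s ≤ T.dist (p (-n)) u + T.dist u s := hconn.dist_triangle
    have htri2 : T.dist (p (-n)) u ≤ T.dist (p (-n)) s + T.dist s u := hconn.dist_triangle
    have e1 : T.dist u s = 1 := by rw [dist_eq_one_iff_adj]; exact h1
    have e2 : T.dist s u = 1 := by rw [dist_eq_one_iff_adj]; exact h1.symm
    omega
  have hduv' : (T.dist (p (-n)) u' : ℤ) = n + b s - 1 := by
    have htri1 : T.dist (p (-n)) s ≤ T.dist (p (-n)) u' + T.dist u' s := hconn.dist_triangle
    have htri2 : T.dist (p (-n)) u' ≤ T.dist (p (-n)) s + T.dist s u' := hconn.dist_triangle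
    have e1 : T.dist u' s = 1 := by rw [dist_eq_one_iff_adj]; exact h2
    have e2 : T.dist s u' = 1 := by rw [dist_eq_one_iff_adj]; exact h2.symm
    omega
  obtain ⟨wu, hwu, hwulen⟩ := hconn.exists_path_of_dist (p (-n)) u
  obtain ⟨wu', hwu', hwulen'⟩ := hconn.exists_path_of_dist (p (-n)) u'
  have hQlen : (wu.concat h1).length = T.dist (p (-n)) s := by
    rw [Walk.length_concat, hwulen]; omega
  have hQlen' : (wu'.concat h2).length = T.dist (p (-n)) s := by
    rw [Walk.length_concat, hwulen']; omega
  have hQ : (wu.concat h1).IsPath := Walk.isPath_of_length_eq_dist _ hQlen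
  have hQ' : (wu'.concat h2).IsPath := Walk.isPath_of_length_eq_dist _ hQlen'
  have hpq := hacyc.path_unique ⟨wu.concat h1, hQ⟩ ⟨wu'.concat h2, hQ'⟩
  have heq : wu.concat h1 = wu'.concat h2 := congrArg Subtype.val hpq
  have := congrArg (fun w : T.Walk (p (-n)) s => w.reverse.getVert 1) heq
  simpa [Walk.reverse_concat, Walk.getVert_cons_succ] using this

structure Setup {V : Type*} (k : ℕ) (T : SimpleGraph V) (p : ℤ → V) (b : V → ℤ) : Prop where
  hk : 2 ≤ k
  conn : T.Connected
  acyc : T.IsAcyclic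
  hadj : ∀ n : ℤ, T.Adj (p n) (p (n + 1))
  hpinj : ∀ n : ℤ, p n ≠ p (n + 2)
  hb : ∀ t : V, ∀ᶠ n : ℕ in atTop, (T.dist (p (-(n : ℤ))) t : ℤ) - (n : ℤ) = b t
  hreg : ∀ v : V, Nat.card (T.neighborSet v) = k

namespace Setup

variable {k : ℕ} (S : Setup k T p b)
include S

lemma b_p' (i : ℤ) : b (p i) = i := b_p S.conn S.acyc S.hadj S.hpinj S.hb i

lemma dist_pS {m n : ℤ} (h : m ≤ n) : (T.dist (p m) (p n) : ℤ) = n - m :=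
  dist_p' S.conn S.acyc S.hadj S.hpinj h

lemma adj_bpm {u v : V} (h : T.Adj u v) : b v = b u + 1 ∨ b u = b v + 1 := by
  obtain ⟨N1, hN10, hr1⟩ := stab S.hb u
  obtain ⟨N2, hN20, hr2⟩ := stab S.hb v
  set n : ℤ := max N1 N2 with hn
  have h1 := hr1 n (by omega)
  have h2 := hr2 n (by omega)
  rcases adj_dist_pm S.conn S.acyc h (p (-n)) with h3 | h3 <;> omega

lemma parent_eu (s : V) : ∃! u, T.Adj u s ∧ b u = b s - 1 := by
  obtain ⟨N, hN0, hreg⟩ := stab S.hb s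
  obtain ⟨u, h1, h2, _⟩ := parent_spec S.conn S.acyc S.hadj S.hpinj S.hb s (max N (1 - b s))
    (by omega) (fun n hn => hreg n (by omega)) (by omega)
  exact ⟨u, ⟨h1, h2⟩, fun u' ⟨h1', h2'⟩ =>
    parent_unique S.conn S.acyc S.hadj S.hpinj S.hb s h1' h2' h1 h2⟩

noncomputable def par (s : V) : V := (S.parent_eu s).choose

lemma par_adj (s : V) : T.Adj (S.par s) s := (S.parent_eu s).choose_spec.1.1

lemma par_b (s : V) : b (S.par s) = b s - 1 := (S.parent_eu s).choose_spec.1.2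

lemma par_eq {u s : V} (h : T.Adj u s) (hbu : b u = b s - 1) : u = S.par s :=
  (S.parent_eu s).choose_spec.2 u ⟨h, hbu⟩

lemma par_p (i : ℤ) : S.par (p i) = p (i - 1) := by
  refine (S.par_eq ?_ ?_).symm
  · have := S.hadj (i - 1); rwa [show i - 1 + 1 = i by ring] at this
  · rw [S.b_p', S.b_p']

lemma par_dist (s : V) (N : ℤ) (hN0 : 0 ≤ N)
    (hreg : ∀ n : ℤ, N ≤ n → (T.dist (p (-n)) s : ℤ) = n + b s) (hN1 : 1 ≤ N + b s) :
    ∀ n : ℤ, N ≤ n → (T.dist (p (-n)) (S.par s) : ℤ) = n + b s - 1 := by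
  obtain ⟨u, h1, h2, h3⟩ := parent_spec S.conn S.acyc S.hadj S.hpinj S.hb s N hN0 hreg hN1
  rwa [S.par_eq h1 h2] at h3

/-- iterated parent -/
noncomputable def anc (d : ℕ) (s : V) : V := (S.par)^[d] s

@[simp] lemma anc_zero (s : V) : S.anc 0 s = s := rfl

lemma anc_succ (d : ℕ) (s : V) : S.anc (d + 1) s = S.anc d (S.par s) :=
  Function.iterate_succ_apply _ _ _

lemma anc_succ' (d : ℕ) (s : V) : S.anc (d + 1) s = S.par (S.anc d s) :=
  Function.iterate_succ_apply' _ _ _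

lemma anc_add (c d : ℕ) (s : V) : S.anc (c + d) s = S.anc c (S.anc d s) := by
  simp [anc, Function.iterate_add_apply]

lemma anc_b (d : ℕ) (s : V) : b (S.anc d s) = b s - d := by
  induction d with
  | zero => simp
  | succ d ih => rw [anc_succ', S.par_b, ih]; push_cast; ring

lemma anc_reaches : ∀ (L : ℕ) (s : V) (N : ℤ), 0 ≤ N →
    (∀ n : ℤ, N ≤ n → (T.dist (p (-n)) s : ℤ) = n + b s) → N + b s = L →
    S.anc L s = p (-N) := by
  intro L
  induction L with
  | zero =>
      intro s N hN0 hreg hL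
      have h := hreg N le_rfl
      have : T.dist (p (-N)) s = 0 := by omega
      have := (S.conn.dist_eq_zero_iff).mp this
      simpa [anc] using this.symm
  | succ L ih =>
      intro s N hN0 hreg hL
      have hpd := S.par_dist s N hN0 hreg (by omega)
      have := ih (S.par s) N hN0 (by
        intro n hn
        rw [hpd n hn, S.par_b]; ring) (by rw [S.par_b]; omega)
      rw [S.anc_succ]
      exact this

lemma merge (s : V) : ∃ N : ℤ, 0 ≤ N ∧ ∀ n : ℤ, N ≤ n →
    0 ≤ n + b s ∧ S.anc (n + b s).toNat s = p (-n) := by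
  obtain ⟨N, hN0, hreg⟩ := stab S.hb s
  refine ⟨max N (-b s), by omega, fun n hn => ⟨by omega, ?_⟩⟩
  exact S.anc_reaches (n + b s).toNat s n (by omega) (fun m hm => hreg m (by omega)) (by omega)

/-- the children of a vertex -/
def children (_S : Setup k T p b) (s : V) : Set V := {w | T.Adj s w ∧ b w = b s + 1}

lemma mem_children_iff_par {s w : V} : w ∈ S.children s ↔ S.par w = s := by
  constructor
  · rintro ⟨h1, h2⟩
    exact (S.par_eq h1 (by omega)).symm
  · rintro rfl
    exact ⟨(S.par_adj w), by rw [S.par_b]; ring⟩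

lemma adj_cases {s w : V} (h : T.Adj s w) : w ∈ S.children s ∨ w = S.par s := by
  rcases S.adj_bpm h with h1 | h1
  · exact Or.inl ⟨h, h1⟩
  · exact Or.inr (S.par_eq h.symm (by omega))

end Setup
namespace Setup
variable {k : ℕ} (S : Setup k T p b)
include S

lemma neighbor_finite (s : V) : (T.neighborSet s).Finite := by
  have h := S.hreg s
  have hk := S.hk
  rw [Set.finite_coe_iff.symm]
  by_contra hinf
  rw [not_finite_iff_infinite] at hinf
  rw [@Nat.card_eq_zero_of_infinite _ hinf] at h
  omega

lemma children_eq (s : V) : S.children s = T.neighborSet s \ {S.par s} := by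
  ext w
  constructor
  · rintro ⟨h1, h2⟩
    refine ⟨h1, ?_⟩
    intro hw
    rw [Set.mem_singleton_iff] at hw
    subst hw
    have := S.par_b s
    omega
  · rintro ⟨h1, h2⟩
    rcases S.adj_cases h1 with h | h
    · exact h
    · exact absurd h h2

lemma children_finite (s : V) : (S.children s).Finite :=
  (S.children_eq s) ▸ (S.neighbor_finite s).diff

lemma children_ncard (s : V) : (S.children s).ncard = k - 1 := by
  have hpar : S.par s ∈ T.neighborSet s := (S.par_adj s).symm
  have hfin := S.neighbor_finite s
  rw [S.children_eq s, Set.ncard_diff_singleton_of_mem hpar]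
  congr 1
  rw [← Nat.card_coe_set_eq]
  exact S.hreg s

lemma children_nonempty (s : V) : (S.children s).Nonempty := by
  rw [← Set.ncard_pos (S.children_finite s), S.children_ncard s]
  have := S.hk
  omega

end Setup

/-- pointed bijection between finite sets of same size -/
lemma exists_bij_on {V : Type*} {A B : Set V} (hA : A.Finite) (hB : B.Finite)
    (hcard : A.ncard = B.ncard) {w w' : V} (hw : w ∈ A) (hw' : w' ∈ B) :
    ∃ F : V → V, Set.BijOn F A B ∧ F w = w' := by
  classical
  haveI := hA.to_subtype
  haveI := hB.to_subtype
  have hcard' : Nat.card A = Nat.card B := by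
    rw [Nat.card_coe_set_eq, Nat.card_coe_set_eq, hcard]
  obtain ⟨e⟩ := Finite.card_eq.mp hcard'
  set e' : A ≃ B := e.trans (Equiv.swap (e ⟨w, hw⟩) ⟨w', hw'⟩) with he'
  refine ⟨fun v => if h : v ∈ A then (e' ⟨v, h⟩ : V) else v, ⟨?_, ?_, ?_⟩, ?_⟩
  · intro v hv
    simp only [dif_pos hv]
    exact (e' ⟨v, hv⟩).2
  · intro v1 h1 v2 h2 heq
    simp only [dif_pos h1, dif_pos h2] at heq
    have : e' ⟨v1, h1⟩ = e' ⟨v2, h2⟩ := Subtype.ext heq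
    have := e'.injective this
    exact congrArg Subtype.val this
  · intro v hv
    refine ⟨(e'.symm ⟨v, hv⟩ : V), (e'.symm ⟨v, hv⟩).2, ?_⟩
    simp only [dif_pos (e'.symm ⟨v, hv⟩).2]
    rw [Subtype.coe_eta, e'.apply_symm_apply]
  · simp only [dif_pos hw]
    rw [he']
    simp [Equiv.swap_apply_left]
namespace Setup
variable {k : ℕ} (S : Setup k T p b)
include S

lemma exists_aut (c : ℤ) (t t' : V) (ht' : b t' = b t + c) :
    ∃ g : T ≃g T, (∀ s : V, b (g s) = b s + c) ∧ g t = t' := by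
  classical
  have hpinj : Function.Injective p := p_inj S.acyc S.hadj S.hpinj
  obtain ⟨N1, hN10, hm1⟩ := S.merge t
  obtain ⟨N2, hN20, hm2⟩ := S.merge t'
  set n₀ : ℤ := max N1 (N2 + c) with hn₀
  have hmt : 0 ≤ n₀ + b t ∧ S.anc (n₀ + b t).toNat t = p (-n₀) := hm1 n₀ (by omega)
  have hmt'0 : 0 ≤ (n₀ - c) + b t' ∧ S.anc ((n₀ - c) + b t').toNat t' = p (-(n₀ - c)) :=
    hm2 (n₀ - c) (by omega)
  set D : ℕ := (n₀ + b t).toNat with hD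
  have hDt : S.anc D t = p (-n₀) := hmt.2
  have hDt' : S.anc D t' = p (-(n₀ - c)) := by
    have : ((n₀ - c) + b t').toNat = D := by omega
    rw [← this]; exact hmt'0.2
  have hDb : (D : ℤ) = n₀ + b t := by omega
  -- the low ray and its shifted version
  set Ray : Set V := {v | ∃ m : ℤ, m ≤ -n₀ ∧ v = p m} with hRay
  set Ray' : Set V := {v | ∃ m : ℤ, m ≤ -n₀ + c ∧ v = p m} with hRay'
  have hRayb : ∀ u ∈ Ray, u = p (b u) ∧ b u ≤ -n₀ := by
    rintro u ⟨m, hm, rfl⟩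
    rw [S.b_p']; exact ⟨rfl, hm⟩
  have hRayb' : ∀ u ∈ Ray', u = p (b u) ∧ b u ≤ -n₀ + c := by
    rintro u ⟨m, hm, rfl⟩
    rw [S.b_p']; exact ⟨rfl, hm⟩
  -- depth functions
  have hhit : ∀ u : V, ∃ d : ℕ, S.anc d u ∈ Ray := by
    intro u
    obtain ⟨N, hN0, hm⟩ := S.merge u
    refine ⟨((max N n₀) + b u).toNat, ?_⟩
    rw [(hm (max N n₀) (by omega)).2]
    exact ⟨-(max N n₀), by omega, rfl⟩
  have hhit' : ∀ u : V, ∃ d : ℕ, S.anc d u ∈ Ray' := by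
    intro u
    obtain ⟨N, hN0, hm⟩ := S.merge u
    refine ⟨((max N (n₀ - c)) + b u).toNat, ?_⟩
    rw [(hm (max N (n₀ - c)) (by omega)).2]
    exact ⟨-(max N (n₀ - c)), by omega, rfl⟩
  set δ : V → ℕ := fun u => Nat.find (hhit u) with hδ
  set δ' : V → ℕ := fun u => Nat.find (hhit' u) with hδ'
  have hδ_spec : ∀ u, S.anc (δ u) u ∈ Ray := fun u => Nat.find_spec (hhit u)
  have hδ_min : ∀ u d, d < δ u → S.anc d u ∉ Ray := fun u d hd => Nat.find_min (hhit u) hd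
  have hδ'_spec : ∀ u, S.anc (δ' u) u ∈ Ray' := fun u => Nat.find_spec (hhit' u)
  have hδ'_min : ∀ u d, d < δ' u → S.anc d u ∉ Ray' := fun u d hd => Nat.find_min (hhit' u) hd
  have hδ0 : ∀ u, u ∈ Ray → δ u = 0 := by
    intro u hu
    by_contra hne
    exact hδ_min u 0 (by omega) hu
  have hδ0' : ∀ u, δ u = 0 → u ∈ Ray := by
    intro u hu
    have := hδ_spec u
    rwa [hu] at this
  have hδ'0 : ∀ u, u ∈ Ray' → δ' u = 0 := by
    intro u hu
    by_contra hne
    exact hδ'_min u 0 (by omega) hu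
  have hδ'0' : ∀ u, δ' u = 0 → u ∈ Ray' := by
    intro u hu
    have := hδ'_spec u
    rwa [hu] at this
  have hRaypar : ∀ u ∈ Ray, S.par u ∈ Ray := by
    rintro u ⟨m, hm, rfl⟩
    rw [S.par_p]
    exact ⟨m - 1, by omega, rfl⟩
  have hRaypar' : ∀ u ∈ Ray', S.par u ∈ Ray' := by
    rintro u ⟨m, hm, rfl⟩
    rw [S.par_p]
    exact ⟨m - 1, by omega, rfl⟩
  have hδpar : ∀ u, u ∉ Ray → 1 ≤ δ u ∧ δ (S.par u) = δ u - 1 := by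
    intro u hu
    have h1 : 1 ≤ δ u := by
      by_contra hlt
      exact hu (hδ0' u (by omega))
    refine ⟨h1, ?_⟩
    have hle : δ (S.par u) ≤ δ u - 1 := by
      apply Nat.find_le
      rw [← S.anc_succ]
      rw [show (δ u - 1) + 1 = δ u by omega]
      exact hδ_spec u
    have hge : δ u - 1 ≤ δ (S.par u) := by
      by_contra hlt
      push_neg at hlt
      have := hδ_min u (δ (S.par u) + 1) (by omega)
      rw [S.anc_succ] at this
      exact this (hδ_spec (S.par u))
    omega
  have hδ'par : ∀ u, u ∉ Ray' → 1 ≤ δ' u ∧ δ' (S.par u) = δ' u - 1 := by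
    intro u hu
    have h1 : 1 ≤ δ' u := by
      by_contra hlt
      exact hu (hδ'0' u (by omega))
    refine ⟨h1, ?_⟩
    have hle : δ' (S.par u) ≤ δ' u - 1 := by
      apply Nat.find_le
      rw [← S.anc_succ]
      rw [show (δ' u - 1) + 1 = δ' u by omega]
      exact hδ'_spec u
    have hge : δ' u - 1 ≤ δ' (S.par u) := by
      by_contra hlt
      push_neg at hlt
      have := hδ'_min u (δ' (S.par u) + 1) (by omega)
      rw [S.anc_succ] at this
      exact this (hδ'_spec (S.par u))
    omega
  -- vertices on the chains of t (above the ray) are not in the ray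
  have hchain_t : ∀ a : ℕ, a < D → S.anc a t ∉ Ray := by
    intro a ha hmem
    have h1 := (hRayb _ hmem).2
    rw [S.anc_b] at h1
    omega
  have hchain_t' : ∀ a : ℕ, a < D → S.anc a t' ∉ Ray' := by
    intro a ha hmem
    have h1 := (hRayb' _ hmem).2
    rw [S.anc_b] at h1
    omega
  -- selection of bijections with routing
  have hsel : ∀ s s' : V, ∃ F : V → V, Set.BijOn F (S.children s) (S.children s') ∧
      (∀ j : ℕ, j + 1 ≤ D → s = S.anc (j+1) t → s' = S.anc (j+1) t' →
        F (S.anc j t) = S.anc j t') ∧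
      (∀ m : ℤ, m ≤ -n₀ - 1 → s = p m → s' = p (m + c) → F (p (m+1)) = p (m+1+c)) := by
    intro s s'
    have hcard : (S.children s).ncard = (S.children s').ncard := by
      rw [S.children_ncard, S.children_ncard]
    by_cases h1 : ∃ j : ℕ, j + 1 ≤ D ∧ s = S.anc (j+1) t ∧ s' = S.anc (j+1) t'
    · obtain ⟨j, hj, hs, hs'⟩ := h1
      have hw : S.anc j t ∈ S.children s := by
        rw [hs, S.mem_children_iff_par, ← S.anc_succ']
      have hw' : S.anc j t' ∈ S.children s' := by
        rw [hs', S.mem_children_iff_par, ← S.anc_succ']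
      obtain ⟨F, hF, hFw⟩ := exists_bij_on (S.children_finite s) (S.children_finite s')
        hcard hw hw'
      refine ⟨F, hF, ?_, ?_⟩
      · intro j2 hj2 hs2 hs2'
        have hjj : j2 = j := by
          have e1 : b (S.anc (j2+1) t) = b t - (j2+1) := S.anc_b _ _
          have e2 : b (S.anc (j+1) t) = b t - (j+1) := S.anc_b _ _
          rw [← hs2] at e1
          rw [← hs] at e2
          omega
        subst hjj
        exact hFw
      · intro m hm hsm hsm'
        exfalso
        have e1 : b s = b t - (j+1) := by rw [hs]; exact S.anc_b _ _
        have e2 : b s = m := by rw [hsm, S.b_p']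
        omega
    · by_cases h2 : ∃ m : ℤ, m ≤ -n₀ - 1 ∧ s = p m ∧ s' = p (m + c)
      · obtain ⟨m, hm, hs, hs'⟩ := h2
        have hw : p (m+1) ∈ S.children s := by
          rw [hs, S.mem_children_iff_par, S.par_p]
          congr 1
          ring
        have hw' : p (m+1+c) ∈ S.children s' := by
          rw [hs', S.mem_children_iff_par, S.par_p]
          congr 1
          ring
        obtain ⟨F, hF, hFw⟩ := exists_bij_on (S.children_finite s) (S.children_finite s')
          hcard hw hw'
        refine ⟨F, hF, ?_, ?_⟩
        · intro j hj hs2 hs2'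
          exact absurd ⟨j, hj, hs2, hs2'⟩ h1
        · intro m2 hm2 hsm hsm'
          have : m2 = m := hpinj (by rw [← hsm, hs])
          subst this
          exact hFw
      · obtain ⟨w, hw⟩ := S.children_nonempty s
        obtain ⟨w', hw'⟩ := S.children_nonempty s'
        obtain ⟨F, hF, _⟩ := exists_bij_on (S.children_finite s) (S.children_finite s')
          hcard hw hw'
        exact ⟨F, hF, fun j hj hs2 hs2' => absurd ⟨j, hj, hs2, hs2'⟩ h1,
          fun m hm hsm hsm' => absurd ⟨m, hm, hsm, hsm'⟩ h2⟩
  choose emap hemapBij hemapChain hemapRay using hsel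
  -- the recursive definition
  obtain ⟨H, hHzero, hHstep⟩ : ∃ H : ℕ → V → V, (∀ u, H 0 u = p (b u + c)) ∧
      ∀ d u, H (d+1) u = emap (S.par u) (H d (S.par u)) u :=
    ⟨fun d => Nat.rec (motive := fun _ => V → V) (fun u => p (b u + c))
      (fun _ Hd u => emap (S.par u) (Hd (S.par u)) u) d, fun _ => rfl, fun _ _ => rfl⟩
  set h : V → V := fun u => H (δ u) u with hh
  have hH0 : ∀ u, δ u = 0 → h u = p (b u + c) := by
    intro u hu
    show H (δ u) u = p (b u + c)
    rw [hu]
    exact hHzero u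
  have hHsucc : ∀ u, u ∉ Ray → h u = emap (S.par u) (h (S.par u)) u := by
    intro u hu
    obtain ⟨h1, h2⟩ := hδpar u hu
    have e1 : h (S.par u) = H (δ (S.par u)) (S.par u) := rfl
    show H (δ u) u = emap (S.par u) (h (S.par u)) u
    rw [show δ u = (δ u - 1) + 1 by omega, hHstep, e1, h2]
  -- h on the ray
  have hray_h : ∀ u ∈ Ray, h u = p (b u + c) := by
    intro u hu
    exact hH0 u (hδ0 u hu)
  -- I1 : b increment and child membership
  have hbh : ∀ d u, δ u = d → b (h u) = b u + c ∧ (u ∉ Ray → h u ∈ S.children (h (S.par u))) := by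
    intro d
    induction d using Nat.strong_induction_on with
    | _ d ih =>
      intro u hu
      by_cases hur : u ∈ Ray
      · rw [hray_h u hur]
        refine ⟨S.b_p' _, fun hc => absurd hur hc⟩
      · obtain ⟨h1, h2⟩ := hδpar u hur
        have hchild : u ∈ S.children (S.par u) := by
          rw [S.mem_children_iff_par]
        have hmem : h u ∈ S.children (h (S.par u)) := by
          rw [hHsucc u hur]
          exact (hemapBij (S.par u) (h (S.par u))).mapsTo hchild
        refine ⟨?_, fun _ => hmem⟩
        have hbpar : b (h (S.par u)) = b (S.par u) + c :=
          (ih (δ (S.par u)) (by omega) (S.par u) rfl).1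
        have := hmem.2
        rw [hbpar, S.par_b] at this
        omega
  have hbh' : ∀ u, b (h u) = b u + c := fun u => (hbh (δ u) u rfl).1
  -- I2 : h commutes with par
  have hparh : ∀ u, h (S.par u) = S.par (h u) := by
    intro u
    by_cases hur : u ∈ Ray
    · obtain ⟨hup, hub⟩ := hRayb u hur
      have hpu : S.par u = p (b u - 1) := by
        conv_lhs => rw [hup]
        rw [S.par_p]
      have hpu_ray : S.par u ∈ Ray := by rw [hpu]; exact ⟨b u - 1, by omega, rfl⟩
      rw [hray_h _ hur, hray_h _ hpu_ray, hpu, S.par_p, S.b_p']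
      congr 1
      ring
    · have hmem := (hbh (δ u) u rfl).2 hur
      rw [S.mem_children_iff_par] at hmem
      exact hmem.symm
  -- I3 : off-ray goes to off-ray
  have hoff : ∀ d u, δ u = d → u ∉ Ray → h u ∉ Ray' := by
    intro d
    induction d using Nat.strong_induction_on with
    | _ d ih =>
      intro u hud hur hmem'
      obtain ⟨h1, h2⟩ := hδpar u hur
      obtain ⟨hup', hub'⟩ := hRayb' _ hmem'
      -- par (h u) = h (par u) ∈ Ray'
      have hparmem : h (S.par u) ∈ Ray' := by
        have hpq := congrArg S.par hup'
        rw [S.par_p] at hpq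
        rw [hparh u, hpq]
        exact ⟨b (h u) - 1, by omega, rfl⟩
      by_cases hpr : S.par u ∈ Ray
      · -- par u = p j with j ≤ -n₀
        obtain ⟨hpp, hpb⟩ := hRayb _ hpr
        have hbu : b u = b (S.par u) + 1 := by
          have := S.par_b u; omega
        rcases lt_or_eq_of_le hpb with hlt | heqq
        · -- j ≤ -n₀ - 1 : ray routing
          have hhpar : h (S.par u) = p (b (S.par u) + c) := hray_h _ hpr
          have hroute := hemapRay (S.par u) (h (S.par u)) (b (S.par u)) (by omega) hpp
            (by rw [hhpar])
          -- h u = p (b u + c) = p (b (par u) + 1 + c)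
          have hhu_val : h u = p (b (S.par u) + 1 + c) := by
            conv_lhs => rw [hup']
            congr 1
            rw [hbh' u]
            omega
          have hchild_u : u ∈ S.children (S.par u) := by rw [S.mem_children_iff_par]
          have hchild_p : p (b (S.par u) + 1) ∈ S.children (S.par u) := by
            rw [S.mem_children_iff_par]
            conv_rhs => rw [hpp]
            rw [S.par_p]
            congr 1
            ring
          have : u = p (b (S.par u) + 1) := by
            apply (hemapBij (S.par u) (h (S.par u))).injOn hchild_u hchild_p
            rw [← hHsucc u hur, hhu_val]
            rw [hroute]
          apply hur
          rw [this]
          refine ⟨b (S.par u) + 1, by omega, rfl⟩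
        · -- j = -n₀ : then b u = -n₀ + 1, contradiction with b (h u) ≤ -n₀ + c
          have := hbh' u
          omega
      · -- par u off ray: induction gives h (par u) ∉ Ray'
        exact ih (δ (S.par u)) (by omega) (S.par u) rfl hpr hparmem
  -- I4 : routing along the chain
  have hchain : ∀ j : ℕ, j ≤ D → h (S.anc (D - j) t) = S.anc (D - j) t' := by
    intro j
    induction j with
    | zero =>
        intro _
        simp only [Nat.sub_zero]
        rw [hDt, hDt']
        have : p (-n₀) ∈ Ray := ⟨-n₀, by omega, rfl⟩
        rw [hray_h _ this, S.b_p']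
        congr 1
        ring
    | succ j ihj =>
        intro hj
        have hprev := ihj (by omega)
        set a : ℕ := D - (j + 1) with ha
        have haD : a < D := by omega
        have haa : D - j = a + 1 := by omega
        rw [haa] at hprev
        have hnot : S.anc a t ∉ Ray := hchain_t a haD
        have hpar_anc : S.par (S.anc a t) = S.anc (a+1) t := (S.anc_succ' a t).symm
        have hpar_anc' : S.par (S.anc a t') = S.anc (a+1) t' := (S.anc_succ' a t').symm
        rw [hHsucc _ hnot, hpar_anc, hprev]
        exact hemapChain (S.anc (a+1) t) (S.anc (a+1) t') a (by omega) rfl rfl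
  have hht : h t = t' := by
    have := hchain D le_rfl
    simpa using this
  -- I5 : injectivity
  have hinj : ∀ d u v, δ u ≤ d → h u = h v → u = v := by
    intro d
    induction d using Nat.strong_induction_on with
    | _ d ih =>
      intro u v hud heq
      by_cases hur : u ∈ Ray
      · by_cases hvr : v ∈ Ray
        · obtain ⟨hup, _⟩ := hRayb u hur
          obtain ⟨hvp, _⟩ := hRayb v hvr
          rw [hray_h u hur, hray_h v hvr] at heq
          have : b u + c = b v + c := hpinj heq
          rw [hup, hvp]
          congr 1
          omega
        · exfalso
          obtain ⟨_, hub⟩ := hRayb u hur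
          apply hoff (δ v) v rfl hvr
          rw [← heq, hray_h u hur]
          exact ⟨b u + c, by omega, rfl⟩
      · by_cases hvr : v ∈ Ray
        · exfalso
          obtain ⟨_, hvb⟩ := hRayb v hvr
          apply hoff (δ u) u rfl hur
          rw [heq, hray_h v hvr]
          exact ⟨b v + c, by omega, rfl⟩
        · -- both off ray
          obtain ⟨hu1, hu2⟩ := hδpar u hur
          obtain ⟨hv1, hv2⟩ := hδpar v hvr
          have hpp : h (S.par u) = h (S.par v) := by
            rw [hparh u, hparh v, heq]
          have hpuv : S.par u = S.par v := ih (d - 1) (by omega) _ _ (by omega) hpp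
          have hchild_u : u ∈ S.children (S.par u) := by rw [S.mem_children_iff_par]
          have hchild_v : v ∈ S.children (S.par u) := by rw [S.mem_children_iff_par, hpuv]
          apply (hemapBij (S.par u) (h (S.par u))).injOn hchild_u hchild_v
          rw [← hHsucc u hur]
          conv_rhs => rw [hpuv]
          rw [← hHsucc v hvr]
          exact heq
  -- I6 : surjectivity
  have hsurj : ∀ d v', δ' v' = d → ∃ u, h u = v' := by
    intro d
    induction d using Nat.strong_induction_on with
    | _ d ih =>
      intro v' hvd
      by_cases hvr : v' ∈ Ray'
      · obtain ⟨hvp, hvb⟩ := hRayb' v' hvr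
        refine ⟨p (b v' - c), ?_⟩
        have hmem : p (b v' - c) ∈ Ray := ⟨b v' - c, by omega, rfl⟩
        rw [hray_h _ hmem, S.b_p']
        conv_rhs => rw [hvp]
        congr 1
        ring
      · obtain ⟨hv1, hv2⟩ := hδ'par v' hvr
        obtain ⟨s, hs⟩ := ih (δ' (S.par v')) (by omega) (S.par v') rfl
        have hvchild : v' ∈ S.children (S.par v') := by rw [S.mem_children_iff_par]
        have hvchild2 : v' ∈ S.children (h s) := by rw [hs]; exact hvchild
        obtain ⟨w, hw, hww⟩ := (hemapBij s (h s)).surjOn hvchild2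
        by_cases hwr : w ∈ Ray
        · -- w on ray : check h w = v' anyway
          obtain ⟨hwp, hwb⟩ := hRayb w hwr
          have hparw : S.par w = s := by
            rw [← S.mem_children_iff_par]
            exact hw
          -- s = p (b w - 1), on the deep ray
          have hsp : s = p (b w - 1) := by
            rw [← hparw]
            conv_lhs => rw [hwp]
            rw [S.par_p]
          have hsray : s ∈ Ray := by rw [hsp]; exact ⟨b w - 1, by omega, rfl⟩
          have hhs : h s = p (b w - 1 + c) := by
            rw [hray_h s hsray, hsp, S.b_p']
          have hroute := hemapRay s (h s) (b w - 1) (by omega) hsp (by rw [hhs])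
          have hwepb : p (b w - 1 + 1) = w := by
            rw [show b w - 1 + 1 = b w by ring, ← hwp]
          rw [hwepb] at hroute
          refine ⟨w, ?_⟩
          rw [hray_h w hwr]
          rw [← hww, hroute]
          congr 1
          ring
        · refine ⟨w, ?_⟩
          have hparw : S.par w = s := by
            rw [← S.mem_children_iff_par]
            exact hw
          rw [hHsucc w hwr, hparw]
          exact hww
  -- assemble the bijection
  have hbij : Function.Bijective h := by
    constructor
    · intro u v heq
      exact hinj (δ u) u v le_rfl heq
    · intro v'
      exact hsurj (δ' v') v' rfl
  -- adjacency
  have hadj_iff : ∀ u v, T.Adj (h u) (h v) ↔ T.Adj u v := by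
    intro u v
    constructor
    · intro hadj
      rcases S.adj_cases hadj with hc | hc
      · rw [S.mem_children_iff_par] at hc
        rw [← hparh v] at hc
        have : S.par v = u := hinj (δ (S.par v)) _ _ le_rfl hc
        rw [← this]
        exact (S.par_adj v)
      · rw [← hparh u] at hc
        have : v = S.par u := hinj (δ v) _ _ le_rfl hc
        rw [this]
        exact (S.par_adj u).symm
    · intro hadj
      rcases S.adj_cases hadj with hc | hc
      · rw [S.mem_children_iff_par] at hc
        have : S.par (h v) = h u := by rw [← hparh v, hc]
        rw [← this]
        exact S.par_adj (h v)
      · have : h v = S.par (h u) := by rw [← hparh u, ← hc]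
        rw [this]
        exact (S.par_adj (h u)).symm
  refine ⟨⟨Equiv.ofBijective h hbij, ?_⟩, ?_, ?_⟩
  · intro u v
    exact hadj_iff u v
  · intro s
    exact hbh' s
  · exact hht

end Setup

end BusemannAux

/-- The map `φ : A^ℤ → A^V`, `φ(x)_t = x_{b t}`, is a
homeomorphism onto the set `Y` of configurations constant on Busemann levels
(with inverse `y ↦ (i ↦ y (p i))`); for any cellular automaton `f` on the
`k`-regular tree, `f̄ = φ⁻¹ ∘ f ∘ φ` is well defined, continuous, commutes with
the shift, and is asymptotically nilpotent whenever `f` is. -/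
theorem conjugated_CA_on_busemann_levels
    {V A : Type*} [Finite A] [TopologicalSpace A] [DiscreteTopology A]
    (k : ℕ) (hk : 2 ≤ k)
    (T : SimpleGraph V) (hconn : T.Connected) (hacyc : T.IsAcyclic)
    (hreg : ∀ v : V, Nat.card (T.neighborSet v) = k)
    (p : ℤ → V)
    (hadj : ∀ n : ℤ, T.Adj (p n) (p (n + 1)))
    (hpinj : ∀ n : ℤ, p n ≠ p (n + 2))
    (b : V → ℤ)
    (hb : ∀ t : V, ∀ᶠ n : ℕ in atTop, (T.dist (p (-(n : ℤ))) t : ℤ) - (n : ℤ) = b t)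
    (z : A) (f : (V → A) → (V → A)) (hf : Continuous f)
    (hcomm : ∀ (g : T ≃g T) (x : V → A),
      f (fun t => x (g.symm t)) = fun t => f x (g.symm t))
    (φ : (ℤ → A) → (V → A)) (hφ : ∀ (x : ℤ → A) (t : V), φ x t = x (b t))
    (fbar : (ℤ → A) → (ℤ → A))
    (hfbar : ∀ (x : ℤ → A) (i : ℤ), fbar x i = f (φ x) (p i)) :
    Set.range φ = {y : V → A | ∀ t t' : V, b t = b t' → y t = y t'} ∧
    Continuous φ ∧
    Function.Injective φ ∧
    (∀ (x : ℤ → A) (i : ℤ), φ x (p i) = x i) ∧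
    Continuous (fun (y : V → A) (i : ℤ) => y (p i)) ∧
    (∀ x : ℤ → A, φ (fbar x) = f (φ x)) ∧
    Continuous fbar ∧
    (∀ x : ℤ → A, fbar (fun i => x (i + 1)) = fun i => fbar x (i + 1)) ∧
    ((∀ x : V → A, Tendsto (fun n => f^[n] x) atTop (nhds (fun _ => z))) →
      ∀ x : ℤ → A, Tendsto (fun n => fbar^[n] x) atTop (nhds (fun _ => z))) := by
  have S : Setup k T p b := ⟨hk, hconn, hacyc, hadj, hpinj, hb, hreg⟩
  have hbp : ∀ i : ℤ, b (p i) = i := S.b_p'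
  have hφdef : φ = fun x t => x (b t) := funext fun x => funext fun t => hφ x t
  have hφcont : Continuous φ := by
    rw [hφdef]; exact continuous_pi fun t => continuous_apply (b t)
  have hpi : ∀ (x : ℤ → A) (i : ℤ), φ x (p i) = x i := by
    intro x i; rw [hφ, hbp]
  -- level invariance of f on the image of φ
  have hfY : ∀ (x : ℤ → A) (t t'' : V), b t = b t'' → f (φ x) t = f (φ x) t'' := by
    intro x t t'' he
    obtain ⟨g, hg1, hg2⟩ := S.exists_aut 0 t t'' (by omega)
    have key : f (fun s => φ x (g s)) = fun s => f (φ x) (g s) := hcomm g.symm (φ x)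
    have e1 : (fun s => φ x (g s)) = φ x := by
      funext s; rw [hφ, hφ]
      congr 1
      have := hg1 s; omega
    rw [e1] at key
    have := congrFun key t
    rw [this, hg2]
  have hconj : ∀ x : ℤ → A, φ (fbar x) = f (φ x) := by
    intro x
    funext t
    rw [hφ, hfbar]
    exact hfY x (p (b t)) t (by rw [hbp])
  refine ⟨?_, hφcont, ?_, hpi, ?_, hconj, ?_, ?_, ?_⟩
  · -- range
    ext y
    constructor
    · rintro ⟨x, rfl⟩ t t'' he
      rw [hφ, hφ, he]
    · intro hy
      refine ⟨fun i => y (p i), funext fun t => ?_⟩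
      rw [hφ]
      exact hy (p (b t)) t (by rw [hbp])
  · -- injective
    intro x y hxy
    funext i
    have := congrFun hxy (p i)
    rwa [hpi, hpi] at this
  · -- continuity of the inverse
    exact continuous_pi fun i => continuous_apply (p i)
  · -- continuity of fbar
    have : fbar = fun x i => f (φ x) (p i) := funext fun x => funext fun i => hfbar x i
    rw [this]
    exact continuous_pi fun i => (continuous_apply (p i)).comp (hf.comp hφcont)
  · -- shift equivariance
    intro x
    obtain ⟨g, hg1, hg2⟩ := S.exists_aut 1 (p 0) (p 1) (by simp [hbp])
    have key : f (fun s => φ x (g s)) = fun s => f (φ x) (g s) := hcomm g.symm (φ x)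
    have e1 : (fun s => φ x (g s)) = φ (fun i => x (i + 1)) := by
      funext s
      rw [hφ, hφ, hg1 s]
    rw [e1] at key
    funext i
    have h1 : fbar (fun i => x (i + 1)) i = f (φ (fun i => x (i + 1))) (p i) := hfbar _ i
    have h2 : f (φ x) = φ (fbar x) := (hconj x).symm
    rw [h1, key, h2]
    simp only [hφ]
    rw [hg1 (p i), hbp]
  · -- asymptotic nilpotency
    intro hnil x
    have hiter : ∀ (n : ℕ) (x : ℤ → A), φ (fbar^[n] x) = f^[n] (φ x) := by
      intro n
      induction n with
      | zero => intro x; rfl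
      | succ n ih =>
          intro x
          rw [Function.iterate_succ_apply', Function.iterate_succ_apply', hconj, ih]
    rw [tendsto_pi_nhds]
    intro i
    have hx := hnil (φ x)
    rw [tendsto_pi_nhds] at hx
    have hxi := hx (p i)
    have he : (fun n => f^[n] (φ x) (p i)) = fun n => fbar^[n] x i := by
      funext n
      rw [← hiter n x, hpi]
    rwa [he] at hxi
end

section
/- Let T be a set, let A be a finite alphabet with the discrete topology, and let f : A^T → A^T be continuous with respect to the product topology. Then for every t ∈ T there exists a unique minimal finite set N(t) ⊆ T such that f(x)_t depends only on x restricted to N(t), i.e. for all x, y ∈ A^T, if x agrees with y on N(t) then f(x)_t = f(y)_t, and N(t) is contained in every set with this property. -/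
open Set

/-- `N` determines coordinate `t` of `f`. -/
def DetSet {T A : Type*} (f : (T → A) → (T → A)) (t : T) (N : Set T) : Prop :=
  ∀ x y : T → A, (∀ u ∈ N, x u = y u) → f x t = f y t

lemma detSet_univ {T A : Type*} (f : (T → A) → (T → A)) (t : T) :
    DetSet f t Set.univ := by
  intro x y h
  have : x = y := funext fun u => h u trivial
  rw [this]

lemma detSet_inter {T A : Type*} (f : (T → A) → (T → A)) (t : T) {M N : Set T}
    (hM : DetSet f t M) (hN : DetSet f t N) : DetSet f t (M ∩ N) := by
  classical
  intro x y h
  set z : T → A := fun u => if u ∈ M then x u else y u with hz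
  have h1 : f x t = f z t := by
    apply hM
    intro u hu
    simp [hz, hu]
  have h2 : f z t = f y t := by
    apply hN
    intro u hu
    by_cases hm : u ∈ M
    · simpa [hz, hm] using h u ⟨hm, hu⟩
    · simp [hz, hm]
  rw [h1, h2]

lemma detSet_biInter_finset {T A : Type*} (f : (T → A) → (T → A)) (t : T)
    (s : Finset T) (M : T → Set T) (hM : ∀ u, DetSet f t (M u)) :
    DetSet f t (⋂ u ∈ s, M u) := by
  classical
  induction s using Finset.induction with
  | empty => simpa using detSet_univ f t
  | @insert a s ha ih =>
      have : (⋂ u ∈ insert a s, M u) = M a ∩ ⋂ u ∈ s, M u := by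
        simp [Set.biInter_insert]
      rw [this]
      exact detSet_inter f t (hM a) ih

/-- Existence of a finite determining set, by compactness. -/
lemma exists_finite_detSet {T A : Type*} [Finite A] [TopologicalSpace A]
    [DiscreteTopology A] (f : (T → A) → (T → A)) (hf : Continuous f) (t : T) :
    ∃ N : Set T, N.Finite ∧ DetSet f t N := by
  classical
  have hg : Continuous fun x : T → A => f x t := (continuous_apply t).comp hf
  -- for each x, a finite set of coordinates with a cylinder inside the fiber
  have key : ∀ x : T → A, ∃ I : Finset T,
      {y : T → A | ∀ i ∈ I, y i = x i} ⊆ {y | f y t = f x t} := by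
    intro x
    have hopen : IsOpen ((fun y : T → A => f y t) ⁻¹' {f x t}) :=
      (isOpen_discrete _).preimage hg
    obtain ⟨I, u, hu, hsub⟩ := isOpen_pi_iff.mp hopen x rfl
    refine ⟨I, fun y hy => ?_⟩
    apply hsub
    intro i hi
    have := (hu i hi).2
    simpa [Set.mem_setOf_eq.mp hy i hi] using this
  choose I hI using key
  -- the cylinders cover the compact space A^T
  set U : (T → A) → Set (T → A) := fun x => {y | ∀ i ∈ I x, y i = x i} with hU
  have hUopen : ∀ x, IsOpen (U x) := by
    intro x
    have : U x = (↑(I x) : Set T).pi fun i => ({x i} : Set A) := by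
      ext y; simp [hU, Set.mem_pi]
    rw [this]
    exact isOpen_set_pi (I x).finite_toSet fun i _ => isOpen_discrete _
  have hcover : (Set.univ : Set (T → A)) ⊆ ⋃ x, U x := by
    intro x _
    exact Set.mem_iUnion.mpr ⟨x, fun i _ => rfl⟩
  obtain ⟨F, hF⟩ := isCompact_univ.elim_finite_subcover U hUopen hcover
  refine ⟨⋃ x ∈ F, ↑(I x), F.finite_toSet.biUnion fun x _ => (I x).finite_toSet, ?_⟩
  intro x y hxy
  obtain ⟨x₀, hx₀F, hx₀⟩ := Set.mem_iUnion₂.mp (hF (Set.mem_univ x))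
  have hyU : y ∈ U x₀ := by
    intro i hi
    have hiN : i ∈ ⋃ x ∈ F, (↑(I x) : Set T) :=
      Set.mem_iUnion₂.mpr ⟨x₀, hx₀F, hi⟩
    rw [← hxy i hiN]
    exact hx₀ i hi
  have h1 : f x t = f x₀ t := hI x₀ hx₀
  have h2 : f y t = f x₀ t := hI x₀ hyU
  rw [h1, h2]

/-- A continuous map `f : A^T → A^T` (with `A` finite
discrete) has, at each coordinate `t`, a unique minimal finite neighborhood
`N ⊆ T`: `f(x)_t` depends only on `x|_N`, and `N` is contained in every set
with this property. -/
theorem minimal_neighborhood_exists_unique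
    {T A : Type*} [Finite A] [TopologicalSpace A] [DiscreteTopology A]
    (f : (T → A) → (T → A)) (hf : Continuous f) (t : T) :
    ∃! N : Set T, N.Finite ∧
      (∀ x y : T → A, (∀ u ∈ N, x u = y u) → f x t = f y t) ∧
      ∀ M : Set T, (∀ x y : T → A, (∀ u ∈ M, x u = y u) → f x t = f y t) →
        N ⊆ M := by
  classical
  obtain ⟨N₀, hN₀fin, hN₀det⟩ := exists_finite_detSet f hf t
  set N : Set T := ⋂₀ {M | DetSet f t M} with hN
  have hNsub : ∀ M, DetSet f t M → N ⊆ M := fun M hM =>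
    Set.sInter_subset_of_mem hM
  -- for each u, choose a determining set avoiding u if possible
  set Mu : T → Set T := fun u =>
    if h : ∃ M, DetSet f t M ∧ u ∉ M then h.choose else Set.univ with hMu
  have hMudet : ∀ u, DetSet f t (Mu u) := by
    intro u
    by_cases h : ∃ M, DetSet f t M ∧ u ∉ M
    · simpa [hMu, h] using h.choose_spec.1
    · simpa [hMu, h] using detSet_univ f t
  have hMuavoid : ∀ u, u ∉ N → u ∉ Mu u := by
    intro u hu
    have h : ∃ M, DetSet f t M ∧ u ∉ M := by
      by_contra hcon
      push_neg at hcon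
      exact hu (Set.mem_sInter.mpr fun M hM => hcon M hM)
    simpa [hMu, h] using h.choose_spec.2
  -- N equals a finite intersection of determining sets, hence determining
  set N' : Set T := N₀ ∩ ⋂ u ∈ hN₀fin.toFinset, Mu u with hN'
  have hN'det : DetSet f t N' :=
    detSet_inter f t hN₀det (detSet_biInter_finset f t _ Mu hMudet)
  have hNeq : N = N' := by
    apply Set.Subset.antisymm
    · apply Set.subset_inter (hNsub _ hN₀det)
      exact Set.subset_iInter₂ fun u _ => hNsub _ (hMudet u)
    · intro v hv
      by_contra hvN
      have hv₀ : v ∈ N₀ := hv.1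
      have : v ∈ Mu v :=
        Set.mem_iInter₂.mp hv.2 v (hN₀fin.mem_toFinset.mpr hv₀)
      exact hMuavoid v hvN this
  have hNdet : DetSet f t N := hNeq ▸ hN'det
  have hNfin : N.Finite := hN₀fin.subset (hNsub _ hN₀det)
  refine ⟨N, ⟨hNfin, hNdet, fun M hM => hNsub M hM⟩, ?_⟩
  rintro N₁ ⟨hN₁fin, hN₁det, hN₁min⟩
  exact Set.Subset.antisymm (hN₁min N hNdet) (hNsub N₁ hN₁det)
end

section
/- Let T be a set, let A be a finite alphabet with distinguished symbol 0, and let f : A^T → A^T be continuous with respect to the product topology. Suppose f is asymptotically nilpotent toward 0^T, i.e. f^n(x) → 0^T for every x ∈ A^T. Then for every t ∈ T there exist m ∈ ℕ and a nonempty open set U ⊆ A^T such that f^n(x)_t = 0 for every x ∈ U and every n ≥ m. -/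
open Filter

/-- If `f : A^T → A^T` is continuous and asymptotically
nilpotent toward the constant configuration `z`, then (by Baire category) for
every coordinate `t` there are a time `m` and a nonempty open set `U` of
configurations whose coordinate `t` reads `z` at all times `≥ m`. -/
theorem baire_open_set_of_asymptotically_nilpotent
    {T A : Type*} [Finite A] [TopologicalSpace A] [DiscreteTopology A]
    (z : A) (f : (T → A) → (T → A)) (hf : Continuous f)
    (hnil : ∀ x : T → A,
      Tendsto (fun n => f^[n] x) atTop (nhds (fun _ => z))) :
    ∀ t : T, ∃ (m : ℕ) (U : Set (T → A)), IsOpen U ∧ U.Nonempty ∧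
      ∀ x ∈ U, ∀ n ≥ m, f^[n] x t = z := by
  intro t
  haveI : CompactSpace A := Finite.compactSpace
  set C : ℕ → Set (T → A) := fun m => {x | ∀ n ≥ m, f^[n] x t = z} with hC
  have hclosed : ∀ m, IsClosed (C m) := by
    intro m
    have : C m = ⋂ n ∈ {n | n ≥ m}, (fun x => f^[n] x t) ⁻¹' {z} := by
      ext x; simp [hC]
    rw [this]
    refine isClosed_biInter fun n _ => ?_
    exact (isClosed_discrete {z}).preimage ((continuous_apply t).comp (hf.iterate n))
  have hcover : (⋃ m, C m) = Set.univ := by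
    ext x
    simp only [Set.mem_iUnion, Set.mem_univ, iff_true]
    have hopen : IsOpen {y : T → A | y t = z} := by
      have := (isOpen_discrete ({z} : Set A)).preimage (continuous_apply t : Continuous fun y : T → A => y t)
      simpa [Set.preimage] using this
    have hmem : {y : T → A | y t = z} ∈ nhds (fun _ => z) := hopen.mem_nhds rfl
    have h := (hnil x).eventually (eventually_of_mem hmem (fun y hy => hy))
    rw [eventually_atTop] at h
    obtain ⟨m, hm⟩ := h
    exact ⟨m, fun n hn => hm n hn⟩
  haveI : Nonempty A := ⟨z⟩
  obtain ⟨m, hm⟩ := nonempty_interior_of_iUnion_of_closed hclosed hcover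
  exact ⟨m, interior (C m), isOpen_interior, hm,
    fun x hx => interior_subset hx⟩
end
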